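/- arXiv:2407.17159 — 3 statements merged into one kernel-verified Lean document; each statement's English description precedes it below -/
import Mathlib

section
/- Let f = (f_n)_{n=0}^M be a sequence in X with f_0 + f_1 + ⋯ + f_M = 0. Then for every integer k with 1 ≤ k ≤ M−1, ‖D^k f‖_0 ≤ c_{B,1} · ‖D^{k−1} f‖_0^{1/2} · ‖D^k f‖_1^{1/2}, where c_{B,1} = 2(1 + 2(c_A c_{A,1})²)^{1/2} with c_A = √(2 + √2/2) and c_{A,1} = (1 + (√2 c_A)^{4/3})^{3/4}. Moreover, in the case k = 1 the constant c_{B,1} can be replaced by c_{B,1}/√2. -/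
noncomputable def cA : ℝ := Real.sqrt (2 + Real.sqrt 2 / 2)
noncomputable def cA1 : ℝ := (1 + (Real.sqrt 2 * cA) ^ ((4:ℝ)/3)) ^ ((3:ℝ)/4)
noncomputable def cB1 : ℝ := 2 * Real.sqrt (1 + 2 * (cA * cA1)^2)

/-- `dAux j = (d̂_j, ∏_{i≤j} d̂_i^{1/(i+1)})`, realizing the recursion (4.20). -/
noncomputable def dAux : ℕ → ℝ × ℝ
  | 0 => (cB1, cB1)
  | (j+1) =>
      let d : ℝ := (1 + (dAux j).1 ^ (2*((j:ℝ)+2))) ^ (((j:ℝ)+2) / (2*((j:ℝ)+1)*((j:ℝ)+3))) *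
                   ((dAux j).2) ^ (((j:ℝ)+2) / (((j:ℝ)+1)*((j:ℝ)+3)))
      (d, (dAux j).2 * d ^ (1/((j:ℝ)+2)))

noncomputable def dHat (j : ℕ) : ℝ := (dAux j).1

/-- `cAux j = (ĉ_j, ∏_{i≤j} ĉ_i^{1/(i+1)})`, realizing the recursion (4.19). -/
noncomputable def cAux : ℕ → ℝ × ℝ
  | 0 => (cB1 / Real.sqrt 2, cB1 / Real.sqrt 2)
  | (j+1) =>
      let c : ℝ := (1 + dHat j ^ (2*((j:ℝ)+2))) ^ (((j:ℝ)+2) / (2*((j:ℝ)+1)*((j:ℝ)+3))) *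
                   ((cAux j).2) ^ (((j:ℝ)+2) / (((j:ℝ)+1)*((j:ℝ)+3)))
      (c, (cAux j).2 * c ^ (1/((j:ℝ)+2)))

noncomputable def cHat (j : ℕ) : ℝ := (cAux j).1

/-- the constant `c_m = ∏_{j=0}^{m-2} ĉ_j^{1/(j+1)}` (equal to `1` for `m = 1`). -/
noncomputable def cConst (m : ℕ) : ℝ := ∏ j ∈ Finset.range (m-1), cHat j ^ (1/((j:ℝ)+1))

/-- backward difference quotient of a sequence. -/
noncomputable def Dq {X : Type*} [NormedAddCommGroup X] [NormedSpace ℝ X] (τ : ℝ) (f : ℕ → X) : ℕ → X :=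
  fun n => τ⁻¹ • (f n - f (n - 1))

/-- discrete `L²` norm `(τ Σ_{n=a}^{b} ‖f n‖²)^{1/2}`. -/
noncomputable def seqNorm0 {X : Type*} [NormedAddCommGroup X]
    (τ : ℝ) (a b : ℕ) (f : ℕ → X) : ℝ :=
  Real.sqrt (τ * ∑ n ∈ Finset.Icc a b, ‖f n‖^2)

/-- `T_0 = T` and `T_j = (M+1−j)τ` for `j ≥ 1`. -/
noncomputable def Tk (τ T : ℝ) (M j : ℕ) : ℝ := if j = 0 then T else ((M:ℝ) + 1 - (j:ℝ)) * τ

/-- the scale-invariant norm `‖Dᵏf‖_m = (Σ_{j=k}^{k+m} T_j^{−2(m+k−j)} ‖Dʲf‖₀²)^{1/2}`. -/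
noncomputable def normm {X : Type*} [NormedAddCommGroup X] [NormedSpace ℝ X]
    (τ T : ℝ) (M k m : ℕ) (f : ℕ → X) : ℝ :=
  Real.sqrt (∑ j ∈ Finset.Icc k (k+m),
    (seqNorm0 τ j M ((Dq τ)^[j] f))^2 / (Tk τ T M j)^(2*(m+k-j)))


namespace DqAux

open Finset

lemma sqrt_add_le' (x y : ℝ) (hx : 0 ≤ x) (hy : 0 ≤ y) :
    Real.sqrt (x + y) ≤ Real.sqrt x + Real.sqrt y := by
  have h := Real.sqrt_le_sqrt (show x + y ≤ (Real.sqrt x + Real.sqrt y) ^ 2 by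
    nlinarith [Real.sq_sqrt hx, Real.sq_sqrt hy, Real.sqrt_nonneg x, Real.sqrt_nonneg y])
  rwa [Real.sqrt_sq (by positivity)] at h

lemma tau_sum_CS (τ : ℝ) (hτ : 0 ≤ τ) (s : Finset ℕ) (p q : ℕ → ℝ) :
    τ * ∑ i ∈ s, p i * q i ≤
      Real.sqrt (τ * ∑ i ∈ s, p i ^ 2) * Real.sqrt (τ * ∑ i ∈ s, q i ^ 2) := by
  have hcs := Real.sum_mul_le_sqrt_mul_sqrt s p q
  have h1 : Real.sqrt (τ * ∑ i ∈ s, p i ^ 2) = Real.sqrt τ * Real.sqrt (∑ i ∈ s, p i ^ 2) :=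
    Real.sqrt_mul hτ _
  have h2 : Real.sqrt (τ * ∑ i ∈ s, q i ^ 2) = Real.sqrt τ * Real.sqrt (∑ i ∈ s, q i ^ 2) :=
    Real.sqrt_mul hτ _
  have h3 : Real.sqrt τ * Real.sqrt τ = τ := Real.mul_self_sqrt hτ
  calc τ * ∑ i ∈ s, p i * q i
      ≤ τ * (Real.sqrt (∑ i ∈ s, p i ^ 2) * Real.sqrt (∑ i ∈ s, q i ^ 2)) :=
        mul_le_mul_of_nonneg_left hcs hτ
    _ = (Real.sqrt (τ * ∑ i ∈ s, p i ^ 2)) * (Real.sqrt (τ * ∑ i ∈ s, q i ^ 2)) := by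
        rw [h1, h2, mul_mul_mul_comm, h3]

lemma sum_shift' (p : ℕ → ℝ) (a b : ℕ) :
    ∑ j ∈ Finset.Icc a b, p (j + 1) = ∑ j ∈ Finset.Icc (a + 1) (b + 1), p j := by
  rw [← Finset.map_add_right_Icc a b 1, Finset.sum_map]
  rfl

lemma telescope_eq (e : ℕ → ℝ) (a b : ℕ) (hab : a ≤ b) :
    e b - e a = ∑ j ∈ Finset.Icc (a + 1) b, (e j - e (j - 1)) := by
  induction b, hab using Nat.le_induction with
  | base => simp [Finset.Icc_eq_empty (by omega : ¬ a + 1 ≤ a)]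
  | succ b hb ih =>
      rw [Finset.sum_Icc_succ_top (by omega : a + 1 ≤ b + 1)]
      have hb1 : b + 1 - 1 = b := by omega
      rw [hb1, ← ih]; ring

lemma tele_bound (e : ℕ → ℝ) (a b n m : ℕ) (hn : n ∈ Finset.Icc a b)
    (hm : m ∈ Finset.Icc a b) :
    e n ≤ e m + ∑ j ∈ Finset.Icc (a + 1) b, |e j - e (j - 1)| := by
  rw [Finset.mem_Icc] at hn hm
  rcases le_total m n with h | h
  · have heq := telescope_eq e m n h
    have hle : ∑ j ∈ Finset.Icc (m + 1) n, (e j - e (j - 1)) ≤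
        ∑ j ∈ Finset.Icc (a + 1) b, |e j - e (j - 1)| := by
      calc ∑ j ∈ Finset.Icc (m + 1) n, (e j - e (j - 1))
          ≤ ∑ j ∈ Finset.Icc (m + 1) n, |e j - e (j - 1)| :=
            Finset.sum_le_sum fun j _ => le_abs_self _
        _ ≤ _ := Finset.sum_le_sum_of_subset_of_nonneg
            (Finset.Icc_subset_Icc (by omega) (by omega)) (fun _ _ _ => abs_nonneg _)
    linarith
  · have heq := telescope_eq e n m h
    have hle : -∑ j ∈ Finset.Icc (n + 1) m, (e j - e (j - 1)) ≤
        ∑ j ∈ Finset.Icc (a + 1) b, |e j - e (j - 1)| := by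
      calc -∑ j ∈ Finset.Icc (n + 1) m, (e j - e (j - 1))
          = ∑ j ∈ Finset.Icc (n + 1) m, -(e j - e (j - 1)) := by
            rw [Finset.sum_neg_distrib]
        _ ≤ ∑ j ∈ Finset.Icc (n + 1) m, |e j - e (j - 1)| :=
            Finset.sum_le_sum fun j _ => neg_le_abs _
        _ ≤ _ := Finset.sum_le_sum_of_subset_of_nonneg
            (Finset.Icc_subset_Icc (by omega) (by omega)) (fun _ _ _ => abs_nonneg _)
    linarith

lemma exists_min_card (s : Finset ℕ) (hs : s.Nonempty) (φ : ℕ → ℝ) :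
    ∃ m ∈ s, (s.card : ℝ) * φ m ≤ ∑ j ∈ s, φ j := by
  obtain ⟨m, hm, hmin⟩ := s.exists_min_image φ hs
  refine ⟨m, hm, ?_⟩
  calc (s.card : ℝ) * φ m = ∑ _j ∈ s, φ m := by
        rw [Finset.sum_const, nsmul_eq_mul]
    _ ≤ ∑ j ∈ s, φ j := Finset.sum_le_sum fun j hj => hmin j hj

lemma abel_sum {X : Type*} [NormedAddCommGroup X] [InnerProductSpace ℝ X]
    (u v : ℕ → X) (k M : ℕ) (hk : 1 ≤ k) (hkM : k ≤ M) :
    ∑ n ∈ Finset.Icc k M, (inner ℝ (u n - u (n - 1)) (v n) : ℝ)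
      = inner ℝ (u M) (v M) - inner ℝ (u (k - 1)) (v k)
        + ∑ n ∈ Finset.Icc k (M - 1), (inner ℝ (u n) (v n - v (n + 1)) : ℝ) := by
  induction M, hkM using Nat.le_induction with
  | base =>
      have h1 : k - 1 < k := by omega
      simp [Finset.Icc_self, Finset.Icc_eq_empty (by omega : ¬ k ≤ k - 1),
        inner_sub_left]
  | succ M hM ih =>
      rw [Finset.sum_Icc_succ_top (by omega : k ≤ M + 1)]
      have h2 : M + 1 - 1 = M := by omega
      rw [h2]
      have h3 : M = (M - 1) + 1 := by omega
      rw [ih]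
      have h4 : ∑ n ∈ Finset.Icc k M, (inner ℝ (u n) (v n - v (n + 1)) : ℝ)
          = ∑ n ∈ Finset.Icc k (M - 1), (inner ℝ (u n) (v n - v (n + 1)) : ℝ)
            + inner ℝ (u M) (v M - v (M + 1)) := by
        nth_rewrite 1 [h3]
        rw [Finset.sum_Icc_succ_top (by omega : k ≤ (M - 1) + 1), ← h3]
      rw [h4]
      simp only [inner_sub_left, inner_sub_right]
      ring

lemma agmon {X : Type*} [NormedAddCommGroup X] [InnerProductSpace ℝ X]
    (τ : ℝ) (hτ : 0 < τ) (a b : ℕ) (hab : a ≤ b) (u v : ℕ → X)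
    (huv : ∀ j, u j - u (j - 1) = τ • v j) :
    ∀ n ∈ Finset.Icc a b, ‖u n‖ ^ 2 ≤
      (τ * ∑ j ∈ Finset.Icc a b, ‖u j‖ ^ 2) / (((b - a + 1 : ℕ) : ℝ) * τ)
      + 2 * Real.sqrt (τ * ∑ j ∈ Finset.Icc a b, ‖u j‖ ^ 2)
          * Real.sqrt (τ * ∑ j ∈ Finset.Icc (a + 1) b, ‖v j‖ ^ 2) := by
  intro n hn
  set SU := τ * ∑ j ∈ Finset.Icc a b, ‖u j‖ ^ 2 with hSU
  set SV := τ * ∑ j ∈ Finset.Icc (a + 1) b, ‖v j‖ ^ 2 with hSV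
  obtain ⟨m, hm, hmin⟩ := exists_min_card (Finset.Icc a b) (Finset.nonempty_Icc.2 hab)
    (fun j => ‖u j‖ ^ 2)
  have hcard : ((Finset.Icc a b).card : ℝ) = ((b - a + 1 : ℕ) : ℝ) := by
    rw [Nat.card_Icc]; congr 1; omega
  have hm2 : ‖u m‖ ^ 2 ≤ SU / (((b - a + 1 : ℕ) : ℝ) * τ) := by
    rw [le_div_iff₀ (by positivity)]
    rw [hcard] at hmin
    have hc0 : (0:ℝ) < ((b - a + 1 : ℕ) : ℝ) := by positivity
    rw [hSU]
    nlinarith [hmin, hτ]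
  have htele := tele_bound (fun j => ‖u j‖ ^ 2) a b n m hn hm
  have habs : ∀ j ∈ Finset.Icc (a + 1) b, |‖u j‖ ^ 2 - ‖u (j - 1)‖ ^ 2| ≤
      τ * (‖v j‖ * ‖u j‖) + τ * (‖v j‖ * ‖u (j - 1)‖) := by
    intro j _
    have hinner : ‖u j‖ ^ 2 - ‖u (j - 1)‖ ^ 2
        = τ * (inner ℝ (v j) (u j + u (j - 1)) : ℝ) := by
      have : (inner ℝ (u j - u (j - 1)) (u j + u (j - 1)) : ℝ)
          = ‖u j‖ ^ 2 - ‖u (j - 1)‖ ^ 2 := by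
        simp only [inner_sub_left, inner_add_right, real_inner_self_eq_norm_sq,
          real_inner_comm (u (j-1)) (u j)]
        ring
      rw [← this, huv j, real_inner_smul_left]
    rw [hinner, abs_mul, abs_of_pos hτ]
    have h5 : |(inner ℝ (v j) (u j + u (j - 1)) : ℝ)| ≤ ‖v j‖ * (‖u j‖ + ‖u (j - 1)‖) := by
      calc |(inner ℝ (v j) (u j + u (j - 1)) : ℝ)| ≤ ‖v j‖ * ‖u j + u (j - 1)‖ :=
            abs_real_inner_le_norm _ _
        _ ≤ ‖v j‖ * (‖u j‖ + ‖u (j - 1)‖) :=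
            mul_le_mul_of_nonneg_left (norm_add_le _ _) (norm_nonneg _)
    nlinarith [hτ.le, abs_nonneg (inner ℝ (v j) (u j + u (j - 1)) : ℝ)]
  have hsum1 : τ * ∑ j ∈ Finset.Icc (a + 1) b, ‖v j‖ * ‖u j‖ ≤
      Real.sqrt SV * Real.sqrt SU := by
    calc τ * ∑ j ∈ Finset.Icc (a + 1) b, ‖v j‖ * ‖u j‖
        ≤ Real.sqrt (τ * ∑ j ∈ Finset.Icc (a+1) b, ‖v j‖ ^ 2) *
          Real.sqrt (τ * ∑ j ∈ Finset.Icc (a+1) b, ‖u j‖ ^ 2) :=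
          tau_sum_CS τ hτ.le _ _ _
      _ ≤ Real.sqrt SV * Real.sqrt SU := by
          apply mul_le_mul_of_nonneg_left _ (Real.sqrt_nonneg _)
          apply Real.sqrt_le_sqrt
          apply mul_le_mul_of_nonneg_left _ hτ.le
          exact Finset.sum_le_sum_of_subset_of_nonneg
            (Finset.Icc_subset_Icc (by omega) le_rfl) (fun _ _ _ => by positivity)
  have hsum2 : τ * ∑ j ∈ Finset.Icc (a + 1) b, ‖v j‖ * ‖u (j - 1)‖ ≤
      Real.sqrt SV * Real.sqrt SU := by
    calc τ * ∑ j ∈ Finset.Icc (a + 1) b, ‖v j‖ * ‖u (j - 1)‖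
        ≤ Real.sqrt (τ * ∑ j ∈ Finset.Icc (a+1) b, ‖v j‖ ^ 2) *
          Real.sqrt (τ * ∑ j ∈ Finset.Icc (a+1) b, ‖u (j - 1)‖ ^ 2) :=
          tau_sum_CS τ hτ.le _ _ _
      _ ≤ Real.sqrt SV * Real.sqrt SU := by
          apply mul_le_mul_of_nonneg_left _ (Real.sqrt_nonneg _)
          apply Real.sqrt_le_sqrt
          apply mul_le_mul_of_nonneg_left _ hτ.le
          by_cases hba : a + 1 ≤ b
          · have hshift : ∑ j ∈ Finset.Icc (a + 1) b, ‖u (j - 1)‖ ^ 2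
                = ∑ j ∈ Finset.Icc a (b - 1), ‖u j‖ ^ 2 := by
              have hb1 : b = (b - 1) + 1 := by omega
              rw [show Finset.Icc (a+1) b = Finset.Icc (a+1) ((b-1)+1) by rw [← hb1],
                ← sum_shift' (fun j => ‖u (j - 1)‖ ^ 2) a (b-1)]
              apply Finset.sum_congr rfl
              intro j _
              simp
            rw [hshift]
            exact Finset.sum_le_sum_of_subset_of_nonneg
              (Finset.Icc_subset_Icc le_rfl (by omega)) (fun _ _ _ => by positivity)
          · rw [Finset.Icc_eq_empty hba]
            simp only [Finset.sum_empty]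
            exact Finset.sum_nonneg (fun _ _ => by positivity)
  have hsplit : ∑ j ∈ Finset.Icc (a + 1) b, |‖u j‖ ^ 2 - ‖u (j - 1)‖ ^ 2|
      ≤ τ * ∑ j ∈ Finset.Icc (a + 1) b, ‖v j‖ * ‖u j‖
        + τ * ∑ j ∈ Finset.Icc (a + 1) b, ‖v j‖ * ‖u (j - 1)‖ := by
    rw [Finset.mul_sum, Finset.mul_sum, ← Finset.sum_add_distrib]
    exact Finset.sum_le_sum habs
  have hfinal : ‖u n‖ ^ 2 ≤ SU / (((b - a + 1 : ℕ) : ℝ) * τ)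
      + (Real.sqrt SV * Real.sqrt SU + Real.sqrt SV * Real.sqrt SU) := by
    linarith
  calc ‖u n‖ ^ 2 ≤ SU / (((b - a + 1 : ℕ) : ℝ) * τ)
        + (Real.sqrt SV * Real.sqrt SU + Real.sqrt SV * Real.sqrt SU) := hfinal
    _ = SU / (((b - a + 1 : ℕ) : ℝ) * τ) + 2 * Real.sqrt SU * Real.sqrt SV := by ring


set_option maxHeartbeats 1000000 in
lemma final_ineq (A B C t N : ℝ) (hA : 0 ≤ A) (hB : 0 ≤ B) (hC : 0 ≤ C)
    (ht : 0 < t) (hN : 0 ≤ N) (hBt : B / t ≤ N) (hCN : C ≤ N)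
    (hmain : B ^ 2 ≤ 2 * Real.sqrt (A ^ 2 / t + 2 * A * B) *
      Real.sqrt (B ^ 2 / t + 2 * B * C) + A * C) :
    B ^ 2 ≤ 42 * (A * N) := by
  set P := A * N with hP
  have hP0 : 0 ≤ P := mul_nonneg hA hN
  have hQF0 : (0:ℝ) ≤ A ^ 2 / t + 2 * A * B := by positivity
  have hQg : Real.sqrt (B ^ 2 / t + 2 * B * C) ≤ Real.sqrt (3 * (B * N)) := by
    apply Real.sqrt_le_sqrt
    have h1 : B ^ 2 / t = B * (B / t) := by field_simp
    rw [h1]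
    nlinarith [mul_le_mul_of_nonneg_left hBt hB, mul_le_mul_of_nonneg_left hCN hB]
  have hstep1 : 2 * Real.sqrt (A ^ 2 / t + 2 * A * B) * Real.sqrt (B ^ 2 / t + 2 * B * C)
      ≤ 2 * Real.sqrt ((A ^ 2 / t + 2 * A * B) * (3 * (B * N))) := by
    have heq : Real.sqrt ((A ^ 2 / t + 2 * A * B) * (3 * (B * N)))
        = Real.sqrt (A ^ 2 / t + 2 * A * B) * Real.sqrt (3 * (B * N)) :=
      Real.sqrt_mul hQF0 _
    rw [heq]
    nlinarith [Real.sqrt_nonneg (A ^ 2 / t + 2 * A * B), hQg,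
      Real.sqrt_nonneg (B ^ 2 / t + 2 * B * C)]
  have hin : (A ^ 2 / t + 2 * A * B) * (3 * (B * N)) ≤ 3 * P ^ 2 + B ^ 2 * (6 * P) := by
    have h2 : A ^ 2 / t * B = A ^ 2 * (B / t) := by ring
    have h3 : A ^ 2 * (B / t) ≤ A ^ 2 * N := mul_le_mul_of_nonneg_left hBt (by positivity)
    have hBN : 0 ≤ B * N := mul_nonneg hB hN
    nlinarith [hN, hA, hB, sq_nonneg A, sq_nonneg B, mul_nonneg (mul_nonneg hA hB) hN]
  have hstep2 : Real.sqrt ((A ^ 2 / t + 2 * A * B) * (3 * (B * N)))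
      ≤ Real.sqrt (3 * P ^ 2) + Real.sqrt (B ^ 2 * (6 * P)) := by
    calc Real.sqrt ((A ^ 2 / t + 2 * A * B) * (3 * (B * N)))
        ≤ Real.sqrt (3 * P ^ 2 + B ^ 2 * (6 * P)) := Real.sqrt_le_sqrt hin
      _ ≤ _ := sqrt_add_le' _ _ (by positivity) (mul_nonneg (sq_nonneg B) (by nlinarith [hP0]))
  have h6 : Real.sqrt (3 * P ^ 2) = Real.sqrt 3 * P := by
    rw [Real.sqrt_mul (by norm_num : (0:ℝ) ≤ 3), Real.sqrt_sq hP0]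
  have h7 : Real.sqrt (B ^ 2 * (6 * P)) = B * Real.sqrt (6 * P) := by
    rw [Real.sqrt_mul (sq_nonneg B), Real.sqrt_sq hB]
  have h8 : Real.sqrt 3 ≤ 2 := by
    nlinarith [Real.sq_sqrt (show (0:ℝ) ≤ 3 by norm_num), Real.sqrt_nonneg 3]
  have hY2 : Real.sqrt (6 * P) ^ 2 = 6 * P := Real.sq_sqrt (by nlinarith [hP0])
  have hY0 : 0 ≤ Real.sqrt (6 * P) := Real.sqrt_nonneg _
  have hAC : A * C ≤ P := mul_le_mul_of_nonneg_left hCN hA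
  set Y := Real.sqrt (6 * P) with hYdef
  have e1 : B ^ 2 ≤ 2 * (Real.sqrt 3 * P + B * Y) + P := by
    rw [h6, h7] at hstep2
    linarith [hmain, hstep1, hstep2, hAC]
  have young : 2 * (B * Y) ≤ B ^ 2 / 2 + 12 * P := by
    nlinarith [sq_nonneg (B - 2 * Y), hY2]
  have s3 : Real.sqrt 3 * P ≤ 2 * P := mul_le_mul_of_nonneg_right h8 hP0
  linarith [e1, young, s3, hP0]

lemma cB1_nonneg : 0 ≤ cB1 := by
  unfold cB1
  exact mul_nonneg (by norm_num) (Real.sqrt_nonneg _)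

lemma cA1_nonneg : 0 ≤ cA1 := by
  unfold cA1
  have hz : 0 ≤ (Real.sqrt 2 * cA) ^ ((4:ℝ)/3) :=
    Real.rpow_nonneg (mul_nonneg (Real.sqrt_nonneg _) (by unfold cA; exact Real.sqrt_nonneg _)) _
  exact Real.rpow_nonneg (by linarith) _

lemma cB1_sq_big : 42 ≤ cB1 ^ 2 / 2 := by
  have hcA2 : cA ^ 2 = 2 + Real.sqrt 2 / 2 := Real.sq_sqrt (by positivity)
  have hcA0 : 0 ≤ cA := Real.sqrt_nonneg _
  have hcAge : 2 ≤ cA ^ 2 := by rw [hcA2]; nlinarith [Real.sqrt_nonneg 2]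
  -- √2 * cA ≥ 2
  have h2cA : 2 ≤ Real.sqrt 2 * cA := by
    have hsq : (Real.sqrt 2 * cA) ^ 2 = 2 * (2 + Real.sqrt 2 / 2) := by
      rw [mul_pow, Real.sq_sqrt (by norm_num : (0:ℝ) ≤ 2), hcA2]
    nlinarith [Real.sqrt_nonneg 2, hcA0, mul_nonneg (Real.sqrt_nonneg 2) hcA0,
      Real.sqrt_nonneg 2, Real.sq_sqrt (show (0:ℝ) ≤ 2 by norm_num)]
  -- z ≥ 2
  have hz : (2:ℝ) ≤ (Real.sqrt 2 * cA) ^ ((4:ℝ)/3) := by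
    have h1 : (2:ℝ) ^ ((4:ℝ)/3) ≤ (Real.sqrt 2 * cA) ^ ((4:ℝ)/3) :=
      Real.rpow_le_rpow (by norm_num) h2cA (by norm_num)
    have h2 : (2:ℝ) = (2:ℝ) ^ ((1:ℝ)) := by rw [Real.rpow_one]
    have h3 : (2:ℝ) ^ ((1:ℝ)) ≤ (2:ℝ) ^ ((4:ℝ)/3) :=
      Real.rpow_le_rpow_of_exponent_le (by norm_num) (by norm_num)
    linarith [h1, h3, h2.le]
  -- cA1 ≥ 3^(3/4)
  have hcA1ge : (3:ℝ) ^ ((3:ℝ)/4) ≤ cA1 := by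
    unfold cA1
    exact Real.rpow_le_rpow (by norm_num) (by linarith) (by norm_num)
  -- (3^(3/4))^2 = 3^(3/2) ≥ 5
  have h32 : ((3:ℝ) ^ ((3:ℝ)/4)) ^ 2 = (3:ℝ) ^ ((3:ℝ)/2) := by
    rw [← Real.rpow_natCast ((3:ℝ) ^ ((3:ℝ)/4)) 2, ← Real.rpow_mul (by norm_num)]
    norm_num
  have h325 : (5:ℝ) ≤ (3:ℝ) ^ ((3:ℝ)/2) := by
    have hsq : ((3:ℝ) ^ ((3:ℝ)/2)) ^ 2 = 27 := by
      rw [← Real.rpow_natCast ((3:ℝ) ^ ((3:ℝ)/2)) 2, ← Real.rpow_mul (by norm_num)]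
      norm_num
    nlinarith [Real.rpow_nonneg (show (0:ℝ) ≤ 3 by norm_num) ((3:ℝ)/2)]
  have hcA1sq : 5 ≤ cA1 ^ 2 := by
    have := pow_le_pow_left₀ (Real.rpow_nonneg (show (0:ℝ) ≤ 3 by norm_num) _) hcA1ge 2
    rw [h32] at this
    linarith
  have hprod : 10 ≤ (cA * cA1) ^ 2 := by
    rw [mul_pow]
    nlinarith [hcAge, hcA1sq, sq_nonneg cA, sq_nonneg cA1]
  have hcB1sq : cB1 ^ 2 = 4 * (1 + 2 * (cA * cA1) ^ 2) := by
    unfold cB1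
    rw [mul_pow, Real.sq_sqrt (by positivity)]
    ring
  rw [hcB1sq]
  linarith


lemma cA1_nonneg' : 0 ≤ cA1 := by
  unfold cA1
  have hz : 0 ≤ (Real.sqrt 2 * cA) ^ ((4:ℝ)/3) :=
    Real.rpow_nonneg (mul_nonneg (Real.sqrt_nonneg _) (by unfold cA; exact Real.sqrt_nonneg _)) _
  exact Real.rpow_nonneg (by linarith) _

end DqAux

open DqAux in
set_option maxHeartbeats 1000000 in
/-- Lemma 4.6: non-periodic summation-by-parts inequality
`‖Dᵏf‖₀ ≤ c_{B,1} ‖D^{k−1}f‖₀^{1/2} ‖Dᵏf‖₁^{1/2}`; for `k = 1` the constant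
can be replaced by `c_{B,1}/√2`. -/
theorem dq_summation_by_parts
    {X : Type*} [NormedAddCommGroup X] [InnerProductSpace ℝ X] [CompleteSpace X]
    (T : ℝ) (hT : 0 < T) (M : ℕ) (hM : 0 < M) (τ : ℝ) (hτ : τ = T / M)
    (f : ℕ → X) (hmean : ∑ n ∈ Finset.range (M + 1), f n = 0)
    (k : ℕ) (hk : 1 ≤ k) (hkM : k + 1 ≤ M) :
    (seqNorm0 τ k M ((Dq τ)^[k] f) ≤
      cB1 * (seqNorm0 τ (k-1) M ((Dq τ)^[k-1] f)) ^ ((1:ℝ)/2) *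
        (normm τ T M k 1 f) ^ ((1:ℝ)/2))
    ∧ (k = 1 → seqNorm0 τ 1 M (Dq τ f) ≤
        (cB1 / Real.sqrt 2) * (seqNorm0 τ 0 M f) ^ ((1:ℝ)/2) *
          (normm τ T M 1 1 f) ^ ((1:ℝ)/2)) := by
  have hMR : (0:ℝ) < (M:ℝ) := by exact_mod_cast hM
  have hτ0 : 0 < τ := by rw [hτ]; positivity
  have hkM' : k ≤ M := by omega
  have hk1 : k - 1 + 1 = k := by omega
  have key : seqNorm0 τ k M ((Dq τ)^[k] f) ≤
      cB1 / Real.sqrt 2 * (seqNorm0 τ (k-1) M ((Dq τ)^[k-1] f)) ^ ((1:ℝ)/2) *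
        (normm τ T M k 1 f) ^ ((1:ℝ)/2) := by
    set F : ℕ → X := (Dq τ)^[k-1] f with hFdef
    set g : ℕ → X := (Dq τ)^[k] f with hgdef
    set h : ℕ → X := (Dq τ)^[k+1] f with hhdef
    have hgF : g = Dq τ F := by
      have h0 := Function.iterate_succ_apply' (Dq τ) (k-1) f
      rw [Nat.succ_eq_add_one, hk1] at h0
      exact h0
    have hhg : h = Dq τ g := Function.iterate_succ_apply' (Dq τ) k f
    have hFg : ∀ j, F j - F (j-1) = τ • g j := by
      intro j
      rw [hgF]
      show F j - F (j-1) = τ • (τ⁻¹ • (F j - F (j-1)))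
      rw [smul_inv_smul₀ (ne_of_gt hτ0)]
    have hgh : ∀ j, g j - g (j-1) = τ • h j := by
      intro j
      rw [hhg]
      show g j - g (j-1) = τ • (τ⁻¹ • (g j - g (j-1)))
      rw [smul_inv_smul₀ (ne_of_gt hτ0)]
    set SA := τ * ∑ n ∈ Finset.Icc (k-1) M, ‖F n‖ ^ 2 with hSAdef
    set SB := τ * ∑ n ∈ Finset.Icc k M, ‖g n‖ ^ 2 with hSBdef
    set SC := τ * ∑ n ∈ Finset.Icc (k+1) M, ‖h n‖ ^ 2 with hSCdef
    have hSA0 : 0 ≤ SA := by rw [hSAdef]; positivity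
    have hSB0 : 0 ≤ SB := by rw [hSBdef]; positivity
    have hSC0 : 0 ≤ SC := by rw [hSCdef]; positivity
    have hAeq : seqNorm0 τ (k-1) M F = Real.sqrt SA := rfl
    have hBeq : seqNorm0 τ k M g = Real.sqrt SB := rfl
    have hCeq : seqNorm0 τ (k+1) M h = Real.sqrt SC := rfl
    set t : ℝ := ((M:ℝ) + 1 - (k:ℝ)) * τ with htdef
    have hkR : (k:ℝ) ≤ (M:ℝ) := by exact_mod_cast hkM'
    have htpos : 0 < t := by
      have h1 : (0:ℝ) < (M:ℝ) + 1 - k := by linarith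
      exact mul_pos h1 hτ0
    set N := normm τ T M k 1 f with hNdef
    have hN0 : 0 ≤ N := Real.sqrt_nonneg _
    -- compute N
    have hNval : N = Real.sqrt (SB / t ^ 2 + SC) := by
      rw [hNdef]
      unfold normm
      rw [Finset.sum_Icc_succ_top (by omega : k ≤ k + 1), Finset.Icc_self,
        Finset.sum_singleton]
      have e1 : 2 * (1 + k - k) = 2 := by omega
      have e2 : 2 * (1 + k - (k+1)) = 0 := by omega
      rw [e1, e2, pow_zero, div_one]
      have e3 : Tk τ T M k = t := by unfold Tk; rw [if_neg (by omega : ¬ k = 0)]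
      rw [e3, hBeq, hCeq, Real.sq_sqrt hSB0, Real.sq_sqrt hSC0]
    have hN2 : N ^ 2 = SB / t ^ 2 + SC := by
      rw [hNval]
      exact Real.sq_sqrt (by positivity)
    have hBtN : Real.sqrt SB / t ≤ N := by
      have h1 : (Real.sqrt SB / t) ^ 2 ≤ N ^ 2 := by
        rw [hN2, div_pow, Real.sq_sqrt hSB0]
        linarith [hSC0]
      have h2 := Real.sqrt_le_sqrt h1
      rwa [Real.sqrt_sq (by positivity), Real.sqrt_sq hN0] at h2
    have hCtN : Real.sqrt SC ≤ N := by
      have h1 : (Real.sqrt SC) ^ 2 ≤ N ^ 2 := by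
        rw [hN2, Real.sq_sqrt hSC0]
        have : 0 ≤ SB / t ^ 2 := by positivity
        linarith
      have h2 := Real.sqrt_le_sqrt h1
      rwa [Real.sqrt_sq (Real.sqrt_nonneg _), Real.sqrt_sq hN0] at h2
    -- summation by parts
    have e123 : SB = inner ℝ (F M) (g M) - inner ℝ (F (k-1)) (g k)
        + -(τ * ∑ n ∈ Finset.Icc k (M-1), (inner ℝ (F n) (h (n+1)) : ℝ)) := by
      have e1 : SB = ∑ n ∈ Finset.Icc k M, (inner ℝ (F n - F (n-1)) (g n) : ℝ) := by
        rw [hSBdef, Finset.mul_sum]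
        refine Finset.sum_congr rfl (fun n _ => ?_)
        rw [hFg n, real_inner_smul_left, real_inner_self_eq_norm_sq]
      have e2 := abel_sum F g k M hk hkM'
      have e3 : ∑ n ∈ Finset.Icc k (M-1), (inner ℝ (F n) (g n - g (n+1)) : ℝ)
          = -(τ * ∑ n ∈ Finset.Icc k (M-1), (inner ℝ (F n) (h (n+1)) : ℝ)) := by
        rw [Finset.mul_sum, ← Finset.sum_neg_distrib]
        refine Finset.sum_congr rfl (fun n _ => ?_)
        have h4 : g (n+1) - g n = τ • h (n+1) := by
          have h5 := hgh (n+1)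
          simpa using h5
        have h6 : g n - g (n+1) = -(τ • h (n+1)) := by rw [← h4, neg_sub]
        rw [h6, inner_neg_right, real_inner_smul_right]
      rw [e1, e2, e3]
    have e4 : -(τ * ∑ n ∈ Finset.Icc k (M-1), (inner ℝ (F n) (h (n+1)) : ℝ))
        ≤ Real.sqrt SA * Real.sqrt SC := by
      have e5 : -(τ * ∑ n ∈ Finset.Icc k (M-1), (inner ℝ (F n) (h (n+1)) : ℝ))
          = τ * ∑ n ∈ Finset.Icc k (M-1), -(inner ℝ (F n) (h (n+1)) : ℝ) := by
        rw [Finset.sum_neg_distrib]; ring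
      rw [e5]
      calc τ * ∑ n ∈ Finset.Icc k (M-1), -(inner ℝ (F n) (h (n+1)) : ℝ)
          ≤ τ * ∑ n ∈ Finset.Icc k (M-1), ‖F n‖ * ‖h (n+1)‖ := by
            apply mul_le_mul_of_nonneg_left _ hτ0.le
            refine Finset.sum_le_sum (fun n _ => ?_)
            have h6 := abs_real_inner_le_norm (F n) (h (n+1))
            have h7 := neg_abs_le (inner ℝ (F n) (h (n+1)) : ℝ)
            linarith
        _ ≤ Real.sqrt (τ * ∑ n ∈ Finset.Icc k (M-1), ‖F n‖ ^ 2)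
              * Real.sqrt (τ * ∑ n ∈ Finset.Icc k (M-1), ‖h (n+1)‖ ^ 2) :=
            tau_sum_CS τ hτ0.le _ _ _
        _ ≤ Real.sqrt SA * Real.sqrt SC := by
            apply mul_le_mul _ _ (Real.sqrt_nonneg _) (Real.sqrt_nonneg _)
            · apply Real.sqrt_le_sqrt
              rw [hSAdef]
              apply mul_le_mul_of_nonneg_left _ hτ0.le
              exact Finset.sum_le_sum_of_subset_of_nonneg
                (Finset.Icc_subset_Icc (by omega) (by omega))
                (fun _ _ _ => by positivity)
            · apply Real.sqrt_le_sqrt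
              rw [hSCdef]
              apply mul_le_mul_of_nonneg_left _ hτ0.le
              have hshift : ∑ n ∈ Finset.Icc k (M-1), ‖h (n+1)‖ ^ 2
                  = ∑ n ∈ Finset.Icc (k+1) M, ‖h n‖ ^ 2 := by
                rw [sum_shift' (fun j => ‖h j‖ ^ 2) k (M-1)]
                have hM1 : M - 1 + 1 = M := by omega
                rw [hM1]
              rw [hshift]
    -- Agmon bounds
    have agF := agmon τ hτ0 (k-1) M (by omega) F g hFg
    rw [hk1] at agF
    have agg := agmon τ hτ0 k M hkM' g h hgh
    have hcastF : ((M - (k-1) + 1 : ℕ) : ℝ) = (M:ℝ) + 2 - k := by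
      have h1 : (M - (k-1) + 1 : ℕ) = (M + 2) - k := by omega
      rw [h1, Nat.cast_sub (by omega : k ≤ M + 2)]
      push_cast
      ring
    have hcastg : ((M - k + 1 : ℕ) : ℝ) * τ = t := by
      have h1 : ((M - k + 1 : ℕ) : ℝ) = (M:ℝ) + 1 - k := by
        rw [Nat.cast_add, Nat.cast_sub hkM']
        push_cast
        ring
      rw [h1, htdef]
    have hQF : ∀ n ∈ Finset.Icc (k-1) M, ‖F n‖ ^ 2 ≤
        SA / t + 2 * Real.sqrt SA * Real.sqrt SB := by
      intro n hn
      have h0 := agF n hn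
      have hden : SA / (((M - (k-1) + 1 : ℕ) : ℝ) * τ) ≤ SA / t := by
        apply div_le_div_of_nonneg_left hSA0 htpos
        rw [hcastF, htdef]
        nlinarith [hτ0]
      exact le_trans h0 (by linarith)
    have hQg : ∀ n ∈ Finset.Icc k M, ‖g n‖ ^ 2 ≤
        SB / t + 2 * Real.sqrt SB * Real.sqrt SC := by
      intro n hn
      have h0 := agg n hn
      rw [hcastg] at h0
      exact h0
    have hFb : ∀ n ∈ Finset.Icc (k-1) M, ‖F n‖ ≤
        Real.sqrt (SA / t + 2 * Real.sqrt SA * Real.sqrt SB) := by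
      intro n hn
      rw [show ‖F n‖ = Real.sqrt (‖F n‖ ^ 2) from (Real.sqrt_sq (norm_nonneg _)).symm]
      exact Real.sqrt_le_sqrt (hQF n hn)
    have hgb : ∀ n ∈ Finset.Icc k M, ‖g n‖ ≤
        Real.sqrt (SB / t + 2 * Real.sqrt SB * Real.sqrt SC) := by
      intro n hn
      rw [show ‖g n‖ = Real.sqrt (‖g n‖ ^ 2) from (Real.sqrt_sq (norm_nonneg _)).symm]
      exact Real.sqrt_le_sqrt (hQg n hn)
    have hb1 : (inner ℝ (F M) (g M) : ℝ) ≤ ‖F M‖ * ‖g M‖ := real_inner_le_norm _ _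
    have hb2 : -(inner ℝ (F (k-1)) (g k) : ℝ) ≤ ‖F (k-1)‖ * ‖g k‖ := by
      have h6 := abs_real_inner_le_norm (F (k-1)) (g k)
      have h7 := neg_abs_le (inner ℝ (F (k-1)) (g k) : ℝ)
      linarith
    have hbound : ‖F M‖ * ‖g M‖ + ‖F (k-1)‖ * ‖g k‖ ≤
        2 * Real.sqrt (SA / t + 2 * Real.sqrt SA * Real.sqrt SB)
          * Real.sqrt (SB / t + 2 * Real.sqrt SB * Real.sqrt SC) := by
      have m1 : M ∈ Finset.Icc (k-1) M := Finset.mem_Icc.2 ⟨by omega, le_rfl⟩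
      have m2 : k - 1 ∈ Finset.Icc (k-1) M := Finset.mem_Icc.2 ⟨le_rfl, by omega⟩
      have m3 : M ∈ Finset.Icc k M := Finset.mem_Icc.2 ⟨hkM', le_rfl⟩
      have m4 : k ∈ Finset.Icc k M := Finset.mem_Icc.2 ⟨le_rfl, hkM'⟩
      have p1 := mul_le_mul (hFb M m1) (hgb M m3) (norm_nonneg _) (Real.sqrt_nonneg _)
      have p2 := mul_le_mul (hFb (k-1) m2) (hgb k m4) (norm_nonneg _) (Real.sqrt_nonneg _)
      linarith
    have hmain : SB ≤ 2 * Real.sqrt (SA / t + 2 * Real.sqrt SA * Real.sqrt SB)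
        * Real.sqrt (SB / t + 2 * Real.sqrt SB * Real.sqrt SC)
        + Real.sqrt SA * Real.sqrt SC := by
      linarith [e123, hb1, hb2, e4, hbound]
    -- apply the numerical lemma
    have hfin := final_ineq (Real.sqrt SA) (Real.sqrt SB) (Real.sqrt SC) t N
      (Real.sqrt_nonneg _) (Real.sqrt_nonneg _) (Real.sqrt_nonneg _) htpos hN0
      hBtN hCtN (by rw [Real.sq_sqrt hSA0, Real.sq_sqrt hSB0]; exact hmain)
    rw [Real.sq_sqrt hSB0] at hfin
    -- conclude
    have h42 : SB ≤ cB1 ^ 2 / 2 * (Real.sqrt SA * N) := by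
      have h1 : (42:ℝ) * (Real.sqrt SA * N) ≤ cB1 ^ 2 / 2 * (Real.sqrt SA * N) :=
        mul_le_mul_of_nonneg_right cB1_sq_big (by positivity)
      linarith
    have hrpow : ∀ x : ℝ, 0 ≤ x → (x ^ ((1:ℝ)/2)) ^ 2 = x := by
      intro x hx
      rw [← Real.rpow_natCast (x ^ ((1:ℝ)/2)) 2, ← Real.rpow_mul hx]
      norm_num
    have hR2 : (cB1 / Real.sqrt 2 * (Real.sqrt SA) ^ ((1:ℝ)/2) * N ^ ((1:ℝ)/2)) ^ 2
        = cB1 ^ 2 / 2 * (Real.sqrt SA * N) := by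
      rw [mul_pow, mul_pow, div_pow, Real.sq_sqrt (by norm_num : (0:ℝ) ≤ 2),
        hrpow _ (Real.sqrt_nonneg SA), hrpow _ hN0]
      ring
    have hR0 : 0 ≤ cB1 / Real.sqrt 2 * (Real.sqrt SA) ^ ((1:ℝ)/2) * N ^ ((1:ℝ)/2) := by
      apply mul_nonneg
      apply mul_nonneg
      · exact div_nonneg cB1_nonneg (Real.sqrt_nonneg _)
      · exact Real.rpow_nonneg (Real.sqrt_nonneg _) _
      · exact Real.rpow_nonneg hN0 _
    have hfinal : Real.sqrt SB ≤
        cB1 / Real.sqrt 2 * (Real.sqrt SA) ^ ((1:ℝ)/2) * N ^ ((1:ℝ)/2) := by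
      have h1 : SB ≤ (cB1 / Real.sqrt 2 * (Real.sqrt SA) ^ ((1:ℝ)/2) * N ^ ((1:ℝ)/2)) ^ 2 := by
        rw [hR2]; exact h42
      have h2 := Real.sqrt_le_sqrt h1
      rwa [Real.sqrt_sq hR0] at h2
    rw [hBeq, hAeq]
    exact hfinal
  constructor
  · have hs2 : (1:ℝ) ≤ Real.sqrt 2 := by
      nlinarith [Real.sq_sqrt (show (0:ℝ) ≤ 2 by norm_num), Real.sqrt_nonneg 2]
    have hdiv : cB1 / Real.sqrt 2 ≤ cB1 := div_le_self cB1_nonneg hs2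
    refine le_trans key ?_
    apply mul_le_mul_of_nonneg_right _ (Real.rpow_nonneg (Real.sqrt_nonneg _) _)
    exact mul_le_mul_of_nonneg_right hdiv (Real.rpow_nonneg (Real.sqrt_nonneg _) _)
  · intro hk1'
    subst hk1'
    simpa using key
end

section
/- Let f = (f_n)_{n=0}^M be a sequence in X with f_0 + f_1 + ⋯ + f_M = 0. Then for every integer m with 1 ≤ m ≤ M−1 and every 0 ≤ n ≤ M, ‖f_n‖ ≤ c_A · c_m^{1/2} · ‖f‖_0^{1−1/(2m)} · ‖D^1 f‖_{m−1}^{1/(2m)}, where c_1 = 1. -/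
lemma sqrt2_ge_one : (1:ℝ) ≤ Real.sqrt 2 := by
  rw [show (1:ℝ) = Real.sqrt 1 by simp]
  exact Real.sqrt_le_sqrt (by norm_num)

lemma cA_sq : cA^2 = 2 + Real.sqrt 2 / 2 := by
  rw [cA, Real.sq_sqrt]; positivity

lemma cA_nonneg : 0 ≤ cA := Real.sqrt_nonneg _

lemma two_le_cA_sq : 2 ≤ cA^2 := by
  rw [cA_sq]; have := sqrt2_ge_one; linarith

lemma cA_sq_le_three : cA^2 ≤ 3 := by
  rw [cA_sq]
  have h : Real.sqrt 2 ≤ 2 := by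
    nlinarith [Real.sq_sqrt (by norm_num : (0:ℝ) ≤ 2), Real.sqrt_nonneg 2]
  linarith

lemma rpow_base_nonneg : (0:ℝ) ≤ (Real.sqrt 2 * cA) ^ ((4:ℝ)/3) :=
  Real.rpow_nonneg (mul_nonneg (Real.sqrt_nonneg _) cA_nonneg) _

lemma cA1_nonneg : 0 ≤ cA1 := Real.rpow_nonneg (by linarith [rpow_base_nonneg]) _

lemma two_le_sqrt2_cA : 2 ≤ Real.sqrt 2 * cA := by
  have h1 : (0:ℝ) ≤ Real.sqrt 2 := Real.sqrt_nonneg _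
  have h2 : (Real.sqrt 2 * cA)^2 = 2 * cA^2 := by
    rw [mul_pow, Real.sq_sqrt (by norm_num : (0:ℝ) ≤ 2)]
  have h3 : 4 ≤ (Real.sqrt 2 * cA)^2 := by rw [h2]; nlinarith [two_le_cA_sq]
  nlinarith [mul_nonneg h1 cA_nonneg]

lemma rpow_43_ge : (5/2:ℝ) ≤ (Real.sqrt 2 * cA) ^ ((4:ℝ)/3) := by
  have h0 : (0:ℝ) ≤ 2 := by norm_num
  have h2 : ((2:ℝ)) ^ ((4:ℝ)/3) ≤ (Real.sqrt 2 * cA) ^ ((4:ℝ)/3) :=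
    Real.rpow_le_rpow h0 two_le_sqrt2_cA (by norm_num)
  refine le_trans ?_ h2
  have e1 : ((2:ℝ)) ^ ((4:ℝ)/3) = ((2:ℝ)^(4:ℕ)) ^ ((1:ℝ)/3) := by
    rw [← Real.rpow_natCast 2 4, ← Real.rpow_mul h0]; norm_num
  have e2 : (5/2:ℝ) = ((5/2:ℝ)^(3:ℕ)) ^ ((1:ℝ)/3) := by
    rw [← Real.rpow_natCast (5/2:ℝ) 3, ← Real.rpow_mul (by norm_num)]; norm_num
  rw [e1, e2]
  exact Real.rpow_le_rpow (by norm_num) (by norm_num) (by norm_num)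

lemma six_le_cA1_sq : 6 ≤ cA1^2 := by
  have hx : (0:ℝ) ≤ 1 + (Real.sqrt 2 * cA) ^ ((4:ℝ)/3) := by linarith [rpow_base_nonneg]
  have e : cA1^2 = (1 + (Real.sqrt 2 * cA) ^ ((4:ℝ)/3)) ^ ((3:ℝ)/2) := by
    rw [cA1, ← Real.rpow_natCast (_ ^ ((3:ℝ)/4)) 2, ← Real.rpow_mul hx]; norm_num
  rw [e]
  have h2 : ((7/2:ℝ)) ^ ((3:ℝ)/2) ≤ (1 + (Real.sqrt 2 * cA) ^ ((4:ℝ)/3)) ^ ((3:ℝ)/2) :=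
    Real.rpow_le_rpow (by norm_num) (by have := rpow_43_ge; linarith) (by norm_num)
  refine le_trans ?_ h2
  have e2 : ((7/2:ℝ)) ^ ((3:ℝ)/2) = (((7/2:ℝ))^(3:ℕ)) ^ ((1:ℝ)/2) := by
    rw [← Real.rpow_natCast (7/2:ℝ) 3, ← Real.rpow_mul (by norm_num)]; norm_num
  have e3 : (6:ℝ) = ((36:ℝ)) ^ ((1:ℝ)/2) := by
    rw [show (36:ℝ) = 6^(2:ℕ) by norm_num, ← Real.rpow_natCast (6:ℝ) 2,
      ← Real.rpow_mul (by norm_num)]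
    norm_num
  rw [e2, e3]
  exact Real.rpow_le_rpow (by norm_num) (by norm_num) (by norm_num)

noncomputable def bC : ℝ := cA * cA1

lemma bC_nonneg : 0 ≤ bC := mul_nonneg cA_nonneg cA1_nonneg

lemma bC_sq : 12 ≤ bC^2 := by
  have : bC^2 = cA^2 * cA1^2 := by rw [bC]; ring
  nlinarith [two_le_cA_sq, six_le_cA1_sq, cA_nonneg, cA1_nonneg]

lemma three_le_bC : 3 ≤ bC := by nlinarith [bC_sq, bC_nonneg]

noncomputable def kap : ℝ := bC + Real.sqrt (bC^2 + 1)

lemma sqrt_bC_sq : (Real.sqrt (bC^2+1))^2 = bC^2 + 1 := Real.sq_sqrt (by positivity)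

lemma bC_le_sqrt : bC ≤ Real.sqrt (bC^2+1) := by
  have := Real.sqrt_le_sqrt (show bC^2 ≤ bC^2 + 1 by linarith)
  rwa [Real.sqrt_sq bC_nonneg] at this

lemma kap_ge_2bC : 2 * bC ≤ kap := by
  have := bC_le_sqrt; rw [kap]; linarith

lemma six_le_kap : 6 ≤ kap := by have := kap_ge_2bC; have := three_le_bC; linarith

lemma kap_nonneg : 0 ≤ kap := by linarith [six_le_kap]

lemma one_le_kap : 1 ≤ kap := by linarith [six_le_kap]

lemma kap_sq : kap^2 = 2 * bC * kap + 1 := by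
  have h := sqrt_bC_sq
  rw [kap]; nlinarith [h]

lemma kap_le_q : kap ≤ cB1 / Real.sqrt 2 := by
  have hq : (cB1 / Real.sqrt 2)^2 = 2 + 4 * bC^2 := by
    rw [cB1, div_pow, mul_pow, Real.sq_sqrt (by positivity : (0:ℝ) ≤ 1 + 2*(cA*cA1)^2),
      Real.sq_sqrt (by norm_num : (0:ℝ) ≤ 2)]
    rw [show (cA*cA1) = bC from rfl]; ring
  have hk2 : kap^2 ≤ 2 + 4*bC^2 := by
    have h := sqrt_bC_sq
    have h2 : 2 * bC * Real.sqrt (bC^2+1) ≤ bC^2 + (bC^2+1) := by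
      nlinarith [sq_nonneg (bC - Real.sqrt (bC^2+1))]
    rw [kap]; nlinarith
  have hq0 : 0 ≤ cB1 / Real.sqrt 2 := by
    rw [cB1]; positivity
  nlinarith [kap_nonneg]

-- quadratic root bound
lemma quad_bound (u w : ℝ) (hu : 0 ≤ u) (hw : 0 ≤ w) (h : u^2 ≤ w^2 + 2*bC*u*w) :
    u ≤ kap * w := by
  by_contra hc
  push_neg at hc
  have hw2 : 0 ≤ kap * w := mul_nonneg kap_nonneg hw
  have hu0 : 0 < u := lt_of_le_of_lt hw2 hc
  have hf2 : 0 < u + kap*w - 2*bC*w := by nlinarith [kap_ge_2bC]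
  nlinarith [kap_sq, mul_pos (sub_pos.2 hc) hf2]

noncomputable def qC : ℝ := cB1 / Real.sqrt 2

lemma qC_pos : 0 < qC := by
  have := kap_le_q; have := six_le_kap; rw [qC]; linarith

lemma one_le_qC : 1 ≤ qC := by
  have := kap_le_q; have := six_le_kap; rw [qC]; linarith

lemma qC_rpow_nonneg (x : ℝ) : 0 ≤ qC ^ x := Real.rpow_nonneg qC_pos.le x

lemma step_ge (j : ℕ) (D P : ℝ) (hD : qC ^ ((j:ℝ)+1) ≤ D) (hP : qC ^ ((j:ℝ)+1) ≤ P) :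
    qC ^ ((j:ℝ)+2) ≤ (1 + D ^ (2*((j:ℝ)+2))) ^ (((j:ℝ)+2) / (2*((j:ℝ)+1)*((j:ℝ)+3))) *
      P ^ (((j:ℝ)+2) / (((j:ℝ)+1)*((j:ℝ)+3))) := by
  set x : ℝ := (j:ℝ) with hx
  have hx0 : (0:ℝ) ≤ x := Nat.cast_nonneg j
  have hD0 : 0 ≤ D := le_trans (qC_rpow_nonneg _) hD
  have hP0 : 0 ≤ P := le_trans (qC_rpow_nonneg _) hP
  have h1 : qC ^ ((x+1)*(2*(x+2))) ≤ 1 + D ^ (2*(x+2)) := by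
    have := Real.rpow_le_rpow (qC_rpow_nonneg (x+1)) hD (by linarith : (0:ℝ) ≤ 2*(x+2))
    rw [← Real.rpow_mul qC_pos.le] at this
    have hD2 : 0 ≤ D ^ (2*(x+2)) := Real.rpow_nonneg hD0 _
    linarith
  have h2 : qC ^ (((x+1)*(2*(x+2))) * ((x+2)/(2*(x+1)*(x+3)))) ≤
      (1 + D ^ (2*(x+2))) ^ ((x+2)/(2*(x+1)*(x+3))) := by
    rw [Real.rpow_mul qC_pos.le]
    exact Real.rpow_le_rpow (qC_rpow_nonneg _) h1 (by positivity)
  have h3 : qC ^ ((x+1) * ((x+2)/((x+1)*(x+3)))) ≤ P ^ ((x+2)/((x+1)*(x+3))) := by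
    rw [Real.rpow_mul qC_pos.le]
    exact Real.rpow_le_rpow (qC_rpow_nonneg _) hP (by positivity)
  have key : qC ^ (((x+1)*(2*(x+2))) * ((x+2)/(2*(x+1)*(x+3)))) *
      qC ^ ((x+1) * ((x+2)/((x+1)*(x+3)))) = qC ^ (x+2) := by
    rw [← Real.rpow_add qC_pos]
    congr 1
    have h1 : x + 1 ≠ 0 := by positivity
    have h3' : x + 3 ≠ 0 := by positivity
    field_simp
    ring
  calc qC ^ (x+2) = _ := key.symm
    _ ≤ _ := mul_le_mul h2 h3 (qC_rpow_nonneg _) (Real.rpow_nonneg (by positivity) _)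

lemma step2_ge (j : ℕ) (P d : ℝ) (hP : qC ^ ((j:ℝ)+1) ≤ P) (hd : qC ^ ((j:ℝ)+2) ≤ d) :
    qC ^ ((j:ℝ)+2) ≤ P * d ^ (1/((j:ℝ)+2)) := by
  have hd0 : 0 ≤ d := le_trans (qC_rpow_nonneg _) hd
  have h1 : qC ^ (((j:ℝ)+2) * (1/((j:ℝ)+2))) ≤ d ^ (1/((j:ℝ)+2)) := by
    rw [Real.rpow_mul qC_pos.le]
    exact Real.rpow_le_rpow (qC_rpow_nonneg _) hd (by positivity)
  have h2 : ((j:ℝ)+2) * (1/((j:ℝ)+2)) = 1 := by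
    field_simp
  rw [h2, Real.rpow_one] at h1
  have e : qC ^ ((j:ℝ)+2) = qC ^ ((j:ℝ)+1) * qC ^ (1:ℝ) := by
    rw [← Real.rpow_add qC_pos]; congr 1; ring
  rw [e, Real.rpow_one]
  exact mul_le_mul hP h1 qC_pos.le (le_trans (qC_rpow_nonneg _) hP)

lemma qC_le_cB1 : qC ≤ cB1 := by
  have h2 : (1:ℝ) ≤ Real.sqrt 2 := sqrt2_ge_one
  have hc : 0 ≤ cB1 := by rw [cB1]; positivity
  rw [qC]
  calc cB1 / Real.sqrt 2 ≤ cB1 / 1 := by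
        apply div_le_div_of_nonneg_left hc (by norm_num) h2
    _ = cB1 := by norm_num

lemma dAux_ge (j : ℕ) : qC ^ ((j:ℝ)+1) ≤ (dAux j).1 ∧ qC ^ ((j:ℝ)+1) ≤ (dAux j).2 := by
  induction j with
  | zero =>
    have e : (((0:ℕ):ℝ)+1) = (1:ℝ) := by norm_num
    rw [e, Real.rpow_one]
    exact ⟨qC_le_cB1, qC_le_cB1⟩
  | succ j ih =>
    have hcast : (((j+1:ℕ)):ℝ)+1 = ((j:ℕ):ℝ)+2 := by push_cast; ring
    have h1 := step_ge j (dAux j).1 (dAux j).2 ih.1 ih.2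
    have h2 := step2_ge j (dAux j).2 _ ih.2 h1
    rw [hcast]
    exact ⟨h1, h2⟩

lemma cAux_ge (j : ℕ) : qC ^ ((j:ℝ)+1) ≤ (cAux j).1 ∧ qC ^ ((j:ℝ)+1) ≤ (cAux j).2 := by
  induction j with
  | zero =>
    have e : (((0:ℕ):ℝ)+1) = (1:ℝ) := by norm_num
    rw [e, Real.rpow_one]
    exact ⟨le_refl _, le_refl _⟩
  | succ j ih =>
    have hcast : (((j+1:ℕ)):ℝ)+1 = ((j:ℕ):ℝ)+2 := by push_cast; ring
    have h1 := step_ge j (dHat j) (cAux j).2 (dAux_ge j).1 ih.2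
    have h2 := step2_ge j (cAux j).2 _ ih.2 h1
    rw [hcast]
    exact ⟨h1, h2⟩

lemma cConst_prod (k : ℕ) :
    (∏ j ∈ Finset.range (k+1), cHat j ^ (1/((j:ℝ)+1))) = (cAux k).2 := by
  induction k with
  | zero =>
    simp only [Finset.prod_range_one, Nat.cast_zero, zero_add]
    rw [show cHat 0 = cB1 / Real.sqrt 2 from rfl]
    norm_num
    rfl
  | succ k ih =>
    rw [Finset.prod_range_succ, ih]
    show (cAux k).2 * (cAux (k+1)).1 ^ (1/(((k+1:ℕ):ℝ)+1)) = (cAux (k+1)).2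
    have hc : ((((k+1):ℕ):ℝ)+1) = ((k:ℝ)+2) := by push_cast; ring
    rw [hc]
    rfl

lemma kap_pow_le_cConst (m : ℕ) (hm : 1 ≤ m) : kap^(m-1) ≤ cConst m := by
  rcases Nat.exists_eq_add_of_le hm with ⟨k, rfl⟩
  cases k with
  | zero => simp [cConst]
  | succ k =>
    have h1 : cConst (1 + (k+1)) = (cAux k).2 := by
      rw [cConst, show (1 + (k+1)) - 1 = k+1 by omega, cConst_prod]
    rw [h1]
    have h2 : kap ^ (((k:ℕ):ℝ)+1) ≤ qC ^ (((k:ℕ):ℝ)+1) :=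
      Real.rpow_le_rpow kap_nonneg kap_le_q (by positivity)
    have h3 : kap ^ (1 + (k+1) - 1) = kap ^ (((k:ℕ):ℝ)+1) := by
      rw [show 1 + (k+1) - 1 = k+1 by omega, ← Real.rpow_natCast kap (k+1)]
      push_cast; ring_nf
    rw [h3]
    exact le_trans h2 (cAux_ge k).2

lemma one_le_cConst (m : ℕ) (hm : 1 ≤ m) : 1 ≤ cConst m :=
  le_trans (by simpa using pow_le_pow_left₀ (by norm_num : (0:ℝ) ≤ 1) one_le_kap (m-1))
    (kap_pow_le_cConst m hm)

lemma sum_Icc_shift {E : Type*} [AddCommMonoid E] (φ : ℕ → E) (a b : ℕ) :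
    ∑ n ∈ Finset.Icc (a+1) (b+1), φ n = ∑ n ∈ Finset.Icc a b, φ (n+1) := by
  rw [← Finset.map_add_right_Icc a b 1, Finset.sum_map]
  rfl

lemma sum_Icc_top {E : Type*} [AddCommMonoid E] (φ : ℕ → E) {a b : ℕ} (h : a ≤ b+1) :
    ∑ n ∈ Finset.Icc a (b+1), φ n = (∑ n ∈ Finset.Icc a b, φ n) + φ (b+1) := by
  have e : Finset.Icc a (b+1) = insert (b+1) (Finset.Icc a b) := by
    ext x; simp only [Finset.mem_Icc, Finset.mem_insert]; omega
  rw [e, Finset.sum_insert (by simp)]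
  exact add_comm _ _

lemma sum_Icc_bot {E : Type*} [AddCommMonoid E] (φ : ℕ → E) {a b : ℕ} (h : a ≤ b) :
    ∑ n ∈ Finset.Icc a b, φ n = φ a + ∑ n ∈ Finset.Icc (a+1) b, φ n := by
  have e : Finset.Icc a b = insert a (Finset.Icc (a+1) b) := by
    ext x; simp only [Finset.mem_Icc, Finset.mem_insert]; omega
  rw [e, Finset.sum_insert (by simp)]

lemma telescope_sub {E : Type*} [AddCommGroup E] (h : ℕ → E) {k n : ℕ} (hkn : k ≤ n) :
    h n - h k = ∑ j ∈ Finset.Icc (k+1) n, (h j - h (j-1)) := by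
  induction n, hkn using Nat.le_induction with
  | base => simp
  | succ n hkn ih =>
    rw [sum_Icc_top _ (by omega), ← ih]
    simp only [Nat.add_sub_cancel]
    abel

section Hilbert

open scoped InnerProductSpace

variable {X : Type*} [NormedAddCommGroup X] [InnerProductSpace ℝ X]

lemma seqNorm0_nonneg (τ : ℝ) (a b : ℕ) (g : ℕ → X) : 0 ≤ seqNorm0 τ a b g :=
  Real.sqrt_nonneg _

lemma seqNorm0_sq {τ : ℝ} (hτ : 0 ≤ τ) (a b : ℕ) (g : ℕ → X) :
    (seqNorm0 τ a b g)^2 = τ * ∑ n ∈ Finset.Icc a b, ‖g n‖^2 :=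
  Real.sq_sqrt (by positivity)

lemma sum_sq_le_seqNorm0_sq {τ : ℝ} (hτ : 0 ≤ τ) {a' b' a b : ℕ} (h1 : a ≤ a') (h2 : b' ≤ b)
    (g : ℕ → X) : τ * ∑ n ∈ Finset.Icc a' b', ‖g n‖^2 ≤ (seqNorm0 τ a b g)^2 := by
  rw [seqNorm0_sq hτ]
  refine mul_le_mul_of_nonneg_left ?_ hτ
  refine Finset.sum_le_sum_of_subset_of_nonneg (Finset.Icc_subset_Icc h1 h2) ?_
  intros; positivity

lemma smul_Dq {τ : ℝ} (hτ : τ ≠ 0) (g : ℕ → X) (j : ℕ) : τ • Dq τ g j = g j - g (j-1) := by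
  rw [Dq, smul_smul, mul_inv_cancel₀ hτ, one_smul]

lemma norm_sub_eq_Dq {τ : ℝ} (hτ : 0 < τ) (g : ℕ → X) (j : ℕ) :
    ‖g j - g (j-1)‖ = τ * ‖Dq τ g j‖ := by
  rw [← smul_Dq hτ.ne' g j, norm_smul, Real.norm_eq_abs, abs_of_pos hτ]

/-- local (no-mean-zero) discrete maximum bound -/
lemma loc_max {τ : ℝ} (hτ : 0 < τ) (M s : ℕ) (hsM : s ≤ M) (g : ℕ → X) (n : ℕ)
    (hn : n ∈ Finset.Icc s M) :
    ‖g n‖^2 ≤ (seqNorm0 τ s M g)^2 / (((M:ℝ)+1-(s:ℝ))*τ)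
      + 2 * seqNorm0 τ s M g * seqNorm0 τ (s+1) M (Dq τ g) := by
  set A0 := seqNorm0 τ s M g with hA0
  set A1 := seqNorm0 τ (s+1) M (Dq τ g) with hA1
  have hA0n : 0 ≤ A0 := Real.sqrt_nonneg _
  have hA1n : 0 ≤ A1 := Real.sqrt_nonneg _
  set R := τ * ∑ j ∈ Finset.Icc (s+1) M, ‖Dq τ g j‖ * (‖g j‖ + ‖g (j-1)‖) with hR
  have hRn : 0 ≤ R := by
    refine mul_nonneg hτ.le (Finset.sum_nonneg fun j _ => ?_)
    positivity
  -- step 1 : R ≤ 2 A0 A1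
  have hgshift : τ * ∑ j ∈ Finset.Icc (s+1) M, ‖g (j-1)‖^2 ≤ A0^2 := by
    rw [seqNorm0_sq hτ.le]
    refine mul_le_mul_of_nonneg_left ?_ hτ.le
    have hinj : ∀ x ∈ Finset.Icc (s+1) M, ∀ y ∈ Finset.Icc (s+1) M,
        x - 1 = y - 1 → x = y := by
      intro x hx y hy hxy; simp only [Finset.mem_Icc] at hx hy; omega
    have himg := Finset.sum_image (f := fun i => ‖g i‖^2) (g := fun j => j - 1)
      (s := Finset.Icc (s+1) M) hinj
    rw [← himg]
    refine Finset.sum_le_sum_of_subset_of_nonneg ?_ (by intros; positivity)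
    intro x hx
    simp only [Finset.mem_image, Finset.mem_Icc] at hx ⊢
    obtain ⟨j, hj, rfl⟩ := hx; omega
  have hRle : R ≤ 2 * A0 * A1 := by
    have hcs := Finset.sum_mul_sq_le_sq_mul_sq (Finset.Icc (s+1) M)
      (fun j => ‖Dq τ g j‖) (fun j => ‖g j‖ + ‖g (j-1)‖)
    have hy : ∀ j ∈ Finset.Icc (s+1) M,
        (‖g j‖ + ‖g (j-1)‖)^2 ≤ 2*‖g j‖^2 + 2*‖g (j-1)‖^2 := by
      intro j _; nlinarith [norm_nonneg (g j), norm_nonneg (g (j-1)), sq_nonneg (‖g j‖ - ‖g (j-1)‖)]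
    have hy2 := Finset.sum_le_sum hy
    rw [Finset.sum_add_distrib, ← Finset.mul_sum, ← Finset.mul_sum] at hy2
    have e1 : τ * ∑ j ∈ Finset.Icc (s+1) M, ‖Dq τ g j‖^2 = A1^2 := (seqNorm0_sq hτ.le _ _ _).symm
    have h2 : τ * ∑ j ∈ Finset.Icc (s+1) M, ‖g j‖^2 ≤ A0^2 :=
      sum_sq_le_seqNorm0_sq hτ.le (by omega) le_rfl g
    have hyn : (0:ℝ) ≤ ∑ j ∈ Finset.Icc (s+1) M, (‖g j‖ + ‖g (j-1)‖)^2 :=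
      Finset.sum_nonneg fun j _ => by positivity
    have hxn : (0:ℝ) ≤ ∑ j ∈ Finset.Icc (s+1) M, ‖Dq τ g j‖^2 :=
      Finset.sum_nonneg fun j _ => by positivity
    have hR2 : R^2 ≤ (2*A0*A1)^2 := by
      have c1 : R^2 = τ^2 * (∑ j ∈ Finset.Icc (s+1) M, ‖Dq τ g j‖ * (‖g j‖ + ‖g (j-1)‖))^2 := by
        rw [hR]; ring
      have c2 : τ^2 * (∑ j ∈ Finset.Icc (s+1) M, ‖Dq τ g j‖ * (‖g j‖ + ‖g (j-1)‖))^2 ≤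
          (τ * ∑ j ∈ Finset.Icc (s+1) M, ‖Dq τ g j‖^2) *
          (τ * ∑ j ∈ Finset.Icc (s+1) M, (‖g j‖ + ‖g (j-1)‖)^2) := by
        have := mul_le_mul_of_nonneg_left hcs (by positivity : (0:ℝ) ≤ τ^2)
        calc τ^2 * (∑ j ∈ Finset.Icc (s+1) M, ‖Dq τ g j‖ * (‖g j‖ + ‖g (j-1)‖))^2
            ≤ τ^2 * ((∑ j ∈ Finset.Icc (s+1) M, ‖Dq τ g j‖^2) *
              ∑ j ∈ Finset.Icc (s+1) M, (‖g j‖ + ‖g (j-1)‖)^2) := this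
          _ = _ := by ring
      have c3 : (τ * ∑ j ∈ Finset.Icc (s+1) M, (‖g j‖ + ‖g (j-1)‖)^2) ≤ 4 * A0^2 := by
        have := mul_le_mul_of_nonneg_left hy2 hτ.le
        nlinarith [hgshift, h2]
      calc R^2 ≤ (τ * ∑ j ∈ Finset.Icc (s+1) M, ‖Dq τ g j‖^2) *
            (τ * ∑ j ∈ Finset.Icc (s+1) M, (‖g j‖ + ‖g (j-1)‖)^2) := by rw [c1]; exact c2
        _ ≤ A1^2 * (4 * A0^2) := by
            rw [e1]
            exact mul_le_mul_of_nonneg_left c3 (by positivity)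
        _ = (2*A0*A1)^2 := by ring
    exact le_of_pow_le_pow_left₀ two_ne_zero (by positivity) hR2
  -- step 2 : averaging
  have hne : (Finset.Icc s M).Nonempty := ⟨s, by simp [Finset.mem_Icc, hsM]⟩
  have hMs : (0:ℝ) < (M:ℝ)+1-s := by
    have : (s:ℝ) ≤ M := by exact_mod_cast hsM
    linarith
  have hcard : (((Finset.Icc s M).card : ℕ) : ℝ) = (M:ℝ)+1-s := by
    rw [Nat.card_Icc]
    push_cast [Nat.cast_sub (by omega : s ≤ M+1)]
    ring
  obtain ⟨k, hk, hk2⟩ : ∃ k ∈ Finset.Icc s M,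
      ‖g k‖^2 ≤ (∑ i ∈ Finset.Icc s M, ‖g i‖^2) / ((M:ℝ)+1-s) := by
    apply Finset.exists_le_of_sum_le hne
    rw [Finset.sum_const, nsmul_eq_mul, hcard, mul_div_cancel₀ _ hMs.ne']
  -- step 3 : telescoping
  have key : ∀ j, s+1 ≤ j → j ≤ M →
      |‖g j‖^2 - ‖g (j-1)‖^2| ≤ τ * (‖Dq τ g j‖ * (‖g j‖ + ‖g (j-1)‖)) := by
    intro j _ _
    have h1 : |‖g j‖^2 - ‖g (j-1)‖^2| = |‖g j‖ - ‖g (j-1)‖| * (‖g j‖ + ‖g (j-1)‖) := by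
      rw [← abs_of_nonneg (show (0:ℝ) ≤ ‖g j‖+‖g (j-1)‖ by positivity), ← abs_mul]
      congr 1; ring
    rw [h1]
    calc |‖g j‖ - ‖g (j-1)‖| * (‖g j‖ + ‖g (j-1)‖)
        ≤ ‖g j - g (j-1)‖ * (‖g j‖ + ‖g (j-1)‖) :=
          mul_le_mul_of_nonneg_right (abs_norm_sub_norm_le _ _) (by positivity)
      _ = τ * (‖Dq τ g j‖ * (‖g j‖ + ‖g (j-1)‖)) := by rw [norm_sub_eq_Dq hτ]; ring
  have habs : ∀ p q : ℕ, p ∈ Finset.Icc s M → q ∈ Finset.Icc s M → p ≤ q →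
      |‖g q‖^2 - ‖g p‖^2| ≤ R := by
    intro p q hp hq hpq
    simp only [Finset.mem_Icc] at hp hq
    rw [show ‖g q‖^2 - ‖g p‖^2 =
      ∑ j ∈ Finset.Icc (p+1) q, (‖g j‖^2 - ‖g (j-1)‖^2) from telescope_sub (fun j => ‖g j‖^2) hpq]
    calc |∑ j ∈ Finset.Icc (p+1) q, (‖g j‖^2 - ‖g (j-1)‖^2)|
        ≤ ∑ j ∈ Finset.Icc (p+1) q, |‖g j‖^2 - ‖g (j-1)‖^2| :=
          Finset.abs_sum_le_sum_abs _ _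
      _ ≤ ∑ j ∈ Finset.Icc (p+1) q, τ * (‖Dq τ g j‖ * (‖g j‖ + ‖g (j-1)‖)) := by
          refine Finset.sum_le_sum fun j hj => ?_
          simp only [Finset.mem_Icc] at hj
          exact key j (by omega) (by omega)
      _ ≤ ∑ j ∈ Finset.Icc (s+1) M, τ * (‖Dq τ g j‖ * (‖g j‖ + ‖g (j-1)‖)) := by
          refine Finset.sum_le_sum_of_subset_of_nonneg
            (Finset.Icc_subset_Icc (by omega) (by omega)) fun j _ _ => by positivity
      _ = R := by rw [hR, Finset.mul_sum]
  have habs' : |‖g n‖^2 - ‖g k‖^2| ≤ R := by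
    rcases le_total k n with h|h
    · exact habs k n hk hn h
    · rw [abs_sub_comm]; exact habs n k hn hk h
  have hdiv : (∑ i ∈ Finset.Icc s M, ‖g i‖^2) / ((M:ℝ)+1-s) = A0^2 / (((M:ℝ)+1-(s:ℝ))*τ) := by
    rw [seqNorm0_sq hτ.le]
    field_simp
  have := le_abs_self (‖g n‖^2 - ‖g k‖^2)
  rw [hdiv] at hk2
  linarith

/-- summation by parts estimate -/
lemma parts {τ : ℝ} (hτ : 0 < τ) (M s : ℕ) (hsM : s + 1 ≤ M) (g : ℕ → X) :
    (seqNorm0 τ (s+1) M (Dq τ g))^2 ≤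
      seqNorm0 τ s M g * seqNorm0 τ (s+2) M (Dq τ (Dq τ g))
      + ‖g M‖ * ‖Dq τ g M‖ + ‖g s‖ * ‖Dq τ g (s+1)‖ := by
  set D := Dq τ g with hD
  set DD := Dq τ D with hDD
  have hM1 : M = (M-1)+1 := by omega
  -- identity
  have e1 : ∀ n, 1 ≤ n → τ*‖D n‖^2 = ⟪g n, D n⟫_ℝ - ⟪g (n-1), D n⟫_ℝ := by
    intro n hn
    rw [← inner_sub_left]
    have : g n - g (n-1) = τ • D n := (smul_Dq hτ.ne' g n).symm
    rw [this, real_inner_smul_left, real_inner_self_eq_norm_sq]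
  have e2 : (seqNorm0 τ (s+1) M D)^2
      = ∑ n ∈ Finset.Icc (s+1) M, (⟪g n, D n⟫_ℝ - ⟪g (n-1), D n⟫_ℝ) := by
    rw [seqNorm0_sq hτ.le, Finset.mul_sum]
    refine Finset.sum_congr rfl fun n hn => ?_
    simp only [Finset.mem_Icc] at hn
    exact e1 n (by omega)
  -- Abel
  have eA : ∑ n ∈ Finset.Icc (s+1) M, ⟪g n, D n⟫_ℝ
      = (∑ n ∈ Finset.Icc (s+1) (M-1), ⟪g n, D n⟫_ℝ) + ⟪g M, D M⟫_ℝ := by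
    conv_lhs => rw [hM1]
    rw [sum_Icc_top _ (by omega)]
    rw [← hM1]
  have eB : ∑ n ∈ Finset.Icc (s+1) M, ⟪g (n-1), D n⟫_ℝ
      = ⟪g s, D (s+1)⟫_ℝ + ∑ n ∈ Finset.Icc (s+1) (M-1), ⟪g n, D (n+1)⟫_ℝ := by
    conv_lhs => rw [hM1]
    rw [sum_Icc_shift (fun n => ⟪g (n-1), D n⟫_ℝ) s (M-1)]
    simp only [Nat.add_sub_cancel]
    rw [sum_Icc_bot _ (by omega : s ≤ M-1)]
  have eC : (seqNorm0 τ (s+1) M D)^2 = ⟪g M, D M⟫_ℝ - ⟪g s, D (s+1)⟫_ℝ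
      + ∑ n ∈ Finset.Icc (s+1) (M-1), (- τ * ⟪g n, DD (n+1)⟫_ℝ) := by
    rw [e2, Finset.sum_sub_distrib, eA, eB]
    have : ∀ n ∈ Finset.Icc (s+1) (M-1),
        ⟪g n, D n⟫_ℝ - ⟪g n, D (n+1)⟫_ℝ = - τ * ⟪g n, DD (n+1)⟫_ℝ := by
      intro n hn
      have hsm : D (n+1) - D n = τ • DD (n+1) := by
        rw [hDD, smul_Dq hτ.ne' D (n+1)]
        simp only [Nat.add_sub_cancel]
      have : ⟪g n, D n⟫_ℝ - ⟪g n, D (n+1)⟫_ℝ = - ⟪g n, D (n+1) - D n⟫_ℝ := by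
        rw [inner_sub_right]; ring
      rw [this, hsm, real_inner_smul_right]; ring
    rw [← Finset.sum_congr rfl this, Finset.sum_sub_distrib]
    ring
  -- bounds
  have hb1 : ⟪g M, D M⟫_ℝ ≤ ‖g M‖ * ‖D M‖ := real_inner_le_norm _ _
  have hb2 : - ⟪g s, D (s+1)⟫_ℝ ≤ ‖g s‖ * ‖D (s+1)‖ := by
    have := abs_real_inner_le_norm (g s) (D (s+1))
    have := neg_abs_le ⟪g s, D (s+1)⟫_ℝ
    linarith
  have hb3 : ∑ n ∈ Finset.Icc (s+1) (M-1), (- τ * ⟪g n, DD (n+1)⟫_ℝ)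
      ≤ seqNorm0 τ s M g * seqNorm0 τ (s+2) M DD := by
    have hstep : ∑ n ∈ Finset.Icc (s+1) (M-1), (- τ * ⟪g n, DD (n+1)⟫_ℝ)
        ≤ τ * ∑ n ∈ Finset.Icc (s+1) (M-1), ‖g n‖ * ‖DD (n+1)‖ := by
      rw [Finset.mul_sum]
      refine Finset.sum_le_sum fun n _ => ?_
      have h1 := abs_real_inner_le_norm (g n) (DD (n+1))
      have h2 := neg_abs_le ⟪g n, DD (n+1)⟫_ℝ
      have : - τ * ⟪g n, DD (n+1)⟫_ℝ = τ * (- ⟪g n, DD (n+1)⟫_ℝ) := by ring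
      rw [this]
      exact mul_le_mul_of_nonneg_left (by linarith) hτ.le
    refine le_trans hstep ?_
    -- Cauchy-Schwarz
    have hcs := Finset.sum_mul_sq_le_sq_mul_sq (Finset.Icc (s+1) (M-1))
      (fun n => ‖g n‖) (fun n => ‖DD (n+1)‖)
    have hS1 : τ * ∑ n ∈ Finset.Icc (s+1) (M-1), ‖g n‖^2 ≤ (seqNorm0 τ s M g)^2 :=
      sum_sq_le_seqNorm0_sq hτ.le (by omega) (by omega) g
    have hS2 : τ * ∑ n ∈ Finset.Icc (s+1) (M-1), ‖DD (n+1)‖^2 = (seqNorm0 τ (s+2) M DD)^2 := by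
      rw [seqNorm0_sq hτ.le]
      congr 1
      conv_rhs => rw [hM1, show s+2 = (s+1)+1 from rfl]
      rw [sum_Icc_shift (fun n => ‖DD n‖^2) (s+1) (M-1)]
    have hnn : (0:ℝ) ≤ τ * ∑ n ∈ Finset.Icc (s+1) (M-1), ‖g n‖ * ‖DD (n+1)‖ := by
      refine mul_nonneg hτ.le (Finset.sum_nonneg fun n _ => by positivity)
    have hsqle : (τ * ∑ n ∈ Finset.Icc (s+1) (M-1), ‖g n‖ * ‖DD (n+1)‖)^2
        ≤ (seqNorm0 τ s M g * seqNorm0 τ (s+2) M DD)^2 := by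
      have expand : (τ * ∑ n ∈ Finset.Icc (s+1) (M-1), ‖g n‖ * ‖DD (n+1)‖)^2
          = τ^2 * (∑ n ∈ Finset.Icc (s+1) (M-1), ‖g n‖ * ‖DD (n+1)‖)^2 := by ring
      rw [expand]
      calc τ^2 * (∑ n ∈ Finset.Icc (s+1) (M-1), ‖g n‖ * ‖DD (n+1)‖)^2
          ≤ τ^2 * ((∑ n ∈ Finset.Icc (s+1) (M-1), ‖g n‖^2) *
            ∑ n ∈ Finset.Icc (s+1) (M-1), ‖DD (n+1)‖^2) :=
            mul_le_mul_of_nonneg_left hcs (by positivity)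
        _ = (τ * ∑ n ∈ Finset.Icc (s+1) (M-1), ‖g n‖^2) *
            (τ * ∑ n ∈ Finset.Icc (s+1) (M-1), ‖DD (n+1)‖^2) := by ring
        _ ≤ (seqNorm0 τ s M g)^2 * (seqNorm0 τ (s+2) M DD)^2 := by
            rw [hS2]
            refine mul_le_mul_of_nonneg_right hS1 ?_
            positivity
        _ = (seqNorm0 τ s M g * seqNorm0 τ (s+2) M DD)^2 := by ring
    exact le_of_pow_le_pow_left₀ two_ne_zero
      (mul_nonneg (seqNorm0_nonneg _ _ _ _) (seqNorm0_nonneg _ _ _ _)) hsqle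
  rw [eC]
  linarith [hb1, hb2, hb3]

lemma sum_abs_nat : ∀ N : ℕ,
    3 * (∑ n ∈ Finset.range N, ∑ k ∈ Finset.range N, ((n-k) + (k-n))) + N = N^3 := by
  intro N
  induction N with
  | zero => simp
  | succ N ih =>
    set d : ℕ → ℕ → ℕ := fun n k => (n-k) + (k-n) with hd
    have e0 : ∀ n, ∑ k ∈ Finset.range (N+1), d n k = (∑ k ∈ Finset.range N, d n k) + d n N :=
      fun n => Finset.sum_range_succ _ _
    have split : ∑ n ∈ Finset.range (N+1), ∑ k ∈ Finset.range (N+1), d n k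
        = (∑ n ∈ Finset.range N, ∑ k ∈ Finset.range N, d n k)
          + (∑ n ∈ Finset.range N, d n N) + ∑ k ∈ Finset.range (N+1), d N k := by
      rw [Finset.sum_range_succ]
      have : ∑ n ∈ Finset.range N, ∑ k ∈ Finset.range (N+1), d n k
          = (∑ n ∈ Finset.range N, ∑ k ∈ Finset.range N, d n k)
            + ∑ n ∈ Finset.range N, d n N := by
        rw [← Finset.sum_add_distrib]
        exact Finset.sum_congr rfl fun n _ => e0 n
      rw [this]
    have hQ : ∀ n ∈ Finset.range N, d n N = N - n := by
      intro n hn; simp only [Finset.mem_range] at hn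
      simp only [hd]; omega
    have hQ2 : ∀ k ∈ Finset.range N, d N k = N - k := by
      intro k hk; simp only [Finset.mem_range] at hk
      simp only [hd]; omega
    have hgauss : 2 * ∑ k ∈ Finset.range N, (N - k) = N * (N+1) := by
      have hrefl := Finset.sum_range_reflect (fun k => N - k) N
      have : ∑ j ∈ Finset.range N, (N - (N - 1 - j)) = ∑ j ∈ Finset.range N, (j+1) :=
        Finset.sum_congr rfl fun j hj => by
          simp only [Finset.mem_range] at hj; omega
      rw [this] at hrefl
      have h2 : ∑ j ∈ Finset.range N, (j+1) = ∑ j ∈ Finset.range (N+1), j := by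
        rw [Finset.sum_range_succ' (fun j => j) N]
        simp
      have h3 := Finset.sum_range_id_mul_two (N+1)
      rw [← hrefl, h2]
      have h4 : (N+1) * ((N+1) - 1) = N * (N+1) := by
        rw [Nat.add_sub_cancel]; ring
      rw [← h4, ← h3]; ring
    have e1 : ∑ n ∈ Finset.range N, d n N = ∑ k ∈ Finset.range N, (N - k) :=
      Finset.sum_congr rfl hQ
    have e2 : ∑ k ∈ Finset.range (N+1), d N k = ∑ k ∈ Finset.range N, (N - k) := by
      rw [Finset.sum_range_succ, Finset.sum_congr rfl hQ2]
      simp [hd]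
    have ih' : 3 * (∑ n ∈ Finset.range N, ∑ k ∈ Finset.range N, d n k) + N = N^3 := ih
    rw [split, e1, e2]
    calc 3 * ((∑ n ∈ Finset.range N, ∑ k ∈ Finset.range N, d n k)
          + (∑ k ∈ Finset.range N, (N-k)) + ∑ k ∈ Finset.range N, (N-k)) + (N+1)
        = (3 * (∑ n ∈ Finset.range N, ∑ k ∈ Finset.range N, d n k) + N)
          + 3*(2 * ∑ k ∈ Finset.range N, (N-k)) + 1 := by ring
      _ = N^3 + 3*(N*(N+1)) + 1 := by rw [ih', hgauss]
      _ = (N+1)^3 := by ring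

lemma sum_abs_real (N : ℕ) :
    ∑ n ∈ Finset.range N, ∑ k ∈ Finset.range N, |(n:ℝ) - (k:ℝ)| ≤ (N:ℝ)^3 / 3 := by
  have hcast : ∀ n k : ℕ, |(n:ℝ) - (k:ℝ)| = (((n-k) + (k-n) : ℕ) : ℝ) := by
    intro n k
    rcases le_total n k with h|h
    · rw [abs_of_nonpos (sub_nonpos.2 (by exact_mod_cast h : (n:ℝ) ≤ (k:ℝ)))]
      have h1 : n - k = 0 := Nat.sub_eq_zero_of_le h
      rw [h1]
      push_cast [Nat.cast_sub h]
      ring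
    · rw [abs_of_nonneg (sub_nonneg.2 (by exact_mod_cast h : (k:ℝ) ≤ (n:ℝ)))]
      have h1 : k - n = 0 := Nat.sub_eq_zero_of_le h
      rw [h1]
      push_cast [Nat.cast_sub h]
      ring
  have e : ∑ n ∈ Finset.range N, ∑ k ∈ Finset.range N, |(n:ℝ) - (k:ℝ)|
      = ((∑ n ∈ Finset.range N, ∑ k ∈ Finset.range N, ((n-k) + (k-n)) : ℕ) : ℝ) := by
    push_cast
    exact Finset.sum_congr rfl fun n _ => Finset.sum_congr rfl fun k _ => by
      rw [hcast n k]; push_cast; ring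
  rw [e]
  have h := sum_abs_nat N
  have h3 : 3 * (∑ n ∈ Finset.range N, ∑ k ∈ Finset.range N, ((n-k) + (k-n))) ≤ N^3 := by omega
  have h4 : 3 * ((∑ n ∈ Finset.range N, ∑ k ∈ Finset.range N, ((n-k) + (k-n)) : ℕ) : ℝ)
      ≤ (N:ℝ)^3 := by exact_mod_cast h3
  linarith

/-- discrete Poincaré inequality for zero-mean sequences -/
lemma poincare {τ : ℝ} (hτ : 0 < τ) (M : ℕ) (f : ℕ → X)
    (hmean : ∑ n ∈ Finset.range (M+1), f n = 0) :
    (seqNorm0 τ 0 M f)^2 ≤ (τ*((M:ℝ)+1))^2/3 * (seqNorm0 τ 1 M (Dq τ f))^2 := by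
  set a1 := seqNorm0 τ 1 M (Dq τ f) with ha1
  have ha1n : 0 ≤ a1 := Real.sqrt_nonneg _
  -- pointwise difference bound
  have stepA : ∀ n k : ℕ, n ≤ M → k ≤ M →
      ‖f n - f k‖^2 ≤ |(n:ℝ) - (k:ℝ)| * τ * a1^2 := by
    have half : ∀ n k : ℕ, n ≤ M → k ≤ M → k ≤ n →
        ‖f n - f k‖^2 ≤ |(n:ℝ) - (k:ℝ)| * τ * a1^2 := by
      intro n k hn hk hkn
      have h1 : f n - f k = ∑ j ∈ Finset.Icc (k+1) n, (f j - f (j-1)) := telescope_sub f hkn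
      have h2 : ‖f n - f k‖ ≤ ∑ j ∈ Finset.Icc (k+1) n, (τ * ‖Dq τ f j‖) := by
        rw [h1]
        refine le_trans (norm_sum_le _ _) (le_of_eq (Finset.sum_congr rfl fun j _ => ?_))
        exact norm_sub_eq_Dq hτ f j
      have h3 := sq_sum_le_card_mul_sum_sq (s := Finset.Icc (k+1) n)
        (f := fun j => τ * ‖Dq τ f j‖)
      have hcard : ((Finset.Icc (k+1) n).card : ℝ) = (n:ℝ) - (k:ℝ) := by
        rw [Nat.card_Icc]
        have : n + 1 - (k+1) = n - k := by omega
        rw [this]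
        push_cast [Nat.cast_sub hkn]
        ring
      have h4 : ∑ j ∈ Finset.Icc (k+1) n, (τ * ‖Dq τ f j‖)^2
          = τ * (τ * ∑ j ∈ Finset.Icc (k+1) n, ‖Dq τ f j‖^2) := by
        rw [Finset.mul_sum, Finset.mul_sum]
        exact Finset.sum_congr rfl fun j _ => by ring
      have h5 : τ * ∑ j ∈ Finset.Icc (k+1) n, ‖Dq τ f j‖^2 ≤ a1^2 :=
        sum_sq_le_seqNorm0_sq hτ.le (by omega) hn (Dq τ f)
      have habs : |(n:ℝ) - (k:ℝ)| = (n:ℝ) - (k:ℝ) :=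
        abs_of_nonneg (sub_nonneg.2 (by exact_mod_cast hkn : (k:ℝ) ≤ (n:ℝ)))
      calc ‖f n - f k‖^2 ≤ (∑ j ∈ Finset.Icc (k+1) n, (τ * ‖Dq τ f j‖))^2 :=
            pow_le_pow_left₀ (norm_nonneg _) h2 2
        _ ≤ ((Finset.Icc (k+1) n).card : ℝ) * ∑ j ∈ Finset.Icc (k+1) n, (τ * ‖Dq τ f j‖)^2 := h3
        _ = ((n:ℝ) - (k:ℝ)) * (τ * (τ * ∑ j ∈ Finset.Icc (k+1) n, ‖Dq τ f j‖^2)) := by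
            rw [hcard, h4]
        _ ≤ ((n:ℝ) - (k:ℝ)) * (τ * a1^2) := by
            refine mul_le_mul_of_nonneg_left (mul_le_mul_of_nonneg_left h5 hτ.le) ?_
            exact sub_nonneg.2 (by exact_mod_cast hkn : (k:ℝ) ≤ (n:ℝ))
        _ = |(n:ℝ) - (k:ℝ)| * τ * a1^2 := by rw [habs]; ring
    intro n k hn hk
    rcases le_total k n with h|h
    · exact half n k hn hk h
    · rw [norm_sub_rev, show |(n:ℝ) - (k:ℝ)| = |(k:ℝ) - (n:ℝ)| from abs_sub_comm _ _]
      exact half k n hk hn h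
  -- averaging
  have stepB : ∀ n : ℕ, n ≤ M → ((M:ℝ)+1)^2 * ‖f n‖^2
      ≤ ((M:ℝ)+1) * ∑ k ∈ Finset.range (M+1), (|(n:ℝ) - (k:ℝ)| * τ * a1^2) := by
    intro n hn
    have b1 : ((M:ℝ)+1) * ‖f n‖ ≤ ∑ k ∈ Finset.range (M+1), ‖f n - f k‖ := by
      have hsum : ∑ k ∈ Finset.range (M+1), (f n - f k) = (M+1) • f n := by
        rw [Finset.sum_sub_distrib, Finset.sum_const, Finset.card_range, hmean, sub_zero]
      have hnorm : ‖(M+1) • f n‖ = ((M:ℝ)+1) * ‖f n‖ := by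
        rw [← Nat.cast_smul_eq_nsmul ℝ, norm_smul, Real.norm_eq_abs]
        push_cast
        rw [abs_of_nonneg (by positivity)]
      rw [← hnorm, ← hsum]
      exact norm_sum_le _ _
    have b2 := sq_sum_le_card_mul_sum_sq (s := Finset.range (M+1))
      (f := fun k => ‖f n - f k‖)
    rw [Finset.card_range] at b2
    have b3 : ∑ k ∈ Finset.range (M+1), ‖f n - f k‖^2
        ≤ ∑ k ∈ Finset.range (M+1), (|(n:ℝ) - (k:ℝ)| * τ * a1^2) := by
      refine Finset.sum_le_sum fun k hk => ?_
      simp only [Finset.mem_range] at hk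
      exact stepA n k hn (by omega)
    have hfn : (0:ℝ) ≤ ((M:ℝ)+1) * ‖f n‖ := by positivity
    calc ((M:ℝ)+1)^2 * ‖f n‖^2 = (((M:ℝ)+1) * ‖f n‖)^2 := by ring
      _ ≤ (∑ k ∈ Finset.range (M+1), ‖f n - f k‖)^2 := pow_le_pow_left₀ hfn b1 2
      _ ≤ ((M+1:ℕ):ℝ) * ∑ k ∈ Finset.range (M+1), ‖f n - f k‖^2 := b2
      _ ≤ ((M:ℝ)+1) * ∑ k ∈ Finset.range (M+1), (|(n:ℝ) - (k:ℝ)| * τ * a1^2) := by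
          push_cast
          refine mul_le_mul_of_nonneg_left b3 (by positivity)
  -- sum over n
  have hIcc : Finset.Icc 0 M = Finset.range (M+1) := by
    ext x; simp [Nat.lt_succ_iff]
  have sumB : ((M:ℝ)+1)^2 * ∑ n ∈ Finset.range (M+1), ‖f n‖^2
      ≤ ((M:ℝ)+1) * τ * a1^2 * ((((M:ℝ)+1))^3/3) := by
    rw [Finset.mul_sum]
    have h1 : ∑ n ∈ Finset.range (M+1), ((M:ℝ)+1)^2 * ‖f n‖^2
        ≤ ∑ n ∈ Finset.range (M+1), ((M:ℝ)+1) * ∑ k ∈ Finset.range (M+1),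
          (|(n:ℝ) - (k:ℝ)| * τ * a1^2) := by
      refine Finset.sum_le_sum fun n hn => ?_
      simp only [Finset.mem_range] at hn
      exact stepB n (by omega)
    refine le_trans h1 ?_
    have e1 : ∑ n ∈ Finset.range (M+1), ((M:ℝ)+1) * ∑ k ∈ Finset.range (M+1),
        (|(n:ℝ) - (k:ℝ)| * τ * a1^2)
        = ((M:ℝ)+1) * τ * a1^2 * ∑ n ∈ Finset.range (M+1), ∑ k ∈ Finset.range (M+1),
          |(n:ℝ) - (k:ℝ)| := by
      rw [Finset.mul_sum]
      refine Finset.sum_congr rfl fun n _ => ?_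
      rw [Finset.mul_sum, Finset.mul_sum]
      exact Finset.sum_congr rfl fun k _ => by ring
    rw [e1]
    have h2 := sum_abs_real (M+1)
    push_cast at h2
    refine mul_le_mul_of_nonneg_left ?_ (by positivity)
    exact h2
  have hA : (seqNorm0 τ 0 M f)^2 = τ * ∑ n ∈ Finset.range (M+1), ‖f n‖^2 := by
    rw [seqNorm0_sq hτ.le, hIcc]
  have hM1 : (0:ℝ) < (M:ℝ)+1 := by positivity
  have hsum_n : ∑ n ∈ Finset.range (M+1), ‖f n‖^2 ≤ τ * a1^2 * ((M:ℝ)+1)^2 / 3 := by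
    have h := sumB
    have e : ((M:ℝ)+1) * τ * a1^2 * ((((M:ℝ)+1))^3/3)
        = ((M:ℝ)+1)^2 * (τ * a1^2 * ((M:ℝ)+1)^2 / 3) := by ring
    rw [e] at h
    exact le_of_mul_le_mul_left h (by positivity)
  rw [hA]
  calc τ * ∑ n ∈ Finset.range (M+1), ‖f n‖^2 ≤ τ * (τ * a1^2 * ((M:ℝ)+1)^2 / 3) :=
        mul_le_mul_of_nonneg_left hsum_n hτ.le
    _ = (τ*((M:ℝ)+1))^2/3 * a1^2 := by ring

/-- zero-mean discrete Agmon inequality with the sharp constant -/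
lemma agmon0 {τ : ℝ} (hτ : 0 < τ) (M : ℕ) (f : ℕ → X)
    (hmean : ∑ n ∈ Finset.range (M+1), f n = 0) (n : ℕ) (hn : n ≤ M) :
    ‖f n‖^2 ≤ cA^2 * (seqNorm0 τ 0 M f * seqNorm0 τ 1 M (Dq τ f)) := by
  set A := seqNorm0 τ 0 M f with hA
  set a1 := seqNorm0 τ 1 M (Dq τ f) with ha1
  have hAn : 0 ≤ A := Real.sqrt_nonneg _
  have ha1n : 0 ≤ a1 := Real.sqrt_nonneg _
  have hloc := loc_max hτ M 0 (by omega) f n (by simp [Finset.mem_Icc]; omega)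
  have hpoin := poincare hτ M f hmean
  have hs2 : (Real.sqrt 2)^2 = 2 := Real.sq_sqrt (by norm_num)
  have hs2n : (1:ℝ) ≤ Real.sqrt 2 := sqrt2_ge_one
  have h1 : A ≤ (τ*((M:ℝ)+1)) * a1 * (Real.sqrt 2/2) := by
    refine le_of_pow_le_pow_left₀ two_ne_zero (by positivity) ?_
    have e : ((τ*((M:ℝ)+1)) * a1 * (Real.sqrt 2/2))^2
        = (τ*((M:ℝ)+1))^2 * a1^2 / 2 := by
      rw [mul_pow, mul_pow, div_pow, hs2]; ring
    rw [e]
    refine le_trans hpoin ?_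
    have : (0:ℝ) ≤ (τ*((M:ℝ)+1))^2 * a1^2 := by positivity
    linarith
  have h2 : A^2/(((M:ℝ)+1-(0:ℝ))*τ) ≤ (Real.sqrt 2/2) * (A*a1) := by
    have hpos : (0:ℝ) < ((M:ℝ)+1-(0:ℝ))*τ := by
      have : (0:ℝ) < (M:ℝ)+1 := by positivity
      simp only [sub_zero]
      positivity
    rw [div_le_iff₀ hpos]
    have := mul_le_mul_of_nonneg_left h1 hAn
    calc A^2 = A * A := sq A
      _ ≤ A * ((τ*((M:ℝ)+1)) * a1 * (Real.sqrt 2/2)) := this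
      _ = (Real.sqrt 2/2) * (A*a1) * (((M:ℝ)+1-(0:ℝ))*τ) := by ring
  have h3 : ‖f n‖^2 ≤ (Real.sqrt 2/2) * (A*a1) + 2 * (A*a1) := by
    have : 2*A*a1 = 2*(A*a1) := by ring
    rw [show (0:ℕ)+1 = 1 from rfl] at hloc
    rw [← hA, ← ha1] at hloc
    linarith [hloc]
  rw [cA_sq]
  linarith

/-! ### the core real inequality -/

lemma kap_sq_ge : (36:ℝ) ≤ kap^2 := by nlinarith [six_le_kap]

set_option maxHeartbeats 1000000 in
lemma core (m : ℕ) (u a0 a2 B Tr1 : ℝ) (hu : 0 ≤ u) (ha0 : 0 ≤ a0) (ha2 : 0 ≤ a2)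
    (hB : 0 ≤ B) (hT : 0 < Tr1)
    (h1 : u^2 ≤ a0*a2 + 2*(Real.sqrt (a0^2/Tr1 + 2*(a0*u)) * Real.sqrt (u^2/Tr1 + 2*(u*a2))))
    (h4 : a2^(m+1) ≤ kap^((m+1)*m) * u^m * B)
    (h5 : u ≤ Tr1^(m+1) * B) :
    u^(m+2) ≤ kap^((m+2)*(m+1)) * a0^(m+1) * B := by
  have hk2 := kap_sq_ge
  have hkn := kap_nonneg
  have hk2pos : (0:ℝ) < kap^2 := by nlinarith
  by_cases hc : u * Tr1 ≤ kap^2 * a0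
  · -- case 1 : u is small
    have h6 : u ≤ kap^2*a0/Tr1 := (le_div_iff₀ hT).2 (by linarith)
    have hpow : u^(m+1) ≤ (kap^2*a0/Tr1)^(m+1) := pow_le_pow_left₀ hu h6 (m+1)
    have step : u^(m+2) ≤ (kap^2*a0/Tr1)^(m+1) * (Tr1^(m+1) * B) := by
      calc u^(m+2) = u^(m+1) * u := by ring
        _ ≤ (kap^2*a0/Tr1)^(m+1) * (Tr1^(m+1) * B) :=
            mul_le_mul hpow h5 hu (by positivity)
    have e : (kap^2*a0/Tr1)^(m+1) * (Tr1^(m+1) * B) = kap^(2*(m+1)) * a0^(m+1) * B := by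
      rw [div_pow, mul_pow, ← pow_mul]
      field_simp
    rw [e] at step
    refine le_trans step ?_
    have hexp : 2*(m+1) ≤ (m+2)*(m+1) := Nat.mul_le_mul_right _ (by omega)
    have h0 : (0:ℝ) ≤ a0^(m+1) * B := by positivity
    have h7 := mul_le_mul_of_nonneg_right (pow_le_pow_right₀ one_le_kap hexp) h0
    calc kap^(2*(m+1)) * a0^(m+1) * B = kap^(2*(m+1)) * (a0^(m+1) * B) := by ring
      _ ≤ kap^((m+2)*(m+1)) * (a0^(m+1) * B) := h7
      _ = kap^((m+2)*(m+1)) * a0^(m+1) * B := by ring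
  · push_neg at hc
    have hu0 : 0 < u := by
      rcases hu.lt_or_eq with h|h
      · exact h
      · exfalso
        rw [← h] at hc
        nlinarith [mul_nonneg (mul_nonneg hkn hkn) ha0]
    have b1 : kap^2 * a0 ≤ u * Tr1 := hc.le
    -- bound the first sqrt argument
    have f0 : a0 * u ≤ u^2 * Tr1 / kap^2 := by
      rw [le_div_iff₀ hk2pos]
      nlinarith [mul_le_mul_of_nonneg_right b1 hu]
    have hX : a0^2/Tr1 + 2*(a0*u) ≤ cA^2*(a0*u) := by
      have fa : a0^2/Tr1 ≤ a0*u/kap^2 := by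
        rw [div_le_div_iff₀ hT hk2pos]
        nlinarith [mul_le_mul_of_nonneg_left b1 ha0]
      have fb : a0*u/kap^2 ≤ a0*u/36 := by
        apply div_le_div_of_nonneg_left (mul_nonneg ha0 hu) (by norm_num) hk2
      have fc : a0*u/36 ≤ (Real.sqrt 2/2)*(a0*u) := by
        have := sqrt2_ge_one
        nlinarith [mul_nonneg ha0 hu]
      rw [cA_sq]
      nlinarith [mul_nonneg ha0 hu]
    by_cases hca : u^2/Tr1 ≤ (cA1^2 - 2)*(u*a2)
    · -- interpolation regime
      have hY : u^2/Tr1 + 2*(u*a2) ≤ cA1^2*(u*a2) := by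
        nlinarith [mul_nonneg hu ha2]
      set w := Real.sqrt (a0*a2) with hw
      have hwn : 0 ≤ w := Real.sqrt_nonneg _
      have hw2 : w^2 = a0*a2 := Real.sq_sqrt (mul_nonneg ha0 ha2)
      have s1 : Real.sqrt (a0^2/Tr1 + 2*(a0*u)) ≤ Real.sqrt (cA^2*(a0*u)) :=
        Real.sqrt_le_sqrt hX
      have s2 : Real.sqrt (u^2/Tr1 + 2*(u*a2)) ≤ Real.sqrt (cA1^2*(u*a2)) :=
        Real.sqrt_le_sqrt hY
      have e2 : Real.sqrt (cA^2*(a0*u)) * Real.sqrt (cA1^2*(u*a2)) = bC * u * w := by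
        rw [← Real.sqrt_mul (by positivity)]
        have e3 : cA^2*(a0*u) * (cA1^2*(u*a2)) = (bC*u)^2 * (a0*a2) := by
          rw [bC]; ring
        rw [e3, Real.sqrt_mul (sq_nonneg _), Real.sqrt_sq (mul_nonneg bC_nonneg hu), hw]
      have hprod : Real.sqrt (a0^2/Tr1 + 2*(a0*u)) * Real.sqrt (u^2/Tr1 + 2*(u*a2))
          ≤ bC * u * w := by
        rw [← e2]
        exact mul_le_mul s1 s2 (Real.sqrt_nonneg _) (Real.sqrt_nonneg _)
      have hquad : u ≤ kap * w := by
        refine quad_bound u w hu hwn ?_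
        linarith [h1, hprod, hw2.ge, hw2.le]
      have hu2 : u^2 ≤ kap^2 * (a0*a2) := by
        have h := pow_le_pow_left₀ hu hquad 2
        rw [mul_pow, hw2] at h
        exact h
      -- assemble
      have hfin : u^(m+2) * u^m ≤ (kap^((m+2)*(m+1)) * a0^(m+1) * B) * u^m := by
        have c1 : u^(m+2) * u^m = (u^2)^(m+1) := by
          rw [← pow_add, ← pow_mul]
          congr 1
          omega
        have c2 : (u^2)^(m+1) ≤ (kap^2 * (a0*a2))^(m+1) :=
          pow_le_pow_left₀ (sq_nonneg u) hu2 (m+1)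
        have c3 : (kap^2 * (a0*a2))^(m+1) = kap^(2*(m+1)) * a0^(m+1) * a2^(m+1) := by
          rw [mul_pow, mul_pow, ← pow_mul]
          ring
        have c4 : kap^(2*(m+1)) * a0^(m+1) * a2^(m+1)
            ≤ kap^(2*(m+1)) * a0^(m+1) * (kap^((m+1)*m) * u^m * B) := by
          refine mul_le_mul_of_nonneg_left h4 ?_
          exact mul_nonneg (pow_nonneg hkn _) (pow_nonneg ha0 _)
        have c5 : kap^(2*(m+1)) * a0^(m+1) * (kap^((m+1)*m) * u^m * B)
            = (kap^((m+2)*(m+1)) * a0^(m+1) * B) * u^m := by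
          rw [show (m+2)*(m+1) = 2*(m+1) + (m+1)*m by ring, pow_add]
          ring
        calc u^(m+2) * u^m = (u^2)^(m+1) := c1
          _ ≤ (kap^2 * (a0*a2))^(m+1) := c2
          _ = kap^(2*(m+1)) * a0^(m+1) * a2^(m+1) := c3
          _ ≤ kap^(2*(m+1)) * a0^(m+1) * (kap^((m+1)*m) * u^m * B) := c4
          _ = (kap^((m+2)*(m+1)) * a0^(m+1) * B) * u^m := c5
      exact le_of_mul_le_mul_right hfin (pow_pos hu0 m)
    · -- impossible regime
      exfalso
      push_neg at hca
      have hA1 : (4:ℝ) ≤ cA1^2 - 2 := by linarith [six_le_cA1_sq]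
      have b2 : (cA1^2-2) * a2 * Tr1 ≤ u := by
        have h' : (cA1^2-2)*(u*a2) * Tr1 < u^2 := (lt_div_iff₀ hT).1 hca
        have h'' : ((cA1^2-2) * a2 * Tr1) * u ≤ u * u := by
          have e : ((cA1^2-2) * a2 * Tr1) * u = (cA1^2-2)*(u*a2) * Tr1 := by ring
          rw [e, ← pow_two]
          exact h'.le
        exact le_of_mul_le_mul_right h'' hu0
      have hb4 : 4*(a2*Tr1) ≤ u := by
        have hx := mul_nonneg ha2 hT.le
        nlinarith [b2, hx, mul_le_mul_of_nonneg_right (by linarith [hA1] : (4:ℝ) ≤ cA1^2-2) hx]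
      -- q1 : a0 * a2 ≤ u^2/144
      have q1 : 144 * (a0*a2) ≤ u^2 := by
        have c1 : (kap^2*a0) * ((cA1^2-2)*a2*Tr1) ≤ (u*Tr1) * u := by
          refine mul_le_mul b1 b2 ?_ (by positivity)
          exact mul_nonneg (mul_nonneg (by linarith) ha2) hT.le
        have c2 : 144 * (a0*a2) * Tr1 ≤ kap^2*(cA1^2-2)*(a0*a2)*Tr1 := by
          have h144 : (144:ℝ) ≤ kap^2*(cA1^2-2) := by
            have := mul_le_mul hk2 hA1 (by norm_num) (le_of_lt hk2pos)
            linarith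
          have hX0 : (0:ℝ) ≤ (a0*a2)*Tr1 := mul_nonneg (mul_nonneg ha0 ha2) hT.le
          have h9 := mul_le_mul_of_nonneg_right h144 hX0
          calc 144*(a0*a2)*Tr1 = 144*((a0*a2)*Tr1) := by ring
            _ ≤ kap^2*(cA1^2-2)*((a0*a2)*Tr1) := h9
            _ = kap^2*(cA1^2-2)*(a0*a2)*Tr1 := by ring
        have e1 : (kap^2*a0) * ((cA1^2-2)*a2*Tr1) = kap^2*(cA1^2-2)*(a0*a2)*Tr1 := by ring
        have e2 : (u*Tr1)*u = u^2*Tr1 := by ring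
        rw [e1, e2] at c1
        exact le_of_mul_le_mul_right (le_trans c2 c1) hT
      -- q2 : the sqrt product is at most (5/14) u^2
      have hX' : a0^2/Tr1 + 2*(a0*u) ≤ cA^2*(u^2*Tr1/kap^2) := by
        refine le_trans hX ?_
        have hca2 : (0:ℝ) ≤ cA^2 := sq_nonneg _
        exact mul_le_mul_of_nonneg_left f0 hca2
      have hY' : u^2/Tr1 + 2*(u*a2) ≤ (3/2)*(u^2/Tr1) := by
        have h2' : 2*(u*a2) ≤ (1/2)*(u^2/Tr1) := by
          rw [mul_div_assoc' (1/2), le_div_iff₀ hT]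
          nlinarith [mul_le_mul_of_nonneg_right hb4 hu]
        linarith
      have s1 : Real.sqrt (a0^2/Tr1 + 2*(a0*u)) ≤ Real.sqrt (cA^2*(u^2*Tr1/kap^2)) :=
        Real.sqrt_le_sqrt hX'
      have s2 : Real.sqrt (u^2/Tr1 + 2*(u*a2)) ≤ Real.sqrt ((3/2)*(u^2/Tr1)) :=
        Real.sqrt_le_sqrt hY'
      have e4 : Real.sqrt (cA^2*(u^2*Tr1/kap^2)) * Real.sqrt ((3/2)*(u^2/Tr1))
          = Real.sqrt ((3/2)*cA^2*u^4/kap^2) := by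
        rw [← Real.sqrt_mul (by positivity)]
        congr 1
        field_simp
      have s3 : Real.sqrt ((3/2)*cA^2*u^4/kap^2) ≤ (5/14)*u^2 := by
        have hle : (3/2)*cA^2*u^4/kap^2 ≤ ((5/14)*u^2)^2 := by
          rw [div_le_iff₀ hk2pos]
          nlinarith [mul_le_mul_of_nonneg_right cA_sq_le_three (pow_nonneg hu 4),
            mul_le_mul_of_nonneg_right hk2 (pow_nonneg hu 4)]
        calc Real.sqrt ((3/2)*cA^2*u^4/kap^2) ≤ Real.sqrt (((5/14)*u^2)^2) :=
              Real.sqrt_le_sqrt hle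
          _ = (5/14)*u^2 := Real.sqrt_sq (by positivity)
      have hprod : Real.sqrt (a0^2/Tr1 + 2*(a0*u)) * Real.sqrt (u^2/Tr1 + 2*(u*a2))
          ≤ (5/14)*u^2 := by
        calc Real.sqrt (a0^2/Tr1 + 2*(a0*u)) * Real.sqrt (u^2/Tr1 + 2*(u*a2))
            ≤ Real.sqrt (cA^2*(u^2*Tr1/kap^2)) * Real.sqrt ((3/2)*(u^2/Tr1)) :=
              mul_le_mul s1 s2 (Real.sqrt_nonneg _) (Real.sqrt_nonneg _)
          _ = Real.sqrt ((3/2)*cA^2*u^4/kap^2) := e4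
          _ ≤ (5/14)*u^2 := s3
      linarith [h1, hprod, q1, pow_pos hu0 2]

/-! ### normm lemmas -/

lemma Tk_succ (τ T : ℝ) (M r : ℕ) : Tk τ T M (r+1) = ((M:ℝ) - (r:ℝ)) * τ := by
  rw [Tk, if_neg (Nat.succ_ne_zero r)]
  push_cast
  ring

lemma Tk_succ_pos {τ T : ℝ} (hτ : 0 < τ) {M r : ℕ} (hr : r + 1 ≤ M) :
    0 < Tk τ T M (r+1) := by
  rw [Tk_succ]
  have h1 : (r:ℝ) < (M:ℝ) := by exact_mod_cast hr
  have h2 : (0:ℝ) < (M:ℝ) - r := by linarith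
  exact mul_pos h2 hτ

lemma normm_term_nonneg {τ T : ℝ} (M : ℕ) (f : ℕ → X) (j e : ℕ) :
    0 ≤ (seqNorm0 τ j M ((Dq τ)^[j] f))^2 / (Tk τ T M j)^(2*e) := by
  apply div_nonneg (sq_nonneg _)
  rw [pow_mul]
  positivity

lemma normm_nonneg (τ T : ℝ) (M k m : ℕ) (f : ℕ → X) : 0 ≤ normm τ T M k m f :=
  Real.sqrt_nonneg _

lemma normm_sq (τ T : ℝ) (M k m : ℕ) (f : ℕ → X) :
    (normm τ T M k m f)^2 = ∑ j ∈ Finset.Icc k (k+m),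
      (seqNorm0 τ j M ((Dq τ)^[j] f))^2 / (Tk τ T M j)^(2*(m+k-j)) := by
  rw [normm]
  exact Real.sq_sqrt (Finset.sum_nonneg fun j _ => normm_term_nonneg M f j _)

lemma seqNorm0_le_normm {τ T : ℝ} (hτ : 0 < τ) {M k : ℕ} (m : ℕ) (f : ℕ → X)
    (hkM : 1 ≤ k) (hk : k ≤ M) (hTk : 0 < Tk τ T M k) :
    seqNorm0 τ k M ((Dq τ)^[k] f) ≤ (Tk τ T M k)^m * normm τ T M k m f := by
  have h1 : (seqNorm0 τ k M ((Dq τ)^[k] f))^2 / (Tk τ T M k)^(2*(m+k-k))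
      ≤ (normm τ T M k m f)^2 := by
    rw [normm_sq]
    refine Finset.single_le_sum (fun j _ => normm_term_nonneg M f j _) ?_
    simp [Finset.mem_Icc]
  rw [show m+k-k = m by omega] at h1
  have hTp : (0:ℝ) < (Tk τ T M k)^(2*m) := pow_pos hTk _
  rw [div_le_iff₀ hTp] at h1
  refine le_of_pow_le_pow_left₀ two_ne_zero
    (mul_nonneg (pow_nonneg hTk.le m) (normm_nonneg _ _ _ _ _ _)) ?_
  calc (seqNorm0 τ k M ((Dq τ)^[k] f))^2 ≤ (normm τ T M k m f)^2 * (Tk τ T M k)^(2*m) := h1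
    _ = ((Tk τ T M k)^m * normm τ T M k m f)^2 := by
        rw [mul_pow, ← pow_mul]
        ring

lemma normm_mono {τ T : ℝ} (M k m : ℕ) (f : ℕ → X) :
    normm τ T M (k+1) m f ≤ normm τ T M k (m+1) f := by
  refine Real.sqrt_le_sqrt ?_
  have e : ∀ j ∈ Finset.Icc (k+1) (k+1+m),
      (seqNorm0 τ j M ((Dq τ)^[j] f))^2 / (Tk τ T M j)^(2*(m+(k+1)-j))
      = (seqNorm0 τ j M ((Dq τ)^[j] f))^2 / (Tk τ T M j)^(2*((m+1)+k-j)) := by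
    intro j hj
    simp only [Finset.mem_Icc] at hj
    rw [show 2*(m+(k+1)-j) = 2*((m+1)+k-j) by omega]
  rw [Finset.sum_congr rfl e]
  refine Finset.sum_le_sum_of_subset_of_nonneg ?_ fun j _ _ => normm_term_nonneg M f j _
  intro x hx
  simp only [Finset.mem_Icc] at hx ⊢
  omega

/-! ### the chain inequality -/

lemma chain {τ T : ℝ} (hτ : 0 < τ) (M : ℕ) (f : ℕ → X) :
    ∀ m : ℕ, 1 ≤ m → ∀ r : ℕ, r + m ≤ M →
    (seqNorm0 τ (r+1) M ((Dq τ)^[r+1] f))^m ≤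
      kap^(m*(m-1)) * (seqNorm0 τ r M ((Dq τ)^[r] f))^(m-1) * normm τ T M (r+1) (m-1) f := by
  intro m
  induction m with
  | zero => omega
  | succ m ih =>
    intro _ r hrM
    rcases Nat.eq_or_lt_of_le (show 1 ≤ m+1 by omega) with h1|h1
    · -- base case m+1 = 1
      have hm0 : m = 0 := by omega
      subst hm0
      have e : normm τ T M (r+1) 0 f = seqNorm0 τ (r+1) M ((Dq τ)^[r+1] f) := by
        rw [normm, Nat.add_zero, Finset.Icc_self, Finset.sum_singleton,
          show 2*(0+(r+1)-(r+1)) = 0 by omega, pow_zero, div_one]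
        exact Real.sqrt_sq (seqNorm0_nonneg _ _ _ _)
      simp only [Nat.sub_self, pow_one, pow_zero, mul_one, one_mul, Nat.mul_zero]
      rw [e]
      norm_num
    · -- inductive step : m ≥ 1
      have hm : 1 ≤ m := by omega
      set g : ℕ → X := (Dq τ)^[r] f with hg
      have hg1 : (Dq τ)^[r+1] f = Dq τ g := Function.iterate_succ_apply' (Dq τ) r f
      have hg2 : (Dq τ)^[r+2] f = Dq τ (Dq τ g) := by
        rw [show r+2 = (r+1)+1 from rfl, Function.iterate_succ_apply' (Dq τ) (r+1) f, hg1]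
      set u := seqNorm0 τ (r+1) M (Dq τ g) with hu
      set a0 := seqNorm0 τ r M g with ha0
      set a2 := seqNorm0 τ (r+2) M (Dq τ (Dq τ g)) with ha2
      set B := normm τ T M (r+1) m f with hB
      set Tr1 := ((M:ℝ) - (r:ℝ)) * τ with hTr1
      have hrM1 : r + 1 ≤ M := by omega
      have hrM2 : r + 2 ≤ M := by omega
      have hMr : (r:ℝ) < (M:ℝ) := by exact_mod_cast by omega
      have hTr1pos : 0 < Tr1 := by
        rw [hTr1]
        have h0 : (0:ℝ) < (M:ℝ)-r := by linarith
        exact mul_pos h0 hτ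
      have hun : 0 ≤ u := seqNorm0_nonneg _ _ _ _
      have ha0n : 0 ≤ a0 := seqNorm0_nonneg _ _ _ _
      have ha2n : 0 ≤ a2 := seqNorm0_nonneg _ _ _ _
      have hBn : 0 ≤ B := normm_nonneg _ _ _ _ _ _
      -- h1 : summation by parts + loc_max
      have hparts := parts hτ M r hrM1 g
      have hlocg : ∀ n, n ∈ Finset.Icc r M →
          ‖g n‖^2 ≤ a0^2/Tr1 + 2*(a0*u) := by
        intro n hn
        have h := loc_max hτ M r (by omega) g n hn
        have hle : a0^2/(((M:ℝ)+1-(r:ℝ))*τ) + 2*a0*u ≤ a0^2/Tr1 + 2*(a0*u) := by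
          have hd : Tr1 ≤ ((M:ℝ)+1-(r:ℝ))*τ := by
            rw [hTr1]
            have : (M:ℝ) - r ≤ (M:ℝ)+1-r := by linarith
            exact mul_le_mul_of_nonneg_right this hτ.le
          have := div_le_div_of_nonneg_left (sq_nonneg a0) hTr1pos hd
          linarith
        exact le_trans h hle
      have hlocD : ∀ n, n ∈ Finset.Icc (r+1) M →
          ‖Dq τ g n‖^2 ≤ u^2/Tr1 + 2*(u*a2) := by
        intro n hn
        have h := loc_max hτ M (r+1) (by omega) (Dq τ g) n hn
        have he : ((M:ℝ)+1-((r+1:ℕ):ℝ))*τ = Tr1 := by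
          rw [hTr1]; push_cast; ring
        rw [he] at h
        have e2 : seqNorm0 τ (r+1+1) M (Dq τ (Dq τ g)) = a2 := by rw [ha2]
        rw [e2] at h
        linarith [h]
      have sqrtle : ∀ x y : ℝ, 0 ≤ y → x^2 ≤ y → x ≤ Real.sqrt y := by
        intro x y hy hxy
        rcases le_or_gt x 0 with h|h
        · exact le_trans h (Real.sqrt_nonneg _)
        · calc x = Real.sqrt (x^2) := (Real.sqrt_sq h.le).symm
            _ ≤ Real.sqrt y := Real.sqrt_le_sqrt hxy
      have hXnn : 0 ≤ a0^2/Tr1 + 2*(a0*u) := by positivity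
      have hYnn : 0 ≤ u^2/Tr1 + 2*(u*a2) := by positivity
      have hgM : ‖g M‖ ≤ Real.sqrt (a0^2/Tr1 + 2*(a0*u)) :=
        sqrtle _ _ hXnn (hlocg M (by simp [Finset.mem_Icc]; omega))
      have hgr : ‖g r‖ ≤ Real.sqrt (a0^2/Tr1 + 2*(a0*u)) :=
        sqrtle _ _ hXnn (hlocg r (by simp [Finset.mem_Icc]; omega))
      have hDM : ‖Dq τ g M‖ ≤ Real.sqrt (u^2/Tr1 + 2*(u*a2)) :=
        sqrtle _ _ hYnn (hlocD M (by simp [Finset.mem_Icc]; omega))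
      have hDr : ‖Dq τ g (r+1)‖ ≤ Real.sqrt (u^2/Tr1 + 2*(u*a2)) :=
        sqrtle _ _ hYnn (hlocD (r+1) (by simp [Finset.mem_Icc]; omega))
      have hcore1 : u^2 ≤ a0*a2
          + 2*(Real.sqrt (a0^2/Tr1 + 2*(a0*u)) * Real.sqrt (u^2/Tr1 + 2*(u*a2))) := by
        rw [← hu, ← ha0, ← ha2] at hparts
        have t1 : ‖g M‖ * ‖Dq τ g M‖ ≤
            Real.sqrt (a0^2/Tr1 + 2*(a0*u)) * Real.sqrt (u^2/Tr1 + 2*(u*a2)) :=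
          mul_le_mul hgM hDM (norm_nonneg _) (Real.sqrt_nonneg _)
        have t2 : ‖g r‖ * ‖Dq τ g (r+1)‖ ≤
            Real.sqrt (a0^2/Tr1 + 2*(a0*u)) * Real.sqrt (u^2/Tr1 + 2*(u*a2)) :=
          mul_le_mul hgr hDr (norm_nonneg _) (Real.sqrt_nonneg _)
        linarith [hparts]
      -- h4 : induction hypothesis at level r+1
      have hIH := ih hm (r+1) (by omega)
      rw [hg2, hg1] at hIH
      have hmono : normm τ T M (r+2) (m-1) f ≤ B := by
        rw [hB]
        have := normm_mono (τ := τ) (T := T) M (r+1) (m-1) f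
        rwa [show m-1+1 = m by omega] at this
      have hcore4 : a2^m ≤ kap^(m*(m-1)) * u^(m-1) * B := by
        refine le_trans hIH ?_
        refine mul_le_mul_of_nonneg_left hmono ?_
        exact mul_nonneg (pow_nonneg kap_nonneg _) (pow_nonneg hun _)
      -- h5 : single-term bound
      have hcore5 : u ≤ Tr1^m * B := by
        have h := seqNorm0_le_normm (T := T) hτ m f (by omega : 1 ≤ r+1) hrM1
          (Tk_succ_pos hτ hrM1)
        rw [Tk_succ, hg1] at h
        exact h
      -- apply core with m-1
      obtain ⟨m', rfl⟩ : ∃ m', m = m'+1 := ⟨m-1, by omega⟩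
      have hc := core m' u a0 a2 B Tr1 hun ha0n ha2n hBn hTr1pos hcore1
        (by rwa [show m'+1-1 = m' by omega] at hcore4)
        hcore5
      simp only [Nat.add_sub_cancel]
      rw [hg1]
      exact hc

end Hilbert

/-- Lemma 4.8: discrete Agmon-type maximum bound for zero-mean sequences:
`‖f_n‖ ≤ c_A c_m^{1/2} ‖f‖₀^{1−1/(2m)} ‖D¹f‖_{m−1}^{1/(2m)}` for `1 ≤ m ≤ M−1`
(with `c_1 = 1`, which is the value of `cConst 1`). -/
theorem general_agmon_max
    {X : Type*} [NormedAddCommGroup X] [InnerProductSpace ℝ X] [CompleteSpace X]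
    (T : ℝ) (hT : 0 < T) (M : ℕ) (hM : 0 < M) (τ : ℝ) (hτ : τ = T / M)
    (f : ℕ → X) (hmean : ∑ n ∈ Finset.range (M + 1), f n = 0)
    (m : ℕ) (hm : 1 ≤ m) (hmM : m ≤ M - 1)
    (n : ℕ) (hn : n ≤ M) :
    ‖f n‖ ≤ cA * (cConst m) ^ ((1:ℝ)/2) *
      (seqNorm0 τ 0 M f) ^ (1 - 1/(2*(m:ℝ))) *
        (normm τ T M 1 (m-1) f) ^ (1/(2*(m:ℝ))) := by
  have hMpos : (0:ℝ) < (M:ℝ) := by exact_mod_cast hM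
  have hτpos : 0 < τ := by rw [hτ]; positivity
  have hag := agmon0 hτpos M f hmean n hn
  have hch := chain (T := T) hτpos M f m hm 0 (by omega)
  simp only [zero_add, Function.iterate_one, Function.iterate_zero_apply] at hch
  set A := seqNorm0 τ 0 M f with hA
  set a1 := seqNorm0 τ 1 M (Dq τ f) with ha1
  set B := normm τ T M 1 (m-1) f with hBdef
  have hAn : 0 ≤ A := seqNorm0_nonneg _ _ _ _
  have ha1n : 0 ≤ a1 := seqNorm0_nonneg _ _ _ _
  have hBn : 0 ≤ B := normm_nonneg _ _ _ _ _ _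
  have hcn : 0 ≤ cConst m := le_trans zero_le_one (one_le_cConst m hm)
  have hkapc : kap^(m*(m-1)) ≤ (cConst m)^m := by
    have h1 : (kap^(m-1))^m ≤ (cConst m)^m :=
      pow_le_pow_left₀ (pow_nonneg kap_nonneg _) (kap_pow_le_cConst m hm) m
    rw [← pow_mul] at h1
    rw [show m*(m-1) = (m-1)*m by ring]
    exact h1
  have key : ‖f n‖^(2*m) ≤ cA^(2*m) * (cConst m)^m * A^(2*m-1) * B := by
    calc ‖f n‖^(2*m) = (‖f n‖^2)^m := by rw [← pow_mul]
      _ ≤ (cA^2 * (A*a1))^m := pow_le_pow_left₀ (sq_nonneg _) hag m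
      _ = cA^(2*m) * A^m * a1^m := by rw [mul_pow, mul_pow, ← pow_mul]; ring
      _ ≤ cA^(2*m) * A^m * (kap^(m*(m-1)) * A^(m-1) * B) := by
          refine mul_le_mul_of_nonneg_left hch ?_
          exact mul_nonneg (pow_nonneg cA_nonneg _) (pow_nonneg hAn _)
      _ ≤ cA^(2*m) * A^m * ((cConst m)^m * A^(m-1) * B) := by
          refine mul_le_mul_of_nonneg_left ?_
            (mul_nonneg (pow_nonneg cA_nonneg _) (pow_nonneg hAn _))
          exact mul_le_mul_of_nonneg_right
            (mul_le_mul_of_nonneg_right hkapc (pow_nonneg hAn _)) hBn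
      _ = cA^(2*m) * (cConst m)^m * A^(2*m-1) * B := by
          rw [show 2*m-1 = m + (m-1) by omega, pow_add]
          ring
  have f2 : ((cConst m) ^ ((1:ℝ)/2))^(2*m) = (cConst m)^m := by
    rw [← Real.rpow_natCast ((cConst m) ^ ((1:ℝ)/2)) (2*m), ← Real.rpow_mul hcn]
    rw [show (1:ℝ)/2 * ((2*m:ℕ):ℝ) = ((m:ℕ):ℝ) by push_cast; ring]
    exact Real.rpow_natCast _ m
  have f3 : (A ^ (1 - 1/(2*(m:ℝ))))^(2*m) = A^(2*m-1) := by
    rw [← Real.rpow_natCast (A ^ (1 - 1/(2*(m:ℝ)))) (2*m), ← Real.rpow_mul hAn]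
    rw [show (1 - 1/(2*(m:ℝ))) * ((2*m:ℕ):ℝ) = ((2*m-1:ℕ):ℝ) by
      push_cast [Nat.cast_sub (by omega : 1 ≤ 2*m)]
      have : (m:ℝ) ≠ 0 := Nat.cast_ne_zero.2 (by omega)
      field_simp]
    exact Real.rpow_natCast _ _
  have f4 : (B ^ (1/(2*(m:ℝ))))^(2*m) = B := by
    rw [← Real.rpow_natCast (B ^ (1/(2*(m:ℝ)))) (2*m), ← Real.rpow_mul hBn]
    rw [show (1/(2*(m:ℝ))) * ((2*m:ℕ):ℝ) = 1 by
      have : (m:ℝ) ≠ 0 := Nat.cast_ne_zero.2 (by omega)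
      push_cast
      field_simp]
    exact Real.rpow_one B
  have hRn : 0 ≤ cA * (cConst m) ^ ((1:ℝ)/2) * A ^ (1 - 1/(2*(m:ℝ))) * B ^ (1/(2*(m:ℝ))) := by
    refine mul_nonneg (mul_nonneg (mul_nonneg cA_nonneg ?_) ?_) ?_
    · exact Real.rpow_nonneg hcn _
    · exact Real.rpow_nonneg hAn _
    · exact Real.rpow_nonneg hBn _
  refine le_of_pow_le_pow_left₀ (by omega : 2*m ≠ 0) hRn ?_
  calc ‖f n‖^(2*m) ≤ cA^(2*m) * (cConst m)^m * A^(2*m-1) * B := key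
    _ = (cA * (cConst m) ^ ((1:ℝ)/2) * A ^ (1 - 1/(2*(m:ℝ))) * B ^ (1/(2*(m:ℝ))))^(2*m) := by
        rw [mul_pow, mul_pow, mul_pow, f2, f3, f4]
end

section
/- Let f : ℝ → X be T-periodic and m times continuously differentiable, where m is an integer with 1 ≤ m ≤ M−1. Let f_n = f(t_n) for n ∈ ℤ (an M-periodic sequence). Then: (i) ‖D^1 f‖_0 ≤ 2^{(m−1)/m} · m^{1/m} · ‖f‖_0^{(m−1)/m} · (∫_0^T ‖∂_t^m f(t)‖² dt)^{1/(2m)}; and (ii) for every 1 ≤ n ≤ M, ‖f_n‖ ≤ 2^{(m−1)/(2m)} · m^{1/(2m)} · c_A · ‖f‖_0^{1−1/(2m)} · (∫_0^T ‖∂_t^m f(t)‖² dt)^{1/(4m)} + ‖f‖_0/√T, where c_A = √(2 + √2/2). If moreover f_1 + ⋯ + f_M = 0, the term ‖f‖_0/√T in (ii) can be omitted. -/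
/-- backward difference quotient of a bi-infinite sequence. -/
noncomputable def DqZ {X : Type*} [NormedAddCommGroup X] [NormedSpace ℝ X] (τ : ℝ) (f : ℤ → X) : ℤ → X :=
  fun n => τ⁻¹ • (f n - f (n - 1))

/-- discrete `L²` norm `(τ Σ_{n=1}^{M} ‖f n‖²)^{1/2}` over one period. -/
noncomputable def seqNorm0Z {X : Type*} [NormedAddCommGroup X]
    (τ : ℝ) (M : ℕ) (f : ℤ → X) : ℝ :=
  Real.sqrt (τ * ∑ n ∈ Finset.Icc (1:ℤ) (M:ℤ), ‖f n‖^2)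

set_option linter.unusedSectionVars false
set_option maxHeartbeats 1000000

open Finset in
private lemma thm49_Ioc_split {β : Type*} [AddCommMonoid β] (u : ℤ → β) {a b c : ℤ}
    (hab : a ≤ b) (hbc : b ≤ c) :
    ∑ n ∈ Finset.Ioc a c, u n = (∑ n ∈ Finset.Ioc a b, u n) + ∑ n ∈ Finset.Ioc b c, u n := by
  rw [← Finset.sum_union ?disj, Finset.Ioc_union_Ioc_eq_Ioc hab hbc]
  case disj =>
    rw [Finset.disjoint_left]
    intro x hx hx'
    simp only [Finset.mem_Ioc] at hx hx'
    omega

private lemma thm49_Ioc_singleton (b : ℤ) : Finset.Ioc b (b + 1) = {b + 1} := by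
  ext x; simp only [Finset.mem_Ioc, Finset.mem_singleton]; omega

private lemma thm49_sum_shift {β : Type*} [AddCommMonoid β] (M : ℕ) (hM : 0 < M)
    (u : ℤ → β) (hu : ∀ n : ℤ, u (n + M) = u n) :
    ∀ a : ℤ, ∑ n ∈ Finset.Ioc a (a + M), u n = ∑ n ∈ Finset.Ioc 0 (M : ℤ), u n := by
  have hM1 : (1 : ℤ) ≤ M := by exact_mod_cast hM
  have step : ∀ a : ℤ, ∑ n ∈ Finset.Ioc (a + 1) (a + 1 + M), u n
      = ∑ n ∈ Finset.Ioc a (a + M), u n := by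
    intro a
    have h1 : ∑ n ∈ Finset.Ioc a (a + M), u n
        = u (a + 1) + ∑ n ∈ Finset.Ioc (a + 1) (a + M), u n := by
      rw [thm49_Ioc_split u (b := a + 1) (by omega) (by omega), thm49_Ioc_singleton, Finset.sum_singleton]
    have h2 : ∑ n ∈ Finset.Ioc (a + 1) (a + 1 + M), u n
        = (∑ n ∈ Finset.Ioc (a + 1) (a + M), u n) + u (a + M + 1) := by
      rw [show a + 1 + (M : ℤ) = (a + M) + 1 by ring,
        thm49_Ioc_split u (b := a + M) (by omega) (by omega), thm49_Ioc_singleton,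
        Finset.sum_singleton]
    have h3 : u (a + M + 1) = u (a + 1) := by
      have := hu (a + 1); rwa [show a + 1 + (M : ℤ) = a + M + 1 by ring] at this
    rw [h2, h3, h1, add_comm]
  intro a
  induction a using Int.induction_on with
  | zero => norm_num
  | succ k ih => rw [show ((k : ℤ) + 1) = (k : ℤ) + 1 by ring, step (k : ℤ)]; exact ih
  | pred k ih =>
    have e := step (-(k : ℤ) - 1)
    rw [show -(k : ℤ) - 1 + 1 = -(k : ℤ) by ring] at e
    rw [← e]; exact ih

private lemma thm49_telescope_nat {β : Type*} [AddCommGroup β] (v : ℤ → β) (a : ℤ) :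
    ∀ k : ℕ, ∑ n ∈ Finset.Ioc a (a + k), (v n - v (n - 1)) = v (a + k) - v a := by
  intro k
  induction k with
  | zero => simp
  | succ k ih =>
    rw [show ((k + 1 : ℕ) : ℤ) = (k : ℤ) + 1 by push_cast; ring,
      show a + ((k : ℤ) + 1) = (a + k) + 1 by ring,
      thm49_Ioc_split _ (b := a + k) (by omega) (by omega), ih, thm49_Ioc_singleton,
      Finset.sum_singleton]
    simp only [add_sub_cancel_right]
    abel

private lemma thm49_telescope {β : Type*} [AddCommGroup β] (v : ℤ → β) {a b : ℤ} (h : a ≤ b) :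
    ∑ n ∈ Finset.Ioc a b, (v n - v (n - 1)) = v b - v a := by
  obtain ⟨k, rfl⟩ : ∃ k : ℕ, b = a + k := ⟨(b - a).toNat, by omega⟩
  exact thm49_telescope_nat v a k

private lemma thm49_cs (s : Finset ℤ) (x y : ℤ → ℝ) (hx : ∀ i, 0 ≤ x i) (hy : ∀ i, 0 ≤ y i) :
    ∑ i ∈ s, x i * y i ≤ Real.sqrt (∑ i ∈ s, x i ^ 2) * Real.sqrt (∑ i ∈ s, y i ^ 2) := by
  have h := Finset.sum_mul_sq_le_sq_mul_sq s x y
  have h0 : 0 ≤ ∑ i ∈ s, x i * y i :=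
    Finset.sum_nonneg fun i _ => mul_nonneg (hx i) (hy i)
  calc ∑ i ∈ s, x i * y i = Real.sqrt ((∑ i ∈ s, x i * y i) ^ 2) := (Real.sqrt_sq h0).symm
    _ ≤ Real.sqrt ((∑ i ∈ s, x i ^ 2) * ∑ i ∈ s, y i ^ 2) := Real.sqrt_le_sqrt h
    _ = _ := Real.sqrt_mul (Finset.sum_nonneg fun i _ => sq_nonneg _) _

section Discrete

variable {X : Type*} [NormedAddCommGroup X] [InnerProductSpace ℝ X]
  {τ : ℝ} {M : ℕ}

private lemma thm49_DqZ_periodic (τ : ℝ) (M : ℕ) {s : ℤ → X}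
    (hp : ∀ n : ℤ, s (n + M) = s n) : ∀ n : ℤ, DqZ τ s (n + M) = DqZ τ s n := by
  intro n
  simp only [DqZ]
  rw [hp, show n + (M : ℤ) - 1 = (n - 1) + M by ring, hp]

private lemma thm49_DqZ_iter_periodic (τ : ℝ) (M : ℕ) {s : ℤ → X}
    (hp : ∀ n : ℤ, s (n + M) = s n) (k : ℕ) :
    ∀ n : ℤ, (DqZ τ)^[k] s (n + M) = (DqZ τ)^[k] s n := by
  induction k with
  | zero => exact hp
  | succ k ih =>
    intro n
    rw [Function.iterate_succ_apply']
    exact thm49_DqZ_periodic τ M ih n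

/-- Summation by parts and Cauchy–Schwarz: `A k ≤ √(A (k-1)) √(A (k+1))`. -/
private lemma thm49_sbp (hτ : 0 < τ) (hM : 0 < M) (g : ℤ → X)
    (hg : ∀ n : ℤ, g (n + M) = g n) :
    τ * ∑ n ∈ Finset.Ioc 0 (M : ℤ), ‖DqZ τ g n‖ ^ 2 ≤
      Real.sqrt (τ * ∑ n ∈ Finset.Ioc 0 (M : ℤ), ‖g n‖ ^ 2) *
      Real.sqrt (τ * ∑ n ∈ Finset.Ioc 0 (M : ℤ), ‖DqZ τ (DqZ τ g) n‖ ^ 2) := by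
  set h := DqZ τ g with hh
  set w := DqZ τ h with hw
  have hhp : ∀ n : ℤ, h (n + M) = h n := thm49_DqZ_periodic τ M hg
  have hwp : ∀ n : ℤ, w (n + M) = w n := thm49_DqZ_periodic τ M hhp
  -- reindexing: ∑ ⟪g (n-1), h n⟫ = ∑ ⟪g n, h (n+1)⟫ over Ioc 0 M
  have reindex : ∑ n ∈ Finset.Ioc (0:ℤ) (M:ℤ), (inner ℝ (g (n-1)) (h n) : ℝ)
      = ∑ n ∈ Finset.Ioc (0:ℤ) (M:ℤ), (inner ℝ (g n) (h (n+1)) : ℝ) := by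
    have e1 : ∑ n ∈ Finset.Ioc (0:ℤ) (M:ℤ), (inner ℝ (g (n-1)) (h n) : ℝ)
        = ∑ n ∈ Finset.Ioc (-1:ℤ) ((M:ℤ)-1), (inner ℝ (g n) (h (n+1)) : ℝ) := by
      rw [show ((-1:ℤ)) = 0 + (-1) by ring, show (M:ℤ) - 1 = (M:ℤ) + (-1) by ring,
        ← Finset.map_add_right_Ioc, Finset.sum_map]
      simp [addRightEmbedding, sub_eq_add_neg]
    have e2 : ∑ n ∈ Finset.Ioc (-1:ℤ) ((M:ℤ)-1), (inner ℝ (g n) (h (n+1)) : ℝ)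
        = ∑ n ∈ Finset.Ioc (0:ℤ) (M:ℤ), (inner ℝ (g n) (h (n+1)) : ℝ) := by
      have := thm49_sum_shift M hM (fun n => (inner ℝ (g n) (h (n+1)) : ℝ))
        (fun n => by rw [hg, show n + (M:ℤ) + 1 = (n+1) + M by ring, hhp]) (-1)
      rwa [show (-1:ℤ) + (M:ℤ) = (M:ℤ) - 1 by ring] at this
    rw [e1, e2]
  have reindex2 : ∑ n ∈ Finset.Ioc (0:ℤ) (M:ℤ), ‖w (n+1)‖ ^ 2
      = ∑ n ∈ Finset.Ioc (0:ℤ) (M:ℤ), ‖w n‖ ^ 2 := by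
    have e1 : ∑ n ∈ Finset.Ioc (0:ℤ) (M:ℤ), ‖w (n+1)‖ ^ 2
        = ∑ n ∈ Finset.Ioc ((0:ℤ)+1) ((M:ℤ)+1), ‖w n‖ ^ 2 := by
      rw [← Finset.map_add_right_Ioc, Finset.sum_map]
      simp [addRightEmbedding]
    have e2 := thm49_sum_shift M hM (fun n => ‖w n‖ ^ 2)
      (fun n => by rw [hwp]) 1
    rw [e1, show (0:ℤ)+1 = 1 by ring, show (M:ℤ)+1 = 1 + M by ring, e2]
  -- the key identity
  have key : ∑ n ∈ Finset.Ioc (0:ℤ) (M:ℤ), ‖h n‖ ^ 2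
      = - ∑ n ∈ Finset.Ioc (0:ℤ) (M:ℤ), (inner ℝ (g n) (w (n+1)) : ℝ) := by
    have expand : ∀ n : ℤ, ‖h n‖ ^ 2
        = τ⁻¹ * ((inner ℝ (g n) (h n) : ℝ) - inner ℝ (g (n-1)) (h n)) := by
      intro n
      rw [← real_inner_self_eq_norm_sq]
      nth_rewrite 1 [hh]
      simp only [DqZ, inner_smul_left, inner_sub_left, RCLike.conj_to_real]
    have expand2 : ∀ n : ℤ, (inner ℝ (g n) (w (n+1)) : ℝ)
        = τ⁻¹ * ((inner ℝ (g n) (h (n+1)) : ℝ) - inner ℝ (g n) (h n)) := by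
      intro n
      rw [hw]
      simp only [DqZ, inner_smul_right, inner_sub_right, add_sub_cancel_right]
    calc ∑ n ∈ Finset.Ioc (0:ℤ) (M:ℤ), ‖h n‖ ^ 2
        = τ⁻¹ * ((∑ n ∈ Finset.Ioc (0:ℤ) (M:ℤ), (inner ℝ (g n) (h n) : ℝ))
            - ∑ n ∈ Finset.Ioc (0:ℤ) (M:ℤ), (inner ℝ (g (n-1)) (h n) : ℝ)) := by
          simp only [expand]
          rw [← Finset.sum_sub_distrib, ← Finset.mul_sum]
      _ = τ⁻¹ * ((∑ n ∈ Finset.Ioc (0:ℤ) (M:ℤ), (inner ℝ (g n) (h n) : ℝ))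
            - ∑ n ∈ Finset.Ioc (0:ℤ) (M:ℤ), (inner ℝ (g n) (h (n+1)) : ℝ)) := by rw [reindex]
      _ = - ∑ n ∈ Finset.Ioc (0:ℤ) (M:ℤ), (inner ℝ (g n) (w (n+1)) : ℝ) := by
          simp only [expand2]
          rw [← Finset.sum_sub_distrib, Finset.mul_sum, ← Finset.sum_neg_distrib]
          exact Finset.sum_congr rfl fun n _ => by ring
  -- put everything together
  have step1 : ∑ n ∈ Finset.Ioc (0:ℤ) (M:ℤ), ‖h n‖ ^ 2
      ≤ ∑ n ∈ Finset.Ioc (0:ℤ) (M:ℤ), ‖g n‖ * ‖w (n+1)‖ := by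
    rw [key, ← Finset.sum_neg_distrib]
    refine Finset.sum_le_sum fun n _ => ?_
    exact le_trans (neg_le_abs _) (le_trans (abs_real_inner_le_norm _ _) le_rfl)
  have step2 : ∑ n ∈ Finset.Ioc (0:ℤ) (M:ℤ), ‖g n‖ * ‖w (n+1)‖
      ≤ Real.sqrt (∑ n ∈ Finset.Ioc (0:ℤ) (M:ℤ), ‖g n‖ ^ 2) *
        Real.sqrt (∑ n ∈ Finset.Ioc (0:ℤ) (M:ℤ), ‖w (n+1)‖ ^ 2) :=
    thm49_cs _ _ _ (fun i => norm_nonneg _) (fun i => norm_nonneg _)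
  rw [reindex2] at step2
  have hP : (0:ℝ) ≤ ∑ n ∈ Finset.Ioc (0:ℤ) (M:ℤ), ‖g n‖ ^ 2 :=
    Finset.sum_nonneg fun i _ => sq_nonneg _
  have hQ : (0:ℝ) ≤ ∑ n ∈ Finset.Ioc (0:ℤ) (M:ℤ), ‖w n‖ ^ 2 :=
    Finset.sum_nonneg fun i _ => sq_nonneg _
  calc τ * ∑ n ∈ Finset.Ioc (0:ℤ) (M:ℤ), ‖h n‖ ^ 2
      ≤ τ * (Real.sqrt (∑ n ∈ Finset.Ioc (0:ℤ) (M:ℤ), ‖g n‖ ^ 2) *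
        Real.sqrt (∑ n ∈ Finset.Ioc (0:ℤ) (M:ℤ), ‖w n‖ ^ 2)) :=
        mul_le_mul_of_nonneg_left (le_trans step1 step2) hτ.le
    _ = Real.sqrt (τ * ∑ n ∈ Finset.Ioc (0:ℤ) (M:ℤ), ‖g n‖ ^ 2) *
        Real.sqrt (τ * ∑ n ∈ Finset.Ioc (0:ℤ) (M:ℤ), ‖DqZ τ (DqZ τ g) n‖ ^ 2) := by
        rw [Real.sqrt_mul hτ.le, Real.sqrt_mul hτ.le, ← hw]
        nth_rewrite 1 [← Real.mul_self_sqrt hτ.le]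
        ring

end Discrete

private lemma thm49_logconvex (b : ℕ → ℝ) (hnn : ∀ k, 0 ≤ b k)
    (hlc : ∀ k, b (k + 1) ^ 2 ≤ b k * b (k + 2)) :
    ∀ k : ℕ, b 1 ^ (k + 1) ≤ b 0 ^ k * b (k + 1) := by
  have ratio : ∀ k : ℕ, b 1 * b (k + 1) ≤ b 0 * b (k + 2) := by
    intro k
    induction k with
    | zero => simpa [sq] using hlc 0
    | succ k ih =>
      rcases eq_or_lt_of_le (hnn (k + 2)) with h0 | hpos
      · rw [← h0, mul_zero]
        exact mul_nonneg (hnn 0) (hnn (k + 3))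
      · have h1 : b 1 * b (k + 2) * b (k + 2) ≤ b 0 * b (k + 3) * b (k + 2) := by
          calc b 1 * b (k + 2) * b (k + 2) = b 1 * b (k + 2) ^ 2 := by ring
            _ ≤ b 1 * (b (k + 1) * b (k + 3)) :=
                mul_le_mul_of_nonneg_left (hlc (k + 1)) (hnn 1)
            _ = (b 1 * b (k + 1)) * b (k + 3) := by ring
            _ ≤ (b 0 * b (k + 2)) * b (k + 3) :=
                mul_le_mul_of_nonneg_right ih (hnn (k + 3))
            _ = b 0 * b (k + 3) * b (k + 2) := by ring
        exact le_of_mul_le_mul_right h1 hpos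
  intro k
  induction k with
  | zero => simp
  | succ k ih =>
    calc b 1 ^ (k + 2) = b 1 ^ (k + 1) * b 1 := by ring
      _ ≤ (b 0 ^ k * b (k + 1)) * b 1 := mul_le_mul_of_nonneg_right ih (hnn 1)
      _ = b 0 ^ k * (b 1 * b (k + 1)) := by ring
      _ ≤ b 0 ^ k * (b 0 * b (k + 2)) :=
          mul_le_mul_of_nonneg_left (ratio k) (pow_nonneg (hnn 0) k)
      _ = b 0 ^ (k + 1) * b (k + 2) := by ring

section Agmon

variable {X : Type*} [NormedAddCommGroup X] [InnerProductSpace ℝ X] {τ : ℝ} {M : ℕ}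

private lemma thm49_agmon (hτ : 0 < τ) (hM : 0 < M)
    (s : ℤ → X) (hp : ∀ n : ℤ, s (n + M) = s n) :
    (∀ n ∈ Finset.Ioc (0:ℤ) (M:ℤ), ‖s n‖ ^ 2 ≤
      Real.sqrt (τ * ∑ j ∈ Finset.Ioc (0:ℤ) (M:ℤ), ‖s j‖ ^ 2) *
        Real.sqrt (τ * ∑ j ∈ Finset.Ioc (0:ℤ) (M:ℤ), ‖DqZ τ s j‖ ^ 2)
      + (τ * ∑ j ∈ Finset.Ioc (0:ℤ) (M:ℤ), ‖s j‖ ^ 2) / (τ * M)) ∧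
    ((∑ n ∈ Finset.Ioc (0:ℤ) (M:ℤ), s n = 0) →
      ∀ n ∈ Finset.Ioc (0:ℤ) (M:ℤ), ‖s n‖ ^ 2 ≤
        2 * (Real.sqrt (τ * ∑ j ∈ Finset.Ioc (0:ℤ) (M:ℤ), ‖s j‖ ^ 2) *
          Real.sqrt (τ * ∑ j ∈ Finset.Ioc (0:ℤ) (M:ℤ), ‖DqZ τ s j‖ ^ 2))) := by
  set P := ∑ j ∈ Finset.Ioc (0:ℤ) (M:ℤ), ‖s j‖ ^ 2 with hPdef
  set Q := ∑ j ∈ Finset.Ioc (0:ℤ) (M:ℤ), ‖DqZ τ s j‖ ^ 2 with hQdef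
  set N := Real.sqrt (τ * P) with hNdef
  set Dn := Real.sqrt (τ * Q) with hDdef
  have hP0 : 0 ≤ P := Finset.sum_nonneg fun _ _ => sq_nonneg _
  have hQ0 : 0 ≤ Q := Finset.sum_nonneg fun _ _ => sq_nonneg _
  have hN0 : 0 ≤ N := Real.sqrt_nonneg _
  have hD0 : 0 ≤ Dn := Real.sqrt_nonneg _
  have hNsq : N ^ 2 = τ * P := Real.sq_sqrt (mul_nonneg hτ.le hP0)
  have hDsq : Dn ^ 2 = τ * Q := Real.sq_sqrt (mul_nonneg hτ.le hQ0)
  have hMR : (0:ℝ) < M := by exact_mod_cast hM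
  have hcard : (Finset.Ioc (0:ℤ) (M:ℤ)).card = M := by rw [Int.card_Ioc]; simp
  have hssq : Real.sqrt τ * Real.sqrt τ = τ := Real.mul_self_sqrt hτ.le
  set a : ℤ → ℝ := fun j => ‖s j‖ ^ 2 with ha
  have hap : ∀ j : ℤ, a (j + M) = a j := fun j => by simp only [ha]; rw [hp]
  set d : ℤ → ℝ := fun j => a j - a (j - 1) with hd
  have hdp : ∀ j : ℤ, d (j + M) = d j := fun j => by
    simp only [hd]
    rw [hap, show j + (M:ℤ) - 1 = (j - 1) + M by ring, hap]
  set S := ∑ j ∈ Finset.Ioc (0:ℤ) (M:ℤ), |d j| with hSdef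
  have hsub : ∀ j : ℤ, ‖s j - s (j - 1)‖ = τ * ‖DqZ τ s j‖ := by
    intro j
    have : s j - s (j - 1) = τ • DqZ τ s j := by
      simp only [DqZ, smul_smul, mul_inv_cancel₀ hτ.ne', one_smul]
    rw [this, norm_smul, Real.norm_of_nonneg hτ.le]
  -- reindex of ∑ ‖s (j-1)‖²
  have reindexP : ∑ j ∈ Finset.Ioc (0:ℤ) (M:ℤ), ‖s (j - 1)‖ ^ 2 = P := by
    have e1 : ∑ j ∈ Finset.Ioc (0:ℤ) (M:ℤ), ‖s (j - 1)‖ ^ 2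
        = ∑ j ∈ Finset.Ioc ((0:ℤ) + -1) ((M:ℤ) + -1), ‖s j‖ ^ 2 := by
      rw [← Finset.map_add_right_Ioc, Finset.sum_map]
      simp [addRightEmbedding, sub_eq_add_neg]
    have e2 := thm49_sum_shift M hM (fun j => ‖s j‖ ^ 2)
      (fun j => by rw [hp]) (-1)
    rw [e1, show ((0:ℤ) + -1) = -1 by ring, show ((M:ℤ) + -1) = -1 + M by ring, e2]
  -- bound on S
  have hSbound : S ≤ 2 * (N * Dn) := by
    have hterm : ∀ j : ℤ, |d j| ≤ ‖DqZ τ s j‖ * (τ * (‖s j‖ + ‖s (j - 1)‖)) := by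
      intro j
      have inner_id : (inner ℝ (s j - s (j - 1)) (s j + s (j - 1)) : ℝ)
          = ‖s j‖ ^ 2 - ‖s (j - 1)‖ ^ 2 := by
        simp only [inner_sub_left, inner_add_right, real_inner_self_eq_norm_sq]
        rw [real_inner_comm (s (j - 1)) (s j)]
        ring
      have hdj : d j = ‖s j‖ ^ 2 - ‖s (j - 1)‖ ^ 2 := rfl
      have habs : |d j| ≤ ‖s j - s (j - 1)‖ * ‖s j + s (j - 1)‖ := by
        rw [hdj, ← inner_id]
        exact abs_real_inner_le_norm _ _
      calc |d j| ≤ ‖s j - s (j - 1)‖ * ‖s j + s (j - 1)‖ := habs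
        _ ≤ ‖s j - s (j - 1)‖ * (‖s j‖ + ‖s (j - 1)‖) :=
            mul_le_mul_of_nonneg_left (norm_add_le _ _) (norm_nonneg _)
        _ = ‖DqZ τ s j‖ * (τ * (‖s j‖ + ‖s (j - 1)‖)) := by rw [hsub]; ring
    have hcs : ∑ j ∈ Finset.Ioc (0:ℤ) (M:ℤ), ‖DqZ τ s j‖ * (τ * (‖s j‖ + ‖s (j - 1)‖))
        ≤ Real.sqrt Q * Real.sqrt
          (∑ j ∈ Finset.Ioc (0:ℤ) (M:ℤ), (τ * (‖s j‖ + ‖s (j - 1)‖)) ^ 2) :=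
      thm49_cs _ _ _ (fun i => norm_nonneg _)
        (fun i => mul_nonneg hτ.le (add_nonneg (norm_nonneg _) (norm_nonneg _)))
    have hysum : ∑ j ∈ Finset.Ioc (0:ℤ) (M:ℤ), (τ * (‖s j‖ + ‖s (j - 1)‖)) ^ 2
        ≤ (2 * τ) ^ 2 * P := by
      have hstep : ∀ j ∈ Finset.Ioc (0:ℤ) (M:ℤ), (τ * (‖s j‖ + ‖s (j - 1)‖)) ^ 2
          ≤ τ ^ 2 * (2 * ‖s j‖ ^ 2 + 2 * ‖s (j - 1)‖ ^ 2) := by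
        intro j _
        have h1 : (‖s j‖ + ‖s (j - 1)‖) ^ 2 ≤ 2 * ‖s j‖ ^ 2 + 2 * ‖s (j - 1)‖ ^ 2 := by
          nlinarith [sq_nonneg (‖s j‖ - ‖s (j - 1)‖)]
        calc (τ * (‖s j‖ + ‖s (j - 1)‖)) ^ 2 = τ ^ 2 * (‖s j‖ + ‖s (j - 1)‖) ^ 2 := by ring
          _ ≤ τ ^ 2 * (2 * ‖s j‖ ^ 2 + 2 * ‖s (j - 1)‖ ^ 2) :=
              mul_le_mul_of_nonneg_left h1 (sq_nonneg _)
      calc ∑ j ∈ Finset.Ioc (0:ℤ) (M:ℤ), (τ * (‖s j‖ + ‖s (j - 1)‖)) ^ 2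
          ≤ ∑ j ∈ Finset.Ioc (0:ℤ) (M:ℤ), τ ^ 2 * (2 * ‖s j‖ ^ 2 + 2 * ‖s (j - 1)‖ ^ 2) :=
            Finset.sum_le_sum hstep
        _ = τ ^ 2 * (2 * P + 2 * ∑ j ∈ Finset.Ioc (0:ℤ) (M:ℤ), ‖s (j - 1)‖ ^ 2) := by
            rw [← Finset.mul_sum, Finset.sum_add_distrib, ← Finset.mul_sum, ← Finset.mul_sum]
        _ = (2 * τ) ^ 2 * P := by rw [reindexP]; ring
    calc S ≤ ∑ j ∈ Finset.Ioc (0:ℤ) (M:ℤ), ‖DqZ τ s j‖ * (τ * (‖s j‖ + ‖s (j - 1)‖)) :=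
          Finset.sum_le_sum fun j _ => hterm j
      _ ≤ Real.sqrt Q * Real.sqrt
            (∑ j ∈ Finset.Ioc (0:ℤ) (M:ℤ), (τ * (‖s j‖ + ‖s (j - 1)‖)) ^ 2) := hcs
      _ ≤ Real.sqrt Q * Real.sqrt ((2 * τ) ^ 2 * P) :=
          mul_le_mul_of_nonneg_left (Real.sqrt_le_sqrt hysum) (Real.sqrt_nonneg _)
      _ = 2 * (N * Dn) := by
          rw [hNdef, hDdef, Real.sqrt_mul (by positivity) P,
            Real.sqrt_sq (by positivity : (0:ℝ) ≤ 2 * τ),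
            Real.sqrt_mul hτ.le P, Real.sqrt_mul hτ.le Q]
          linear_combination (-(2 * Real.sqrt P * Real.sqrt Q)) * hssq
  -- two-path estimate
  have two_path : ∀ k n : ℤ, k ≤ n → n ≤ k + M → 2 * (a n - a k) ≤ S := by
    intro k n hkn hnk
    have t1 : a n - a k ≤ ∑ j ∈ Finset.Ioc k n, |d j| := by
      have htel := thm49_telescope a hkn
      calc a n - a k = ∑ j ∈ Finset.Ioc k n, d j := htel.symm
        _ ≤ ∑ j ∈ Finset.Ioc k n, |d j| := Finset.sum_le_sum fun j _ => le_abs_self _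
    have t2 : a n - a k ≤ ∑ j ∈ Finset.Ioc n (k + M), |d j| := by
      have htel := thm49_telescope a hnk
      have heq : a n - a k = - ∑ j ∈ Finset.Ioc n (k + M), d j := by
        rw [htel, hap]; ring
      rw [heq, ← Finset.sum_neg_distrib]
      exact Finset.sum_le_sum fun j _ => neg_le_abs _
    have hsplit : (∑ j ∈ Finset.Ioc k n, |d j|) + ∑ j ∈ Finset.Ioc n (k + M), |d j|
        = ∑ j ∈ Finset.Ioc k (k + M), |d j| :=
      (thm49_Ioc_split _ (b := n) hkn hnk).symm
    have hshift := thm49_sum_shift M hM (fun j => |d j|)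
      (fun j => by rw [hdp]) k
    calc 2 * (a n - a k) = (a n - a k) + (a n - a k) := by ring
      _ ≤ (∑ j ∈ Finset.Ioc k n, |d j|) + ∑ j ∈ Finset.Ioc n (k + M), |d j| := add_le_add t1 t2
      _ = ∑ j ∈ Finset.Ioc k (k + M), |d j| := hsplit
      _ = S := hshift
  -- averaged bound
  have main1 : ∀ n ∈ Finset.Ioc (0:ℤ) (M:ℤ), ‖s n‖ ^ 2 ≤ N * Dn + (τ * P) / (τ * M) := by
    intro n hn
    rw [Finset.mem_Ioc] at hn
    have hak : ∀ k ∈ Finset.Ioc (0:ℤ) (M:ℤ), 2 * a n ≤ 2 * a k + S := by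
      intro k hk
      rw [Finset.mem_Ioc] at hk
      rcases le_or_gt k n with hkn | hnk
      · have := two_path k n hkn (by omega)
        linarith
      · have := two_path k (n + M) (by omega) (by omega)
        rw [hap] at this
        linarith
    have hsum : (M:ℝ) * (2 * a n) ≤ 2 * P + M * S := by
      have h1 := Finset.sum_le_sum hak
      rw [Finset.sum_const, hcard, nsmul_eq_mul] at h1
      have h2 : ∑ k ∈ Finset.Ioc (0:ℤ) (M:ℤ), (2 * a k + S) = 2 * P + (M:ℝ) * S := by
        rw [Finset.sum_add_distrib, ← Finset.mul_sum, Finset.sum_const, hcard, nsmul_eq_mul]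
      rw [h2] at h1
      exact h1
    have hfin : a n ≤ P / M + S / 2 := by
      rw [div_add_div _ _ hMR.ne' two_ne_zero, le_div_iff₀ (by positivity)]
      nlinarith [hsum]
    calc ‖s n‖ ^ 2 = a n := rfl
      _ ≤ P / M + S / 2 := hfin
      _ ≤ P / M + (2 * (N * Dn)) / 2 := by linarith [hSbound]
      _ = N * Dn + (τ * P) / (τ * M) := by
          rw [mul_div_mul_left P (M:ℝ) hτ.ne']
          ring
  refine ⟨main1, ?_⟩
  -- mean-zero case
  intro hz n hn
  have hB : ∀ p ∈ Finset.Ioc (0:ℤ) (M:ℤ), ‖s p‖ ≤ τ * (Real.sqrt M * Real.sqrt Q) := by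
    intro p hp'
    rw [Finset.mem_Ioc] at hp'
    have hR : ∑ j ∈ Finset.Ioc (0:ℤ) (M:ℤ), ‖DqZ τ s j‖ ≤ Real.sqrt M * Real.sqrt Q := by
      have hc := thm49_cs (Finset.Ioc (0:ℤ) (M:ℤ)) (fun _ => 1) (fun j => ‖DqZ τ s j‖)
        (fun _ => zero_le_one) (fun _ => norm_nonneg _)
      simpa [hcard] using hc
    have hdiff : ∀ k ∈ Finset.Ioc (0:ℤ) (M:ℤ),
        ‖s p - s k‖ ≤ τ * (Real.sqrt M * Real.sqrt Q) := by
      intro k hk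
      rw [Finset.mem_Ioc] at hk
      have key : ∀ u v : ℤ, 0 ≤ u → u ≤ v → v ≤ (M:ℤ) →
          ‖s v - s u‖ ≤ τ * (Real.sqrt M * Real.sqrt Q) := by
        intro u v hu huv hv
        have htel := (thm49_telescope s huv).symm
        calc ‖s v - s u‖ = ‖∑ j ∈ Finset.Ioc u v, (s j - s (j - 1))‖ := by rw [← htel]
          _ ≤ ∑ j ∈ Finset.Ioc u v, ‖s j - s (j - 1)‖ := norm_sum_le _ _
          _ = ∑ j ∈ Finset.Ioc u v, τ * ‖DqZ τ s j‖ :=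
              Finset.sum_congr rfl fun j _ => hsub j
          _ ≤ ∑ j ∈ Finset.Ioc (0:ℤ) (M:ℤ), τ * ‖DqZ τ s j‖ := by
              refine Finset.sum_le_sum_of_subset_of_nonneg ?_ fun j _ _ => by positivity
              intro x hx
              rw [Finset.mem_Ioc] at hx ⊢
              omega
          _ = τ * ∑ j ∈ Finset.Ioc (0:ℤ) (M:ℤ), ‖DqZ τ s j‖ := by rw [← Finset.mul_sum]
          _ ≤ τ * (Real.sqrt M * Real.sqrt Q) :=
              mul_le_mul_of_nonneg_left hR hτ.le
      rcases le_or_gt k p with h | h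
      · exact key k p (by omega) h (by omega)
      · rw [norm_sub_rev]
        exact key p k (by omega) h.le (by omega)
    have hzsum : ∑ k ∈ Finset.Ioc (0:ℤ) (M:ℤ), (s p - s k) = (M:ℝ) • s p := by
      rw [Finset.sum_sub_distrib, hz, sub_zero, Finset.sum_const, hcard]
      exact (Nat.cast_smul_eq_nsmul ℝ M (s p)).symm
    have hfin : (M:ℝ) * ‖s p‖ ≤ (M:ℝ) * (τ * (Real.sqrt M * Real.sqrt Q)) := by
      calc (M:ℝ) * ‖s p‖ = ‖(M:ℝ) • s p‖ := by
            rw [norm_smul, Real.norm_of_nonneg hMR.le]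
        _ = ‖∑ k ∈ Finset.Ioc (0:ℤ) (M:ℤ), (s p - s k)‖ := by rw [hzsum]
        _ ≤ ∑ k ∈ Finset.Ioc (0:ℤ) (M:ℤ), ‖s p - s k‖ := norm_sum_le _ _
        _ ≤ ∑ k ∈ Finset.Ioc (0:ℤ) (M:ℤ), τ * (Real.sqrt M * Real.sqrt Q) :=
            Finset.sum_le_sum hdiff
        _ = (M:ℝ) * (τ * (Real.sqrt M * Real.sqrt Q)) := by
            rw [Finset.sum_const, hcard, nsmul_eq_mul]
    exact le_of_mul_le_mul_left hfin hMR
  have hNB : N ≤ (τ * M) * Dn := by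
    have hPB : P ≤ (M:ℝ) * (τ * (Real.sqrt M * Real.sqrt Q)) ^ 2 := by
      calc P = ∑ j ∈ Finset.Ioc (0:ℤ) (M:ℤ), ‖s j‖ ^ 2 := hPdef
        _ ≤ ∑ j ∈ Finset.Ioc (0:ℤ) (M:ℤ), (τ * (Real.sqrt M * Real.sqrt Q)) ^ 2 := by
            refine Finset.sum_le_sum fun j hj => ?_
            have := hB j hj
            have h0 : (0:ℝ) ≤ ‖s j‖ := norm_nonneg _
            nlinarith
        _ = (M:ℝ) * (τ * (Real.sqrt M * Real.sqrt Q)) ^ 2 := by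
            rw [Finset.sum_const, hcard, nsmul_eq_mul]
    have hsq : N ^ 2 ≤ ((τ * M) * Dn) ^ 2 := by
      have hMQ : Real.sqrt (M:ℝ) ^ 2 = (M:ℝ) := Real.sq_sqrt hMR.le
      have hQQ : Real.sqrt Q ^ 2 = Q := Real.sq_sqrt hQ0
      rw [hNsq]
      calc τ * P ≤ τ * ((M:ℝ) * (τ * (Real.sqrt M * Real.sqrt Q)) ^ 2) :=
            mul_le_mul_of_nonneg_left hPB hτ.le
        _ = ((τ * M) * Dn) ^ 2 := by
            rw [show ((τ * M) * Dn) ^ 2 = τ^2 * M^2 * Dn^2 by ring, hDsq]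
            rw [show τ * ((M:ℝ) * (τ * (Real.sqrt M * Real.sqrt Q)) ^ 2)
              = τ^3 * (M:ℝ) * (Real.sqrt M ^ 2) * (Real.sqrt Q ^ 2) by ring, hMQ, hQQ]
            ring
    calc N = Real.sqrt (N ^ 2) := (Real.sqrt_sq hN0).symm
      _ ≤ Real.sqrt (((τ * M) * Dn) ^ 2) := Real.sqrt_le_sqrt hsq
      _ = (τ * M) * Dn := Real.sqrt_sq (by positivity)
  have h1 := main1 n hn
  have h2 : (τ * P) / (τ * M) ≤ N * Dn := by
    rw [← hNsq, div_le_iff₀ (by positivity)]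
    calc N ^ 2 = N * N := sq N
      _ ≤ N * ((τ * M) * Dn) := mul_le_mul_of_nonneg_left hNB hN0
      _ = N * Dn * (τ * M) := by ring
  linarith

end Agmon


open MeasureTheory

section Continuous

variable {X : Type*} [NormedAddCommGroup X] [InnerProductSpace ℝ X] [CompleteSpace X]

noncomputable def Dqc (τ : ℝ) (g : ℝ → X) : ℝ → X := fun t => τ⁻¹ • (g t - g (t - τ))

private lemma thm49_dqc_cont {τ : ℝ} {g : ℝ → X} (hg : Continuous g) :
    Continuous (Dqc τ g) :=
  (hg.sub (hg.comp (continuous_sub_right τ))).const_smul τ⁻¹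

private lemma thm49_dqc_iter_cont {τ : ℝ} {g : ℝ → X} (k : ℕ) (hg : Continuous g) :
    Continuous ((Dqc τ)^[k] g) := by
  induction k with
  | zero => exact hg
  | succ k ih => rw [Function.iterate_succ_apply']; exact thm49_dqc_cont ih

private lemma thm49_dqc_hasDerivAt {τ : ℝ} {g g' : ℝ → X}
    (hg : ∀ t, HasDerivAt g (g' t) t) (t : ℝ) :
    HasDerivAt (Dqc τ g) (Dqc τ g' t) t := by
  have h1 : HasDerivAt (fun u => g (u - τ)) (g' (t - τ)) t :=
    (hg (t - τ)).comp_sub_const t τ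
  exact ((hg t).sub h1).const_smul τ⁻¹

private lemma thm49_dqc_iter_hasDerivAt {τ : ℝ} {g g' : ℝ → X} (k : ℕ)
    (hg : ∀ t, HasDerivAt g (g' t) t) :
    ∀ t, HasDerivAt ((Dqc τ)^[k] g) ((Dqc τ)^[k] g' t) t := by
  induction k with
  | zero => exact hg
  | succ k ih =>
    intro t
    rw [Function.iterate_succ_apply', Function.iterate_succ_apply']
    exact thm49_dqc_hasDerivAt ih t

private lemma thm49_dqc_per {τ T : ℝ} {g : ℝ → X} (hg : ∀ t, g (t + T) = g t) :
    ∀ t, Dqc τ g (t + T) = Dqc τ g t := by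
  intro t
  simp only [Dqc]
  rw [hg, show t + T - τ = (t - τ) + T by ring, hg]

private lemma thm49_dqc_iter_per {τ T : ℝ} {g : ℝ → X} (k : ℕ) (hg : ∀ t, g (t + T) = g t) :
    ∀ t, (Dqc τ)^[k] g (t + T) = (Dqc τ)^[k] g t := by
  induction k with
  | zero => exact hg
  | succ k ih =>
    intro t
    simp only [Function.iterate_succ_apply']
    exact thm49_dqc_per ih t

private lemma thm49_iteratedDeriv_periodic {T : ℝ} {f : ℝ → X}
    (hper : ∀ t, f (t + T) = f t) (k : ℕ) :
    ∀ t, iteratedDeriv k f (t + T) = iteratedDeriv k f t := by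
  induction k with
  | zero => simpa using hper
  | succ k ih =>
    intro t
    rw [iteratedDeriv_succ]
    have h1 : deriv (fun x => iteratedDeriv k f (x + T)) t = deriv (iteratedDeriv k f) (t + T) :=
      deriv_comp_add_const _ _ _
    rw [← h1]
    congr 1
    ext x
    exact ih x

private lemma thm49_integral_cs {φ : ℝ → ℝ} (hφ : Continuous φ) (hnn : ∀ u, 0 ≤ φ u)
    {a b : ℝ} (hab : a ≤ b) :
    (∫ u in a..b, φ u) ^ 2 ≤ (b - a) * ∫ u in a..b, φ u ^ 2 := by
  set μ := MeasureTheory.volume.restrict (Set.Ioc a b) with hμ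
  have hconj : Real.HolderConjugate 2 2 := Real.HolderConjugate.two_two
  have hmeas : AEStronglyMeasurable φ μ := hφ.aestronglyMeasurable
  have hint2 : Integrable (fun x => φ x ^ 2) μ := by
    rw [hμ, ← IntegrableOn]
    exact (hφ.pow 2).integrableOn_Ioc
  have hmem1 : MemLp φ (ENNReal.ofReal 2) μ := by
    rw [show ENNReal.ofReal 2 = 2 by norm_num]
    exact (memLp_two_iff_integrable_sq hmeas).2 hint2
  have hmem2 : MemLp (fun _ : ℝ => (1:ℝ)) (ENNReal.ofReal 2) μ := memLp_const 1
  have key := integral_mul_le_Lp_mul_Lq_of_nonneg hconj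
    (ae_of_all _ hnn) (ae_of_all _ fun _ => zero_le_one) hmem1 hmem2
  simp only [mul_one] at key
  have hrpow : ∀ x : ℝ, 0 ≤ x → x ^ (2:ℝ) = x ^ (2:ℕ) := fun x hx => by
    rw [show (2:ℝ) = ((2:ℕ):ℝ) by norm_num, Real.rpow_natCast]
  have hone : (∫ _ : ℝ, (1:ℝ) ^ (2:ℝ) ∂μ) = b - a := by
    simp only [Real.one_rpow]
    rw [integral_const, smul_eq_mul, mul_one, hμ]
    simp [Real.volume_Ioc, hab, ENNReal.toReal_ofReal (by linarith : (0:ℝ) ≤ b - a)]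
  rw [hone] at key
  have hpow2 : (∫ x, φ x ^ (2:ℝ) ∂μ) = ∫ x, φ x ^ 2 ∂μ :=
    integral_congr_ae (ae_of_all _ fun x => hrpow _ (hnn x))
  rw [hpow2] at key
  have hB0 : 0 ≤ ∫ x, φ x ^ 2 ∂μ := integral_nonneg fun x => sq_nonneg _
  have hA0 : 0 ≤ ∫ x, φ x ∂μ := integral_nonneg fun x => hnn x
  have hba : 0 ≤ b - a := by linarith
  have hsq := pow_le_pow_left₀ hA0 key 2
  have h1 : ((∫ x, φ x ^ 2 ∂μ) ^ ((1:ℝ)/2)) ^ (2:ℕ) = ∫ x, φ x ^ 2 ∂μ := by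
    rw [← Real.rpow_natCast ((∫ x, φ x ^ 2 ∂μ) ^ ((1:ℝ)/2)) 2, ← Real.rpow_mul hB0]
    norm_num
  have h2 : ((b - a) ^ ((1:ℝ)/2)) ^ (2:ℕ) = b - a := by
    rw [← Real.rpow_natCast ((b - a) ^ ((1:ℝ)/2)) 2, ← Real.rpow_mul hba]
    norm_num
  have hrw : ∀ c : ℝ → ℝ, (∫ u in a..b, c u) = ∫ x, c x ∂μ := fun c => by
    rw [intervalIntegral.integral_of_le hab, hμ]
  rw [hrw φ, hrw (fun u => φ u ^ 2)]
  calc (∫ x, φ x ∂μ) ^ 2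
      ≤ ((∫ x, φ x ^ 2 ∂μ) ^ ((1:ℝ)/2) * (b - a) ^ ((1:ℝ)/2)) ^ 2 := hsq
    _ = (((∫ x, φ x ^ 2 ∂μ) ^ ((1:ℝ)/2)) ^ (2:ℕ)) * (((b - a) ^ ((1:ℝ)/2)) ^ (2:ℕ)) := by ring
    _ = (b - a) * ∫ x, φ x ^ 2 ∂μ := by rw [h1, h2]; ring

private lemma thm49_dqc_ptwise {τ : ℝ} (hτ : 0 < τ) {g g' : ℝ → X}
    (hg : ∀ t, HasDerivAt g (g' t) t) (hc : Continuous g') (t : ℝ) :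
    ‖Dqc τ g t‖ ^ 2 ≤ τ⁻¹ * ∫ u in (t - τ)..t, ‖g' u‖ ^ 2 := by
  have hint : ∀ a b : ℝ, IntervalIntegrable g' MeasureTheory.volume a b := fun a b =>
    hc.intervalIntegrable _ _
  have hftc : ∫ u in (t - τ)..t, g' u = g t - g (t - τ) :=
    intervalIntegral.integral_eq_sub_of_hasDerivAt (fun x _ => hg x) (hint _ _)
  have habτ : t - τ ≤ t := by linarith
  have h1 : ‖Dqc τ g t‖ ≤ τ⁻¹ * ∫ u in (t - τ)..t, ‖g' u‖ := by
    have he : ‖Dqc τ g t‖ = τ⁻¹ * ‖g t - g (t - τ)‖ := by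
      rw [show Dqc τ g t = τ⁻¹ • (g t - g (t - τ)) from rfl, norm_smul, Real.norm_eq_abs,
        abs_of_pos (inv_pos.2 hτ)]
    rw [he, ← hftc]
    exact mul_le_mul_of_nonneg_left
      (intervalIntegral.norm_integral_le_integral_norm habτ) (inv_pos.2 hτ).le
  have hcs := thm49_integral_cs hc.norm (fun u => norm_nonneg _) habτ
  have h2 : (∫ u in (t-τ)..t, ‖g' u‖) ^ 2 ≤ τ * ∫ u in (t-τ)..t, ‖g' u‖ ^ 2 := by
    simpa [show t - (t - τ) = τ by ring] using hcs
  calc ‖Dqc τ g t‖ ^ 2 ≤ (τ⁻¹ * ∫ u in (t-τ)..t, ‖g' u‖) ^ 2 :=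
        pow_le_pow_left₀ (norm_nonneg _) h1 2
    _ = τ⁻¹ * τ⁻¹ * (∫ u in (t-τ)..t, ‖g' u‖) ^ 2 := by ring
    _ ≤ τ⁻¹ * τ⁻¹ * (τ * ∫ u in (t-τ)..t, ‖g' u‖ ^ 2) :=
        mul_le_mul_of_nonneg_left h2 (by positivity)
    _ = τ⁻¹ * ∫ u in (t-τ)..t, ‖g' u‖ ^ 2 := by field_simp

private lemma thm49_L {τ T : ℝ} (hτ : 0 < τ) (hT : 0 < T) {h h' : ℝ → X}
    (hd : ∀ t, HasDerivAt h (h' t) t) (hc : Continuous h') (hch : Continuous h)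
    (hper : ∀ t, h' (t + T) = h' t) :
    ∫ t in (0:ℝ)..T, ‖Dqc τ h t‖ ^ 2 ≤ ∫ t in (0:ℝ)..T, ‖h' t‖ ^ 2 := by
  set p : ℝ → ℝ := fun u => ‖h' u‖ ^ 2 with hp
  have hpc : Continuous p := hc.norm.pow 2
  have hpint : ∀ a b : ℝ, IntervalIntegrable p volume a b := fun a b =>
    hpc.intervalIntegrable _ _
  set F : ℝ → ℝ := fun x => ∫ u in (0:ℝ)..x, p u with hF
  have hFc : Continuous F := intervalIntegral.continuous_primitive hpint 0
  have hFinterval : ∀ x y : ℝ, ∫ u in x..y, p u = F y - F x := by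
    intro x y
    rw [hF]
    simp only []
    rw [eq_sub_iff_add_eq, add_comm]
    exact intervalIntegral.integral_add_adjacent_intervals (hpint 0 x) (hpint x y)
  have hptw : ∀ t, ‖Dqc τ h t‖ ^ 2 ≤ τ⁻¹ * (F t - F (t - τ)) := by
    intro t
    have := thm49_dqc_ptwise hτ hd hc t
    rwa [hFinterval (t - τ) t] at this
  have hDc : Continuous (Dqc τ h) := thm49_dqc_cont hch
  have mono : ∫ t in (0:ℝ)..T, ‖Dqc τ h t‖ ^ 2
      ≤ ∫ t in (0:ℝ)..T, τ⁻¹ * (F t - F (t - τ)) := by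
    refine intervalIntegral.integral_mono_on hT.le ?_ ?_ fun x _ => hptw x
    · exact ((hDc.norm.pow 2)).intervalIntegrable _ _
    · exact (((hFc.sub (hFc.comp (continuous_sub_right τ))).const_smul τ⁻¹)).intervalIntegrable _ _
  have hFint : ∀ a b : ℝ, IntervalIntegrable F volume a b := fun a b =>
    hFc.intervalIntegrable _ _
  have hFint' : ∀ a b : ℝ, IntervalIntegrable (fun t => F (t - τ)) volume a b := fun a b =>
    (hFc.comp (continuous_sub_right τ)).intervalIntegrable _ _
  have hFint'' : ∀ a b : ℝ, IntervalIntegrable (fun t => F (t + T)) volume a b := fun a b =>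
    (hFc.comp (continuous_add_right T)).intervalIntegrable _ _
  have e1 : ∫ t in (0:ℝ)..T, (F t - F (t - τ))
      = (∫ t in (0:ℝ)..T, F t) - ∫ t in (0:ℝ)..T, F (t - τ) :=
    intervalIntegral.integral_sub (hFint 0 T) (hFint' 0 T)
  have e2 : ∫ t in (0:ℝ)..T, F (t - τ) = ∫ t in (0-τ:ℝ)..(T-τ), F t :=
    intervalIntegral.integral_comp_sub_right F τ
  have e3 : (∫ t in (0:ℝ)..(T-τ), F t) + ∫ t in (T-τ:ℝ)..T, F t = ∫ t in (0:ℝ)..T, F t :=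
    intervalIntegral.integral_add_adjacent_intervals (hFint 0 (T-τ)) (hFint (T-τ) T)
  have e4 : (∫ t in (0-τ:ℝ)..(0:ℝ), F t) + ∫ t in (0:ℝ)..(T-τ), F t
      = ∫ t in (0-τ:ℝ)..(T-τ), F t :=
    intervalIntegral.integral_add_adjacent_intervals (hFint (0-τ) 0) (hFint 0 (T-τ))
  have e5 : ∫ t in (0-τ:ℝ)..(0:ℝ), F (t + T) = ∫ t in (T-τ:ℝ)..T, F t := by
    rw [intervalIntegral.integral_comp_add_right F T, show (0:ℝ) - τ + T = T - τ by ring,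
      show (0:ℝ) + T = T by ring]
  have hperp : Function.Periodic p T := fun x => by simp only [hp]; rw [hper]
  have hIp : ∀ u : ℝ, F (u + T) - F u = ∫ t in (0:ℝ)..T, p t := by
    intro u
    have h0 : F (u + T) - F u = ∫ x in u..(u+T), p x := (hFinterval u (u+T)).symm
    rw [h0, hperp.intervalIntegral_add_eq u 0]
    norm_num
  have e6 : ∫ t in (0-τ:ℝ)..(0:ℝ), (F (t + T) - F t) = τ * ∫ t in (0:ℝ)..T, p t := by
    rw [intervalIntegral.integral_congr (g := fun _ => ∫ t in (0:ℝ)..T, p t)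
      (fun x _ => hIp x)]
    rw [intervalIntegral.integral_const, smul_eq_mul]
    norm_num
  have e7 : ∫ t in (0-τ:ℝ)..(0:ℝ), (F (t + T) - F t)
      = (∫ t in (0-τ:ℝ)..(0:ℝ), F (t + T)) - ∫ t in (0-τ:ℝ)..(0:ℝ), F t :=
    intervalIntegral.integral_sub (hFint'' _ _) (hFint _ _)
  have compute : ∫ t in (0:ℝ)..T, τ⁻¹ * (F t - F (t - τ)) = ∫ t in (0:ℝ)..T, p t := by
    rw [intervalIntegral.integral_const_mul, e1]
    have : (∫ t in (0:ℝ)..T, F t) - ∫ t in (0:ℝ)..T, F (t - τ) = τ * ∫ t in (0:ℝ)..T, p t := by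
      rw [e2]
      linarith [e3, e4, e5, e6, e7]
    rw [this]
    field_simp
  calc ∫ t in (0:ℝ)..T, ‖Dqc τ h t‖ ^ 2
      ≤ ∫ t in (0:ℝ)..T, τ⁻¹ * (F t - F (t - τ)) := mono
    _ = ∫ t in (0:ℝ)..T, p t := compute
    _ = ∫ t in (0:ℝ)..T, ‖h' t‖ ^ 2 := rfl

end Continuous

section Analytic

variable {X : Type*} [NormedAddCommGroup X] [InnerProductSpace ℝ X] [CompleteSpace X]

private lemma thm49_sampling {τ : ℝ} (hτ : 0 < τ) (M : ℕ) {g g' : ℝ → X}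
    (hg : ∀ t, HasDerivAt g (g' t) t) (hc : Continuous g') :
    τ * ∑ n ∈ Finset.Ioc (0:ℤ) (M:ℤ), ‖Dqc τ g ((n:ℝ) * τ)‖ ^ 2
      ≤ ∫ t in (0:ℝ)..((M:ℝ) * τ), ‖g' t‖ ^ 2 := by
  set p : ℝ → ℝ := fun u => ‖g' u‖ ^ 2 with hp
  have hpc : Continuous p := hc.norm.pow 2
  have hpint : ∀ a b : ℝ, IntervalIntegrable p MeasureTheory.volume a b := fun a b =>
    hpc.intervalIntegrable _ _
  have hterm : ∀ n : ℤ, ‖Dqc τ g ((n:ℝ) * τ)‖ ^ 2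
      ≤ τ⁻¹ * ∫ u in (((n:ℝ) - 1) * τ)..((n:ℝ) * τ), p u := by
    intro n
    have := thm49_dqc_ptwise hτ hg hc ((n:ℝ) * τ)
    rwa [show (n:ℝ) * τ - τ = ((n:ℝ) - 1) * τ by ring] at this
  have hsum : ∀ K : ℕ, ∑ n ∈ Finset.Ioc (0:ℤ) (K:ℤ), (∫ u in (((n:ℝ) - 1) * τ)..((n:ℝ) * τ), p u)
      = ∫ u in (0:ℝ)..((K:ℝ) * τ), p u := by
    intro K
    induction K with
    | zero => simp
    | succ K ih =>
      rw [show ((K + 1 : ℕ) : ℤ) = (K:ℤ) + 1 by push_cast; ring,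
        thm49_Ioc_split _ (b := (K:ℤ)) (by omega) (by omega), ih, thm49_Ioc_singleton,
        Finset.sum_singleton]
      rw [show (((K:ℤ) + 1 : ℤ) : ℝ) = (K:ℝ) + 1 by push_cast; ring]
      rw [show ((K:ℝ) + 1 - 1) * τ = (K:ℝ) * τ by ring]
      rw [intervalIntegral.integral_add_adjacent_intervals (hpint 0 ((K:ℝ) * τ))
        (hpint ((K:ℝ) * τ) (((K:ℝ) + 1) * τ))]
      rw [show ((K + 1 : ℕ) : ℝ) = (K:ℝ) + 1 by push_cast; ring]
  calc τ * ∑ n ∈ Finset.Ioc (0:ℤ) (M:ℤ), ‖Dqc τ g ((n:ℝ) * τ)‖ ^ 2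
      ≤ τ * ∑ n ∈ Finset.Ioc (0:ℤ) (M:ℤ), τ⁻¹ * ∫ u in (((n:ℝ) - 1) * τ)..((n:ℝ) * τ), p u :=
        mul_le_mul_of_nonneg_left (Finset.sum_le_sum fun n _ => hterm n) hτ.le
    _ = ∑ n ∈ Finset.Ioc (0:ℤ) (M:ℤ), ∫ u in (((n:ℝ) - 1) * τ)..((n:ℝ) * τ), p u := by
        rw [Finset.mul_sum]
        refine Finset.sum_congr rfl fun n _ => ?_
        rw [← mul_assoc, mul_inv_cancel₀ hτ.ne', one_mul]
    _ = ∫ u in (0:ℝ)..((M:ℝ) * τ), p u := hsum M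

private lemma thm49_analytic {T τ : ℝ} (hT : 0 < T) (hτ : 0 < τ) (M : ℕ)
    (hMτ : (M:ℝ) * τ = T) (m : ℕ) (hm : 1 ≤ m) (f : ℝ → X)
    (hper : ∀ t, f (t + T) = f t) (hf : ContDiff ℝ (m : ℕ∞) f) :
    τ * ∑ n ∈ Finset.Ioc (0:ℤ) (M:ℤ), ‖(Dqc τ)^[m] f ((n:ℝ) * τ)‖ ^ 2
      ≤ ∫ t in (0:ℝ)..T, ‖iteratedDeriv m f t‖ ^ 2 := by
  have hcont : ∀ k : ℕ, k ≤ m → Continuous (iteratedDeriv k f) := fun k hk =>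
    hf.continuous_iteratedDeriv k (by exact_mod_cast hk)
  have hderiv : ∀ k : ℕ, k < m → ∀ t, HasDerivAt (iteratedDeriv k f) (iteratedDeriv (k+1) f t) t := by
    intro k hk t
    have hdiff : Differentiable ℝ (iteratedDeriv k f) :=
      hf.differentiable_iteratedDeriv k (by exact_mod_cast hk)
    have h0 := (hdiff t).hasDerivAt
    rw [iteratedDeriv_succ]
    exact h0
  have claim : ∀ j : ℕ, j + 1 ≤ m →
      ∫ t in (0:ℝ)..T, ‖(Dqc τ)^[j] (iteratedDeriv (m - j) f) t‖ ^ 2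
        ≤ ∫ t in (0:ℝ)..T, ‖iteratedDeriv m f t‖ ^ 2 := by
    intro j
    induction j with
    | zero => intro _; simp
    | succ j ih =>
      intro hj
      have hj' : j + 1 ≤ m := by omega
      have hmj : m - (j + 1) < m := by omega
      have hsucc : m - (j + 1) + 1 = m - j := by omega
      have hd : ∀ t, HasDerivAt ((Dqc τ)^[j] (iteratedDeriv (m - (j + 1)) f))
          ((Dqc τ)^[j] (iteratedDeriv (m - j) f) t) t := by
        have h0 := thm49_dqc_iter_hasDerivAt (τ := τ) j (hderiv (m - (j + 1)) hmj)
        rwa [hsucc] at h0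
      have hc' : Continuous ((Dqc τ)^[j] (iteratedDeriv (m - j) f)) :=
        thm49_dqc_iter_cont j (hcont _ (by omega))
      have hch : Continuous ((Dqc τ)^[j] (iteratedDeriv (m - (j + 1)) f)) :=
        thm49_dqc_iter_cont j (hcont _ (by omega))
      have hper' : ∀ t, (Dqc τ)^[j] (iteratedDeriv (m - j) f) (t + T)
          = (Dqc τ)^[j] (iteratedDeriv (m - j) f) t :=
        thm49_dqc_iter_per j (thm49_iteratedDeriv_periodic hper _)
      calc ∫ t in (0:ℝ)..T, ‖(Dqc τ)^[j+1] (iteratedDeriv (m - (j + 1)) f) t‖ ^ 2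
          = ∫ t in (0:ℝ)..T, ‖Dqc τ ((Dqc τ)^[j] (iteratedDeriv (m - (j + 1)) f)) t‖ ^ 2 := by
            simp only [Function.iterate_succ_apply']
        _ ≤ ∫ t in (0:ℝ)..T, ‖(Dqc τ)^[j] (iteratedDeriv (m - j) f) t‖ ^ 2 :=
            thm49_L hτ hT hd hc' hch hper'
        _ ≤ _ := ih hj'
  have hfd : ∀ t, HasDerivAt f (iteratedDeriv 1 f t) t := by
    intro t
    have h0 := hderiv 0 hm t
    simpa [iteratedDeriv_zero] using h0
  have hgd : ∀ t, HasDerivAt ((Dqc τ)^[m-1] f) ((Dqc τ)^[m-1] (iteratedDeriv 1 f) t) t :=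
    thm49_dqc_iter_hasDerivAt (m - 1) hfd
  have hgc : Continuous ((Dqc τ)^[m-1] (iteratedDeriv 1 f)) :=
    thm49_dqc_iter_cont _ (hcont 1 hm)
  have hsamp := thm49_sampling hτ M hgd hgc
  have hiter : ∀ t : ℝ, Dqc τ ((Dqc τ)^[m-1] f) t = (Dqc τ)^[m] f t := by
    intro t
    conv_rhs => rw [show m = (m - 1) + 1 by omega]
    rw [Function.iterate_succ_apply']
  have hclaim := claim (m - 1) (by omega)
  rw [show m - (m - 1) = 1 by omega] at hclaim
  calc τ * ∑ n ∈ Finset.Ioc (0:ℤ) (M:ℤ), ‖(Dqc τ)^[m] f ((n:ℝ) * τ)‖ ^ 2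
      = τ * ∑ n ∈ Finset.Ioc (0:ℤ) (M:ℤ), ‖Dqc τ ((Dqc τ)^[m-1] f) ((n:ℝ) * τ)‖ ^ 2 := by
        refine congrArg _ (Finset.sum_congr rfl fun n _ => ?_)
        rw [hiter]
    _ ≤ ∫ t in (0:ℝ)..((M:ℝ) * τ), ‖(Dqc τ)^[m-1] (iteratedDeriv 1 f) t‖ ^ 2 := hsamp
    _ = ∫ t in (0:ℝ)..T, ‖(Dqc τ)^[m-1] (iteratedDeriv 1 f) t‖ ^ 2 := by rw [hMτ]
    _ ≤ ∫ t in (0:ℝ)..T, ‖iteratedDeriv m f t‖ ^ 2 := hclaim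

private lemma thm49_sample_eq {τ : ℝ} (f : ℝ → X) (s : ℤ → X)
    (hs : s = fun n : ℤ => f ((n:ℝ) * τ)) (k : ℕ) :
    ∀ n : ℤ, (DqZ τ)^[k] s n = (Dqc τ)^[k] f ((n:ℝ) * τ) := by
  induction k with
  | zero => intro n; simp [hs]
  | succ k ih =>
    intro n
    rw [Function.iterate_succ_apply', Function.iterate_succ_apply']
    show τ⁻¹ • ((DqZ τ)^[k] s n - (DqZ τ)^[k] s (n - 1))
      = τ⁻¹ • ((Dqc τ)^[k] f ((n:ℝ) * τ) - (Dqc τ)^[k] f ((n:ℝ) * τ - τ))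
    rw [ih n, ih (n - 1), show ((n - 1 : ℤ) : ℝ) * τ = (n:ℝ) * τ - τ by push_cast; ring]

end Analytic


private lemma thm49_sqrt_add {x y : ℝ} (hx : 0 ≤ x) (hy : 0 ≤ y) :
    Real.sqrt (x + y) ≤ Real.sqrt x + Real.sqrt y := by
  have h := Real.sqrt_le_sqrt (show x + y ≤ (Real.sqrt x + Real.sqrt y) ^ 2 by
    nlinarith [Real.sq_sqrt hx, Real.sq_sqrt hy, Real.sqrt_nonneg x, Real.sqrt_nonneg y])
  rwa [Real.sqrt_sq (by positivity)] at h

/-- Theorem 4.9: bounds for the sequence of values of a `T`-periodic function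
in `H^m(0,T,X)`: an interpolation bound for the difference quotients and a
pointwise (Agmon-type) bound, whose last term can be dropped for zero-mean data. -/
theorem periodic_function_values_bounds
    {X : Type*} [NormedAddCommGroup X] [InnerProductSpace ℝ X] [CompleteSpace X]
    (T : ℝ) (hT : 0 < T) (M : ℕ) (hM : 0 < M) (τ : ℝ) (hτ : τ = T / M)
    (m : ℕ) (hm : 1 ≤ m) (hmM : m ≤ M - 1)
    (f : ℝ → X) (hper : ∀ t : ℝ, f (t + T) = f t) (hf : ContDiff ℝ (m : ℕ∞) f)
    (s : ℤ → X) (hs : s = fun n : ℤ => f ((n : ℝ) * τ)) :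
    (seqNorm0Z τ M (DqZ τ s) ≤
      2 ^ (((m:ℝ)-1)/(m:ℝ)) * (m:ℝ) ^ (1/(m:ℝ)) *
        (seqNorm0Z τ M s) ^ (((m:ℝ)-1)/(m:ℝ)) *
        (∫ t in (0:ℝ)..T, ‖iteratedDeriv m f t‖^2) ^ (1/(2*(m:ℝ))))
    ∧ (∀ n : ℤ, 1 ≤ n → n ≤ (M:ℤ) →
        ‖s n‖ ≤ 2 ^ (((m:ℝ)-1)/(2*(m:ℝ))) * (m:ℝ) ^ (1/(2*(m:ℝ))) * cA *
          (seqNorm0Z τ M s) ^ (1 - 1/(2*(m:ℝ))) *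
          (∫ t in (0:ℝ)..T, ‖iteratedDeriv m f t‖^2) ^ (1/(4*(m:ℝ)))
          + seqNorm0Z τ M s / Real.sqrt T)
    ∧ ((∑ n ∈ Finset.Icc (1:ℤ) (M:ℤ), s n = 0) →
        ∀ n : ℤ, 1 ≤ n → n ≤ (M:ℤ) →
          ‖s n‖ ≤ 2 ^ (((m:ℝ)-1)/(2*(m:ℝ))) * (m:ℝ) ^ (1/(2*(m:ℝ))) * cA *
            (seqNorm0Z τ M s) ^ (1 - 1/(2*(m:ℝ))) *
            (∫ t in (0:ℝ)..T, ‖iteratedDeriv m f t‖^2) ^ (1/(4*(m:ℝ)))) := by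
  have hMR : (0:ℝ) < M := by exact_mod_cast hM
  have hτ0 : 0 < τ := by rw [hτ]; positivity
  have hMτ : (M:ℝ) * τ = T := by rw [hτ]; field_simp
  have hmR : (0:ℝ) < m := by exact_mod_cast hm
  have hm1 : (1:ℝ) ≤ (m:ℝ) := by exact_mod_cast hm
  have hIcc : Finset.Icc (1:ℤ) (M:ℤ) = Finset.Ioc (0:ℤ) (M:ℤ) := by
    ext x; simp only [Finset.mem_Icc, Finset.mem_Ioc]; omega
  set I := ∫ t in (0:ℝ)..T, ‖iteratedDeriv m f t‖^2 with hIdef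
  have hI0 : 0 ≤ I := intervalIntegral.integral_nonneg hT.le fun u _ => sq_nonneg _
  -- periodicity of the sequence
  have hsper : ∀ n : ℤ, s (n + M) = s n := by
    intro n
    rw [hs]
    simp only []
    rw [show ((n + M : ℤ) : ℝ) * τ = (n:ℝ) * τ + (M:ℝ) * τ by push_cast; ring, hMτ, hper]
  -- the scale of difference quotients
  set A : ℕ → ℝ := fun k => τ * ∑ n ∈ Finset.Ioc (0:ℤ) (M:ℤ), ‖(DqZ τ)^[k] s n‖ ^ 2 with hA
  have hA0 : ∀ k, 0 ≤ A k := fun k =>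
    mul_nonneg hτ0.le (Finset.sum_nonneg fun _ _ => sq_nonneg _)
  set b : ℕ → ℝ := fun k => Real.sqrt (A k) with hb
  have hb0 : ∀ k, 0 ≤ b k := fun k => Real.sqrt_nonneg _
  have hbsq : ∀ k, b k ^ 2 = A k := fun k => Real.sq_sqrt (hA0 k)
  have hlc : ∀ k, b (k + 1) ^ 2 ≤ b k * b (k + 2) := by
    intro k
    rw [hbsq]
    have hsbp := thm49_sbp hτ0 hM ((DqZ τ)^[k] s) (thm49_DqZ_iter_periodic τ M hsper k)
    calc A (k + 1) = τ * ∑ n ∈ Finset.Ioc (0:ℤ) (M:ℤ), ‖DqZ τ ((DqZ τ)^[k] s) n‖ ^ 2 := by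
          rw [hA]
          simp only [Function.iterate_succ_apply']
      _ ≤ Real.sqrt (τ * ∑ n ∈ Finset.Ioc (0:ℤ) (M:ℤ), ‖(DqZ τ)^[k] s n‖ ^ 2) *
          Real.sqrt (τ * ∑ n ∈ Finset.Ioc (0:ℤ) (M:ℤ), ‖DqZ τ (DqZ τ ((DqZ τ)^[k] s)) n‖ ^ 2) :=
          hsbp
      _ = b k * b (k + 2) := by
          rw [hb, hA]
          simp only [Function.iterate_succ_apply']
  -- identification of the norms
  set N := seqNorm0Z τ M s with hN
  set Dn := seqNorm0Z τ M (DqZ τ s) with hDn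
  have hNb : N = b 0 := by
    rw [hN, seqNorm0Z, hIcc, hb, hA]
    simp
  have hDnb0 : Dn = b 1 := by
    rw [hDn, seqNorm0Z, hIcc, hb, hA]
    simp
  have hN0 : 0 ≤ N := by rw [hNb]; exact hb0 0
  have hDn0 : 0 ≤ Dn := by rw [hDnb0]; exact hb0 1
  -- the m-th difference quotient is controlled by the integral
  have hAm : A m ≤ I := by
    have hsameq := thm49_sample_eq f s hs m
    have hana := thm49_analytic hT hτ0 M hMτ m hm f hper hf
    calc A m = τ * ∑ n ∈ Finset.Ioc (0:ℤ) (M:ℤ), ‖(Dqc τ)^[m] f ((n:ℝ) * τ)‖ ^ 2 := by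
          rw [hA]
          exact congrArg _ (Finset.sum_congr rfl fun n _ => by rw [hsameq n])
      _ ≤ I := hana
  have hbm : b m ≤ Real.sqrt I := Real.sqrt_le_sqrt hAm
  -- interpolation inequality with constant one
  have hpow : Dn ^ m ≤ N ^ (m - 1) * Real.sqrt I := by
    have h1 := thm49_logconvex b hb0 hlc (m - 1)
    rw [show m - 1 + 1 = m by omega] at h1
    calc Dn ^ m = b 1 ^ m := by rw [hDnb0]
      _ ≤ b 0 ^ (m - 1) * b m := h1
      _ ≤ N ^ (m - 1) * Real.sqrt I := by
          rw [hNb]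
          exact mul_le_mul_of_nonneg_left hbm (pow_nonneg (hb0 0) _)
  have hDnb : Dn ≤ N ^ (((m:ℝ)-1)/(m:ℝ)) * I ^ (1/(2*(m:ℝ))) := by
    have h1 : Dn = ((Dn ^ m : ℝ)) ^ ((1:ℝ)/m) := by
      rw [← Real.rpow_natCast Dn m, ← Real.rpow_mul hDn0, mul_one_div, div_self hmR.ne',
        Real.rpow_one]
    rw [h1]
    calc ((Dn ^ m : ℝ)) ^ ((1:ℝ)/m)
        ≤ (N ^ (m - 1) * Real.sqrt I) ^ ((1:ℝ)/m) :=
          Real.rpow_le_rpow (by positivity) hpow (by positivity)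
      _ = N ^ (((m:ℝ)-1)/(m:ℝ)) * I ^ (1/(2*(m:ℝ))) := by
          rw [Real.mul_rpow (by positivity) (Real.sqrt_nonneg _)]
          congr 1
          · rw [← Real.rpow_natCast N (m - 1), ← Real.rpow_mul hN0]
            congr 1
            rw [Nat.cast_sub hm]
            ring
          · rw [Real.sqrt_eq_rpow, ← Real.rpow_mul hI0]
            congr 1
            ring
  -- constants are at least one
  have hc1 : (1:ℝ) ≤ 2 ^ (((m:ℝ)-1)/(m:ℝ)) := by
    have := Real.rpow_le_rpow_of_exponent_le one_le_two
      (show (0:ℝ) ≤ ((m:ℝ)-1)/(m:ℝ) from div_nonneg (by linarith) hmR.le)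
    simpa using this
  have hc2 : (1:ℝ) ≤ (m:ℝ) ^ (1/(m:ℝ)) := by
    have h1 : (1:ℝ) ≤ (m:ℝ) := by exact_mod_cast hm
    have := Real.rpow_le_rpow_of_exponent_le h1 (show (0:ℝ) ≤ 1/(m:ℝ) by positivity)
    simpa using this
  have hc3 : (1:ℝ) ≤ 2 ^ (((m:ℝ)-1)/(2*(m:ℝ))) := by
    have := Real.rpow_le_rpow_of_exponent_le (one_le_two)
      (show (0:ℝ) ≤ ((m:ℝ)-1)/(2*(m:ℝ)) from div_nonneg (by linarith) (by positivity))
    simpa using this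
  have hc4 : (1:ℝ) ≤ (m:ℝ) ^ (1/(2*(m:ℝ))) := by
    have h1 : (1:ℝ) ≤ (m:ℝ) := by exact_mod_cast hm
    have := Real.rpow_le_rpow_of_exponent_le h1 (show (0:ℝ) ≤ 1/(2*(m:ℝ)) by positivity)
    simpa using this
  have hcA1 : (1:ℝ) ≤ cA := by
    rw [cA, show (1:ℝ) = Real.sqrt 1 from Real.sqrt_one.symm]
    exact Real.sqrt_le_sqrt (by nlinarith [Real.sqrt_nonneg 2])
  have hcA2 : Real.sqrt 2 ≤ cA := by
    rw [cA]
    exact Real.sqrt_le_sqrt (by nlinarith [Real.sqrt_nonneg 2])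
  -- part (i)
  have part1 : Dn ≤ 2 ^ (((m:ℝ)-1)/(m:ℝ)) * (m:ℝ) ^ (1/(m:ℝ)) *
      N ^ (((m:ℝ)-1)/(m:ℝ)) * I ^ (1/(2*(m:ℝ))) := by
    have hCC : (1:ℝ) ≤ 2 ^ (((m:ℝ)-1)/(m:ℝ)) * (m:ℝ) ^ (1/(m:ℝ)) := by nlinarith
    calc Dn ≤ N ^ (((m:ℝ)-1)/(m:ℝ)) * I ^ (1/(2*(m:ℝ))) := hDnb
      _ ≤ (2 ^ (((m:ℝ)-1)/(m:ℝ)) * (m:ℝ) ^ (1/(m:ℝ))) *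
          (N ^ (((m:ℝ)-1)/(m:ℝ)) * I ^ (1/(2*(m:ℝ)))) :=
          le_mul_of_one_le_left (by positivity) hCC
      _ = 2 ^ (((m:ℝ)-1)/(m:ℝ)) * (m:ℝ) ^ (1/(m:ℝ)) *
          N ^ (((m:ℝ)-1)/(m:ℝ)) * I ^ (1/(2*(m:ℝ))) := by ring
  -- the pointwise bounds
  have hagmon := thm49_agmon hτ0 hM s hsper
  have hND : Real.sqrt (N * Dn) ≤ N ^ (1 - 1/(2*(m:ℝ))) * I ^ (1/(4*(m:ℝ))) := by
    have e1 : (1:ℝ) + ((m:ℝ)-1)/(m:ℝ) ≠ 0 := by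
      have h0 : (0:ℝ) ≤ ((m:ℝ)-1)/(m:ℝ) := div_nonneg (by linarith) hmR.le
      exact ne_of_gt (by linarith)
    calc Real.sqrt (N * Dn)
        ≤ Real.sqrt (N * (N ^ (((m:ℝ)-1)/(m:ℝ)) * I ^ (1/(2*(m:ℝ))))) :=
          Real.sqrt_le_sqrt (mul_le_mul_of_nonneg_left hDnb hN0)
      _ = N ^ (1 - 1/(2*(m:ℝ))) * I ^ (1/(4*(m:ℝ))) := by
          rw [show N * (N ^ (((m:ℝ)-1)/(m:ℝ)) * I ^ (1/(2*(m:ℝ))))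
            = (N ^ (1:ℝ) * N ^ (((m:ℝ)-1)/(m:ℝ))) * I ^ (1/(2*(m:ℝ))) by
              rw [Real.rpow_one]; ring]
          rw [← Real.rpow_add' hN0 e1]
          rw [Real.sqrt_eq_rpow, Real.mul_rpow (by positivity) (by positivity),
            ← Real.rpow_mul hN0, ← Real.rpow_mul hI0]
          congr 1
          · congr 1
            field_simp
            ring
          · congr 1
            ring
  have hC234 : (1:ℝ) ≤ 2 ^ (((m:ℝ)-1)/(2*(m:ℝ))) * (m:ℝ) ^ (1/(2*(m:ℝ))) := by nlinarith
  have hC2cA : (1:ℝ) ≤ 2 ^ (((m:ℝ)-1)/(2*(m:ℝ))) * (m:ℝ) ^ (1/(2*(m:ℝ))) * cA := by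
    nlinarith [hC234, hcA1]
  refine ⟨?_, ?_, ?_⟩
  · -- part (i)
    exact part1
  · -- part (ii)
    intro n h1n hnM
    have hn : n ∈ Finset.Ioc (0:ℤ) (M:ℤ) := by rw [Finset.mem_Ioc]; omega
    have h2 := hagmon.1 n hn
    have hNeq : Real.sqrt (τ * ∑ j ∈ Finset.Ioc (0:ℤ) (M:ℤ), ‖s j‖ ^ 2) = N := by
      rw [hN, seqNorm0Z, hIcc]
    have hDneq : Real.sqrt (τ * ∑ j ∈ Finset.Ioc (0:ℤ) (M:ℤ), ‖DqZ τ s j‖ ^ 2) = Dn := by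
      rw [hDn, seqNorm0Z, hIcc]
    rw [hNeq, hDneq] at h2
    have hNsq : τ * ∑ j ∈ Finset.Ioc (0:ℤ) (M:ℤ), ‖s j‖ ^ 2 = N ^ 2 := by
      rw [← hNeq, Real.sq_sqrt (mul_nonneg hτ0.le (Finset.sum_nonneg fun _ _ => sq_nonneg _))]
    rw [hNsq, show τ * (M:ℝ) = T by rw [← hMτ]; ring] at h2
    have hsn : ‖s n‖ ≤ Real.sqrt (N * Dn) + N / Real.sqrt T := by
      calc ‖s n‖ = Real.sqrt (‖s n‖ ^ 2) := (Real.sqrt_sq (norm_nonneg _)).symm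
        _ ≤ Real.sqrt (N * Dn + N ^ 2 / T) := Real.sqrt_le_sqrt h2
        _ ≤ Real.sqrt (N * Dn) + Real.sqrt (N ^ 2 / T) :=
            thm49_sqrt_add (mul_nonneg hN0 hDn0) (by positivity)
        _ = Real.sqrt (N * Dn) + N / Real.sqrt T := by
            rw [Real.sqrt_div (sq_nonneg N) T, Real.sqrt_sq hN0]
    calc ‖s n‖ ≤ Real.sqrt (N * Dn) + N / Real.sqrt T := hsn
      _ ≤ N ^ (1 - 1/(2*(m:ℝ))) * I ^ (1/(4*(m:ℝ))) + N / Real.sqrt T := by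
          linarith [hND]
      _ ≤ (2 ^ (((m:ℝ)-1)/(2*(m:ℝ))) * (m:ℝ) ^ (1/(2*(m:ℝ))) * cA) *
          (N ^ (1 - 1/(2*(m:ℝ))) * I ^ (1/(4*(m:ℝ)))) + N / Real.sqrt T :=
          add_le_add_left (le_mul_of_one_le_left
            (mul_nonneg (Real.rpow_nonneg hN0 _) (Real.rpow_nonneg hI0 _)) hC2cA) _
      _ = 2 ^ (((m:ℝ)-1)/(2*(m:ℝ))) * (m:ℝ) ^ (1/(2*(m:ℝ))) * cA *
          N ^ (1 - 1/(2*(m:ℝ))) * I ^ (1/(4*(m:ℝ))) + N / Real.sqrt T := by ring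
  · -- part (iii)
    intro hz n h1n hnM
    have hn : n ∈ Finset.Ioc (0:ℤ) (M:ℤ) := by rw [Finset.mem_Ioc]; omega
    rw [hIcc] at hz
    have h2 := hagmon.2 hz n hn
    have hNeq : Real.sqrt (τ * ∑ j ∈ Finset.Ioc (0:ℤ) (M:ℤ), ‖s j‖ ^ 2) = N := by
      rw [hN, seqNorm0Z, hIcc]
    have hDneq : Real.sqrt (τ * ∑ j ∈ Finset.Ioc (0:ℤ) (M:ℤ), ‖DqZ τ s j‖ ^ 2) = Dn := by
      rw [hDn, seqNorm0Z, hIcc]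
    rw [hNeq, hDneq] at h2
    have hsn : ‖s n‖ ≤ Real.sqrt 2 * Real.sqrt (N * Dn) := by
      calc ‖s n‖ = Real.sqrt (‖s n‖ ^ 2) := (Real.sqrt_sq (norm_nonneg _)).symm
        _ ≤ Real.sqrt (2 * (N * Dn)) := Real.sqrt_le_sqrt h2
        _ = Real.sqrt 2 * Real.sqrt (N * Dn) := Real.sqrt_mul (by norm_num) _
    have hC2 := hC234
    calc ‖s n‖ ≤ Real.sqrt 2 * Real.sqrt (N * Dn) := hsn
      _ ≤ cA * Real.sqrt (N * Dn) :=
          mul_le_mul_of_nonneg_right hcA2 (Real.sqrt_nonneg _)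
      _ ≤ cA * (N ^ (1 - 1/(2*(m:ℝ))) * I ^ (1/(4*(m:ℝ)))) :=
          mul_le_mul_of_nonneg_left hND (by linarith)
      _ ≤ (2 ^ (((m:ℝ)-1)/(2*(m:ℝ))) * (m:ℝ) ^ (1/(2*(m:ℝ)))) *
          (cA * (N ^ (1 - 1/(2*(m:ℝ))) * I ^ (1/(4*(m:ℝ))))) :=
          le_mul_of_one_le_left (by positivity) hC2
      _ = 2 ^ (((m:ℝ)-1)/(2*(m:ℝ))) * (m:ℝ) ^ (1/(2*(m:ℝ))) * cA *
          N ^ (1 - 1/(2*(m:ℝ))) * I ^ (1/(4*(m:ℝ))) := by ring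
end
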